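/- arXiv:1603.06087 — 7 statements merged into one kernel-verified Lean document; each statement's English description precedes it below -/
import Mathlib

section
/- Let p, q, m, n be integers with p ≥ 2, |q| ≥ 2, p + 1 < m < 2p − 1, and 2n − 1 ≥ |q|, and let a ∈ ℝ. Then for every i ∈ {0, …, m−2}, the intersection G_i(T) ∩ G_{i+1}(T) is nonempty if and only if |a|(|q| − 2) ≤ q²(n − 1). -/
open Matrix

/-- The expanding matrix with rows `(p, 0)` and `(-a, q)`. -/
noncomputable def matA (p q : ℤ) (a : ℝ) : Matrix (Fin 2) (Fin 2) ℝ :=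
  !![(p : ℝ), 0; -a, (q : ℝ)]

/-- The product digit set `{0,…,m-1} × {0,…,n-1}` viewed inside `ℝ²`. -/
def digitSet (m n : ℤ) : Set (Fin 2 → ℝ) :=
  {v | ∃ i j : ℤ, 0 ≤ i ∧ i ≤ m - 1 ∧ 0 ≤ j ∧ j ≤ n - 1 ∧ v = ![(i : ℝ), (j : ℝ)]}

/-- `T(A, D) = { ∑_{k≥1} A^{-k} d_k : d_k ∈ D }`. -/
noncomputable def selfAffineSet (A : Matrix (Fin 2) (Fin 2) ℝ) (D : Set (Fin 2 → ℝ)) :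
    Set (Fin 2 → ℝ) :=
  {x | ∃ d : ℕ → (Fin 2 → ℝ), (∀ k, d k ∈ D) ∧
    HasSum (fun k => (A⁻¹ ^ (k + 1)).mulVec (d k)) x}

/-- `S_{i,j}(T) = A⁻¹(T + (i, j))`. -/
noncomputable def Sij (A : Matrix (Fin 2) (Fin 2) ℝ) (T : Set (Fin 2 → ℝ)) (i j : ℤ) :
    Set (Fin 2 → ℝ) :=
  (fun x => A⁻¹.mulVec (x + ![(i : ℝ), (j : ℝ)])) '' T

/-- `G_i(T) = ⋃_{j=0}^{n-1} S_{i,j}(T)`. -/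
noncomputable def Gi (A : Matrix (Fin 2) (Fin 2) ℝ) (T : Set (Fin 2 → ℝ)) (n i : ℤ) :
    Set (Fin 2 → ℝ) :=
  ⋃ j ∈ Set.Icc (0 : ℤ) (n - 1), Sij A T i j

namespace Stmt10Aux

open Filter

variable {p q : ℤ} {a : ℝ}

lemma summable_geom_bdd {x B : ℝ} (hx : |x| < 1) {b : ℕ → ℝ}
    (hb : ∀ k, |b k| ≤ B) : Summable (fun k => x ^ (k + 1) * b k) := by
  apply Summable.of_norm_bounded (g := fun k => B * |x| ^ (k + 1))
  · apply Summable.mul_left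
    exact ((summable_geometric_of_lt_one (abs_nonneg x) hx).mul_left |x|).congr
      (fun k => by ring)
  · intro k
    rw [Real.norm_eq_abs, abs_mul, abs_pow]
    calc |x| ^ (k+1) * |b k| ≤ |x| ^ (k+1) * B :=
          mul_le_mul_of_nonneg_left (hb k) (by positivity)
      _ = B * |x| ^ (k+1) := mul_comm _ _

lemma tsum_geom_pow (x : ℝ) (hx0 : 0 ≤ x) (hx : x < 1) :
    ∑' k : ℕ, x ^ (k + 1) = x / (1 - x) := by
  have h1 : ∑' k : ℕ, x ^ (k + 1) = x * ∑' k : ℕ, x ^ k := by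
    rw [← tsum_mul_left]; congr 1; funext k; ring
  rw [h1, tsum_geometric_of_lt_one hx0 hx]
  rw [div_eq_mul_inv]

lemma tsum_geom_bdd {x B : ℝ} (hx : |x| < 1) (hB : 0 ≤ B) {b : ℕ → ℝ}
    (hb : ∀ k, |b k| ≤ B) :
    |∑' k : ℕ, x ^ (k + 1) * b k| ≤ B * (|x| / (1 - |x|)) := by
  have hsum := summable_geom_bdd hx hb
  have h1 : |∑' k : ℕ, x ^ (k + 1) * b k| ≤ ∑' k : ℕ, |x ^ (k + 1) * b k| :=
    norm_tsum_le_tsum_norm (f := fun k => x ^ (k+1) * b k)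
      (by simpa only [Real.norm_eq_abs] using hsum.abs)

  have hgeom : Summable (fun k : ℕ => B * |x| ^ (k + 1)) := by
    apply Summable.mul_left
    exact ((summable_geometric_of_lt_one (abs_nonneg x) hx).mul_left |x|).congr
      (fun k => by ring)
  have h2 : ∑' k : ℕ, |x ^ (k + 1) * b k| ≤ ∑' k : ℕ, B * |x| ^ (k + 1) := by
    apply Summable.tsum_le_tsum _ hsum.abs hgeom
    intro k
    rw [abs_mul, abs_pow]
    calc |x| ^ (k+1) * |b k| ≤ |x| ^ (k+1) * B :=
          mul_le_mul_of_nonneg_left (hb k) (by positivity)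
      _ = B * |x| ^ (k+1) := mul_comm _ _
  have h3 : ∑' k : ℕ, B * |x| ^ (k + 1) = B * (|x| / (1 - |x|)) := by
    rw [tsum_mul_left, tsum_geom_pow |x| (abs_nonneg x) hx]
  linarith

lemma hasSum_of_tendsto {f : ℕ → ℝ} {L : ℝ} (hs : Summable f)
    (h : Tendsto (fun K => ∑ k ∈ Finset.range K, f k) atTop (nhds L)) : HasSum f L := by
  obtain ⟨L', hL'⟩ := hs
  have h2 := (Summable.hasSum_iff_tendsto_nat ⟨L', hL'⟩).mp hL'
  rwa [tendsto_nhds_unique h2 h] at hL'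

noncomputable def gseq (p q : ℤ) (a : ℝ) : ℕ → ℝ
  | 0 => 0
  | (k+1) => gseq p q a k / p + ((q:ℝ))⁻¹ ^ k * (a / ((p:ℝ) * q))

variable {p q : ℤ} {a : ℝ}

lemma matA_inv (hp : (p:ℝ) ≠ 0) (hq : (q:ℝ) ≠ 0) :
    (matA p q a)⁻¹ = !![((p:ℝ))⁻¹, 0; a * ((p:ℝ) * q)⁻¹, ((q:ℝ))⁻¹] := by
  apply inv_eq_right_inv
  rw [matA, Matrix.mul_fin_two, Matrix.one_fin_two]
  congr 1 <;> field_simp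
  ring_nf
  field_simp

lemma matA_inv_pow (hp : (p:ℝ) ≠ 0) (hq : (q:ℝ) ≠ 0) (k : ℕ) :
    (matA p q a)⁻¹ ^ k = !![((p:ℝ))⁻¹ ^ k, 0; gseq p q a k, ((q:ℝ))⁻¹ ^ k] := by
  induction k with
  | zero => simp [gseq, Matrix.one_fin_two]
  | succ k ih =>
    rw [pow_succ, ih, matA_inv hp hq, Matrix.mul_fin_two]
    ext i j
    fin_cases i <;> fin_cases j <;>
      simp [gseq, pow_succ, div_eq_mul_inv, mul_inv] <;> ring

lemma mulVec_two (P G Q u v : ℝ) :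
    (!![P, 0; G, Q]).mulVec ![u, v] = ![P * u, G * u + Q * v] := by
  funext i; fin_cases i <;> simp [Matrix.mulVec, dotProduct, Fin.sum_univ_two]

lemma gseq_rec (hp : (p:ℝ) ≠ 0) (hq : (q:ℝ) ≠ 0) (k : ℕ) :
    (p:ℝ) * gseq p q a (k+1) = gseq p q a k + a * ((q:ℝ))⁻¹ ^ (k+1) := by
  show (p:ℝ) * (gseq p q a k / p + ((q:ℝ))⁻¹ ^ k * (a / ((p:ℝ) * q))) = _
  field_simp
  rw [pow_succ]
  field_simp

lemma gseq_bound (hp : 2 ≤ (p:ℝ)) (hq : 2 ≤ |(q:ℝ)|) (k : ℕ) :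
    |gseq p q a k| ≤ |a| * k * (2⁻¹:ℝ) ^ (k+1) := by
  have hp0 : (0:ℝ) < (p:ℝ) := by linarith
  induction k with
  | zero => simp [gseq]
  | succ k ih =>
    have hq0 : (0:ℝ) < |(q:ℝ)| := by linarith
    have h1 : |gseq p q a (k+1)| ≤ |gseq p q a k| / p + (|(q:ℝ)|)⁻¹ ^ k * (|a| / ((p:ℝ) * |(q:ℝ)|)) := by
      show |gseq p q a k / p + ((q:ℝ))⁻¹ ^ k * (a / ((p:ℝ) * q))| ≤ _
      refine (abs_add_le _ _).trans ?_
      rw [abs_div, abs_mul, abs_pow, abs_inv, abs_div, abs_mul, abs_of_pos hp0]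
    have hXnn : (0:ℝ) ≤ |a| * k * (2⁻¹:ℝ) ^ (k+1) := by positivity
    have h2 : |gseq p q a k| / p ≤ (|a| * k * (2⁻¹:ℝ) ^ (k+1)) / 2 := by
      rw [div_le_div_iff₀ hp0 (by norm_num : (0:ℝ) < 2)]
      nlinarith [abs_nonneg (gseq p q a k)]
    have h3 : (|(q:ℝ)|)⁻¹ ^ k * (|a| / ((p:ℝ) * |(q:ℝ)|)) ≤ (2⁻¹:ℝ) ^ k * (|a| / 4) := by
      apply mul_le_mul
      · exact pow_le_pow_left₀ (by positivity)
          (by rw [inv_le_inv₀ hq0 (by norm_num)]; exact hq) k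
      · exact div_le_div₀ (abs_nonneg a) le_rfl (by norm_num) (by nlinarith)
      · positivity
      · positivity
    have hcast : |a| * ((k:ℝ)+1) * (2⁻¹:ℝ) ^ (k+2) = |a| * ((k+1 : ℕ):ℝ) * (2⁻¹:ℝ) ^ ((k+1)+1) := by
      push_cast; ring
    calc |gseq p q a (k+1)| ≤ (|a| * k * (2⁻¹:ℝ) ^ (k+1)) / 2 + (2⁻¹:ℝ) ^ k * (|a| / 4) := by
          linarith
      _ = |a| * ((k:ℝ)+1) * (2⁻¹:ℝ) ^ (k+2) := by ring
      _ = _ := hcast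

lemma tele1 (c : ℝ) (hc : c ≠ 0) (r : ℕ → ℝ) (K : ℕ) :
    ∑ k ∈ Finset.range K, c⁻¹ ^ (k+1) * (c * r k - r (k+1)) = r 0 - c⁻¹ ^ K * r K := by
  induction K with
  | zero => simp
  | succ K ih =>
    rw [Finset.sum_range_succ, ih]
    have h : c⁻¹ ^ (K+1) * c = c⁻¹ ^ K := by
      rw [pow_succ, mul_assoc, inv_mul_cancel₀ hc, mul_one]
    linear_combination r K * h

lemma tele2 (hp : (p:ℝ) ≠ 0) (hq : (q:ℝ) ≠ 0) (r : ℕ → ℝ) (K : ℕ) :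
    ∑ k ∈ Finset.range K, gseq p q a (k+1) * ((p:ℝ) * r k - r (k+1)) =
      a * ∑ k ∈ Finset.range K, ((q:ℝ))⁻¹ ^ (k+1) * r k - gseq p q a K * r K := by
  induction K with
  | zero => simp [gseq]
  | succ K ih =>
    rw [Finset.sum_range_succ, Finset.sum_range_succ, ih]
    linear_combination r K * gseq_rec hp hq K

lemma summable_half_weight : Summable (fun k : ℕ => ((k:ℝ)+1) * (2⁻¹:ℝ) ^ (k+2)) := by
  have h0 : Summable (fun k : ℕ => (k:ℝ) * (2⁻¹:ℝ) ^ k) := by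
    simpa using summable_pow_mul_geometric_of_norm_lt_one (R := ℝ) 1
      (r := (2⁻¹:ℝ)) (by rw [Real.norm_eq_abs, abs_lt]; constructor <;> norm_num)
  have h1 : Summable (fun k : ℕ => ((k+1:ℕ):ℝ) * (2⁻¹:ℝ) ^ (k+1)) :=
    (summable_nat_add_iff 1).mpr h0
  exact ((h1.mul_right (2⁻¹:ℝ)).congr (fun k => by push_cast; ring))

lemma summable_gseq_mul {p q : ℤ} {a : ℝ} (hp : 2 ≤ (p:ℝ)) (hq : 2 ≤ |(q:ℝ)|)
    {b : ℕ → ℝ} {B : ℝ} (hb : ∀ k, |b k| ≤ B) :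
    Summable (fun k => gseq p q a (k+1) * b k) := by
  have hB0 : 0 ≤ B := (abs_nonneg (b 0)).trans (hb 0)
  apply Summable.of_norm_bounded (g := fun k : ℕ => (|a| * B) * (((k:ℝ)+1) * (2⁻¹:ℝ) ^ (k+2)))
    (summable_half_weight.mul_left _)
  intro k
  rw [Real.norm_eq_abs, abs_mul]
  have hg : |gseq p q a (k+1)| ≤ |a| * ((k:ℝ)+1) * (2⁻¹:ℝ) ^ (k+2) := by
    have := gseq_bound (a := a) hp hq (k+1)
    push_cast at this
    convert this using 2
  calc |gseq p q a (k+1)| * |b k| ≤ (|a| * ((k:ℝ)+1) * (2⁻¹:ℝ) ^ (k+2)) * B :=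
        mul_le_mul hg (hb k) (abs_nonneg _) (by positivity)
    _ = (|a| * B) * (((k:ℝ)+1) * (2⁻¹:ℝ) ^ (k+2)) := by ring

noncomputable def clampI (N : ℤ) (y : ℝ) : ℤ := max (-N) (min N (round y))

lemma clampI_spec {N : ℤ} (hN : 1 ≤ N) {h y : ℝ} (hh : 1/2 ≤ h) (hy : |y| ≤ (N:ℝ) + h) :
    |clampI N y| ≤ N ∧ |y - (clampI N y : ℤ)| ≤ h := by
  have hround := abs_sub_round y
  have hNneg : -N ≤ N := by omega
  constructor
  · rw [abs_le]
    constructor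
    · exact le_max_left _ _
    · exact max_le (by omega) (min_le_left _ _)
  · rcases le_or_gt (round y) N with h1 | h1
    · rcases le_or_gt (-N) (round y) with h2 | h2
      · have : clampI N y = round y := by
          unfold clampI; rw [min_eq_right h1, max_eq_right h2]
        rw [this]
        linarith [hround]
      · -- round y < -N : clampI = -N
        have hcl : clampI N y = -N := by
          unfold clampI
          rw [min_eq_right h1, max_eq_left (le_of_lt h2)]
        rw [hcl]
        have hry : (round y : ℝ) ≤ -N - 1 := by
          have : round y ≤ -N - 1 := by omega
          exact_mod_cast this
        have hy1 : y ≤ (round y : ℝ) + 1/2 := by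
          have := (abs_le.mp hround).2; linarith
        have hy2 : -((N:ℝ) + h) ≤ y := (abs_le.mp hy).1
        rw [abs_le]
        push_cast
        constructor <;> linarith
    · -- N < round y : clampI = N
      have hcl : clampI N y = N := by
        unfold clampI
        rw [min_eq_left (le_of_lt h1), max_eq_right hNneg]
      rw [hcl]
      have hry : ((N:ℝ)) + 1 ≤ (round y : ℝ) := by
        have : N + 1 ≤ round y := by omega
        exact_mod_cast this
      have hy1 : (round y : ℝ) - 1/2 ≤ y := by
        have := (abs_le.mp hround).1; linarith
      have hy2 : y ≤ (N:ℝ) + h := (abs_le.mp hy).2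
      rw [abs_le]
      constructor <;> linarith

lemma greedy (q N : ℤ) (hq : 2 ≤ |q|) (hN : 1 ≤ N) (h : ℝ) (hh : 1/2 ≤ h)
    (hqh : (|(q:ℝ)|) * h = (N:ℝ) + h) (e : ℝ) (he : |e| ≤ h) :
    ∃ ε : ℕ → ℤ, (∀ k, |ε k| ≤ N) ∧ HasSum (fun k => ((q:ℝ))⁻¹ ^ (k+1) * (ε k : ℝ)) e := by
  have hq0 : ((q:ℝ)) ≠ 0 := by
    have : q ≠ 0 := fun h0 => by simp [h0] at hq
    exact_mod_cast this
  have hh0 : 0 ≤ h := by linarith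
  set xseq : ℕ → ℝ := fun k => Nat.rec e
    (fun _ xk => (q:ℝ) * xk - (clampI N ((q:ℝ) * xk) : ℤ)) k with hxdef
  have hx0 : xseq 0 = e := rfl
  have hxs : ∀ k, xseq (k+1) = (q:ℝ) * xseq k - (clampI N ((q:ℝ) * xseq k) : ℤ) :=
    fun k => rfl
  set ε : ℕ → ℤ := fun k => clampI N ((q:ℝ) * xseq k) with hε
  have hxbnd : ∀ k, |xseq k| ≤ h := by
    intro k
    induction k with
    | zero => rw [hx0]; exact he
    | succ k ih =>
      have hy : |(q:ℝ) * xseq k| ≤ (N:ℝ) + h := by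
        rw [abs_mul]
        calc |(q:ℝ)| * |xseq k| ≤ |(q:ℝ)| * h :=
              mul_le_mul_of_nonneg_left ih (abs_nonneg _)
          _ = (N:ℝ) + h := hqh
      rw [hxs k]
      exact (clampI_spec hN hh hy).2
  have hεbnd : ∀ k, |ε k| ≤ N := by
    intro k
    have hy : |(q:ℝ) * xseq k| ≤ (N:ℝ) + h := by
      rw [abs_mul]
      calc |(q:ℝ)| * |xseq k| ≤ |(q:ℝ)| * h :=
            mul_le_mul_of_nonneg_left (hxbnd k) (abs_nonneg _)
        _ = (N:ℝ) + h := hqh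
    exact (clampI_spec hN hh hy).1
  have hps : ∀ K, ∑ k ∈ Finset.range K, ((q:ℝ))⁻¹ ^ (k+1) * (ε k : ℝ)
      = e - ((q:ℝ))⁻¹ ^ K * xseq K := by
    intro K
    induction K with
    | zero => simp [hx0]
    | succ K ih =>
      rw [Finset.sum_range_succ, ih, hxs K]
      have hid : ((q:ℝ))⁻¹ ^ (K+1) * (q:ℝ) = ((q:ℝ))⁻¹ ^ K := by
        rw [pow_succ, mul_assoc, inv_mul_cancel₀ hq0, mul_one]
      linear_combination (xseq K) * hid
  refine ⟨ε, hεbnd, ?_⟩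
  have hsummable : Summable (fun k => ((q:ℝ))⁻¹ ^ (k+1) * (ε k : ℝ)) := by
    apply summable_geom_bdd
    · rw [abs_inv]
      rw [inv_lt_one_iff₀]
      right
      have : (2:ℝ) ≤ |(q:ℝ)| := by
        have : ((2:ℤ):ℝ) ≤ ((|q|:ℤ):ℝ) := by exact_mod_cast hq
        simpa [Int.cast_abs] using this
      linarith
    · intro k
      have := hεbnd k
      calc |(ε k : ℝ)| = ((|ε k| : ℤ) : ℝ) := by simp [Int.cast_abs]
        _ ≤ (N:ℝ) := by exact_mod_cast this
  apply hasSum_of_tendsto hsummable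
  have hqlt : ‖((q:ℝ))⁻¹‖ < 1 := by
    rw [Real.norm_eq_abs, abs_inv, inv_lt_one_iff₀]
    right
    have h2 : ((2:ℤ):ℝ) ≤ ((|q|:ℤ):ℝ) := by exact_mod_cast hq
    have : (2:ℝ) ≤ |(q:ℝ)| := by simpa [Int.cast_abs] using h2
    linarith
  have htend : Tendsto (fun K => ((q:ℝ))⁻¹ ^ K * xseq K) atTop (nhds 0) := by
    rw [tendsto_zero_iff_norm_tendsto_zero]
    apply squeeze_zero (fun K => norm_nonneg _) (g := fun K => |((q:ℝ))⁻¹| ^ K * h)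
    · intro K
      rw [Real.norm_eq_abs, abs_mul, abs_pow]
      exact mul_le_mul_of_nonneg_left (hxbnd K) (by positivity)
    · have hqlt' : ‖|((q:ℝ))⁻¹|‖ < 1 := by
        rwa [Real.norm_eq_abs, abs_abs, ← Real.norm_eq_abs]
      simpa using (tendsto_pow_atTop_nhds_zero_of_norm_lt_one hqlt').mul_const h
  have h2 : Tendsto (fun K => e - ((q:ℝ))⁻¹ ^ K * xseq K) atTop (nhds e) := by
    simpa using tendsto_const_nhds.sub htend
  exact Filter.Tendsto.congr (fun K => (hps K).symm) h2

lemma hasSum_p_part {p : ℤ} (hpR : 2 ≤ (p:ℝ))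
    (R δ : ℕ → ℤ) (hRR : ∀ k, |(R k : ℝ)| ≤ 1) {B : ℝ} (hδB : ∀ k, |(δ k : ℝ)| ≤ B)
    (hδc : ∀ k, (δ k : ℝ) = (p:ℝ) * (R k : ℝ) - (R (k+1) : ℝ)) :
    HasSum (fun k => ((p:ℝ))⁻¹ ^ (k+1) * (δ k : ℝ)) ((R 0 : ℤ) : ℝ) := by
  have hppos : (0:ℝ) < (p:ℝ) := by linarith
  have hp0 : ((p:ℝ)) ≠ 0 := by linarith
  have hpinv : |((p:ℝ))⁻¹| < 1 := by
    rw [abs_inv, inv_lt_one_iff₀]; right; rw [abs_of_pos hppos]; linarith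
  apply hasSum_of_tendsto (summable_geom_bdd hpinv hδB)
  have heq : ∀ K, ∑ k ∈ Finset.range K, ((p:ℝ))⁻¹ ^ (k+1) * (δ k : ℝ)
      = ((R 0 : ℤ):ℝ) - ((p:ℝ))⁻¹ ^ K * (R K : ℝ) := by
    intro K
    have h' := tele1 ((p:ℝ)) hp0 (fun k => (R k : ℝ)) K
    rw [← h']
    exact Finset.sum_congr rfl (fun k _ => by rw [hδc k])
  have ht2 : Tendsto (fun K => ((p:ℝ))⁻¹ ^ K * (R K : ℝ)) atTop (nhds 0) := by
    rw [tendsto_zero_iff_norm_tendsto_zero]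
    apply squeeze_zero (fun K => norm_nonneg _) (g := fun K : ℕ => |((p:ℝ))⁻¹| ^ K * 1)
    · intro K
      rw [Real.norm_eq_abs, abs_mul, abs_pow]
      exact mul_le_mul_of_nonneg_left (hRR K) (by positivity)
    · have hlt : ‖|((p:ℝ))⁻¹|‖ < 1 := by rwa [Real.norm_eq_abs, abs_abs, ← Real.norm_eq_abs]
      simpa using (tendsto_pow_atTop_nhds_zero_of_norm_lt_one hlt).mul_const 1
  have h3 : Tendsto (fun K => ((R 0 : ℤ):ℝ) - ((p:ℝ))⁻¹ ^ K * (R K : ℝ)) atTop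
      (nhds ((R 0 : ℤ):ℝ)) := by
    simpa using tendsto_const_nhds.sub ht2
  exact h3.congr (fun K => (heq K).symm)

lemma hasSum_g_part {p q : ℤ} {a : ℝ} (hpR : 2 ≤ (p:ℝ)) (hqR : 2 ≤ |(q:ℝ)|)
    (R δ : ℕ → ℤ) (hRR : ∀ k, |(R k : ℝ)| ≤ 1) {B : ℝ} (hδB : ∀ k, |(δ k : ℝ)| ≤ B)
    (hδc : ∀ k, (δ k : ℝ) = (p:ℝ) * (R k : ℝ) - (R (k+1) : ℝ)) :
    HasSum (fun k => gseq p q a (k+1) * (δ k : ℝ))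
      (a * ∑' k : ℕ, ((q:ℝ))⁻¹ ^ (k+1) * (R k : ℝ)) := by
  have hp0 : ((p:ℝ)) ≠ 0 := by linarith
  have hq0 : ((q:ℝ)) ≠ 0 := by
    intro h0; rw [h0] at hqR; simp at hqR; linarith
  have hqinv : |((q:ℝ))⁻¹| < 1 := by
    rw [abs_inv, inv_lt_one_iff₀]; right; linarith
  have hUsummable : Summable (fun k => ((q:ℝ))⁻¹ ^ (k+1) * (R k : ℝ)) :=
    summable_geom_bdd hqinv hRR
  apply hasSum_of_tendsto (summable_gseq_mul hpR hqR hδB)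
  have heq : ∀ K, ∑ k ∈ Finset.range K, gseq p q a (k+1) * (δ k : ℝ)
      = a * ∑ k ∈ Finset.range K, ((q:ℝ))⁻¹ ^ (k+1) * (R k : ℝ)
        - gseq p q a K * (R K : ℝ) := by
    intro K
    rw [← tele2 hp0 hq0]
    exact Finset.sum_congr rfl (fun k _ => by rw [hδc k])
  have ht1 : Tendsto (fun K => a * ∑ k ∈ Finset.range K, ((q:ℝ))⁻¹ ^ (k+1) * (R k : ℝ))
      atTop (nhds (a * ∑' k : ℕ, ((q:ℝ))⁻¹ ^ (k+1) * (R k : ℝ))) :=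
    (hUsummable.hasSum.tendsto_sum_nat).const_mul a
  have ht2 : Tendsto (fun K => gseq p q a K * (R K : ℝ)) atTop (nhds 0) := by
    rw [tendsto_zero_iff_norm_tendsto_zero]
    apply squeeze_zero (fun K => norm_nonneg _)
      (g := fun K : ℕ => |a| * ((K:ℝ) * (2⁻¹:ℝ) ^ (K+1)))
    · intro K
      rw [Real.norm_eq_abs, abs_mul]
      calc |gseq p q a K| * |(R K : ℝ)| ≤ (|a| * K * (2⁻¹:ℝ) ^ (K+1)) * 1 :=
            mul_le_mul (gseq_bound hpR hqR K) (hRR K) (abs_nonneg _) (by positivity)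
        _ = |a| * ((K:ℝ) * (2⁻¹:ℝ) ^ (K+1)) := by ring
    · have h0 : Summable (fun K : ℕ => (K:ℝ) * (2⁻¹:ℝ) ^ K) := by
        simpa using summable_pow_mul_geometric_of_norm_lt_one (R := ℝ) 1
          (r := (2⁻¹:ℝ)) (by rw [Real.norm_eq_abs, abs_lt]; constructor <;> norm_num)
      have h1' : Summable (fun K : ℕ => |a| * ((K:ℝ) * (2⁻¹:ℝ) ^ (K+1))) :=
        Summable.mul_left _ ((h0.mul_right (2⁻¹:ℝ)).congr (fun K => by ring))
      exact h1'.tendsto_atTop_zero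
  have h3 := ht1.sub ht2
  rw [sub_zero] at h3
  exact h3.congr (fun K => (heq K).symm)

/-- backward construction core -/

lemma matA_mulVec_inj (hp : (p:ℝ) ≠ 0) (hq : (q:ℝ) ≠ 0) {u v : Fin 2 → ℝ}
    (h : (matA p q a)⁻¹.mulVec u = (matA p q a)⁻¹.mulVec v) : u = v := by
  have hAB : matA p q a * (matA p q a)⁻¹ = 1 := by
    rw [matA_inv hp hq, matA, Matrix.mul_fin_two, Matrix.one_fin_two]
    congr 1 <;> field_simp
    ring_nf
    field_simp
  have h2 := congrArg (fun w => (matA p q a).mulVec w) h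
  simpa only [Matrix.mulVec_mulVec, hAB, Matrix.one_mulVec] using h2

/-- point construction -/

lemma point_spec (hp : 2 ≤ p) (hq : 2 ≤ |q|) {m n : ℤ} (iD jD : ℕ → ℤ)
    (hi : ∀ k, 0 ≤ iD k ∧ iD k ≤ m - 1) (hj : ∀ k, 0 ≤ jD k ∧ jD k ≤ n - 1) :
    ∃ x ∈ selfAffineSet (matA p q a) (digitSet m n),
      HasSum (fun k => ((p:ℝ))⁻¹ ^ (k+1) * (iD k : ℝ)) (x 0) ∧
      HasSum (fun k => gseq p q a (k+1) * (iD k : ℝ) + ((q:ℝ))⁻¹ ^ (k+1) * (jD k : ℝ)) (x 1) := by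
  have hpR : (2:ℝ) ≤ (p:ℝ) := by exact_mod_cast hp
  have hqR : (2:ℝ) ≤ |(q:ℝ)| := by
    have h' : ((2:ℤ):ℝ) ≤ ((|q|:ℤ):ℝ) := by exact_mod_cast hq
    simpa [Int.cast_abs] using h'
  have hp0 : ((p:ℝ)) ≠ 0 := by linarith
  have hq0 : ((q:ℝ)) ≠ 0 := by intro h0; rw [h0] at hqR; simp at hqR; linarith
  have hpinv : |((p:ℝ))⁻¹| < 1 := by
    rw [abs_inv, inv_lt_one_iff₀]; right; rw [abs_of_pos (by linarith)]; linarith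
  have hqinv : |((q:ℝ))⁻¹| < 1 := by
    rw [abs_inv, inv_lt_one_iff₀]; right; linarith
  have hiR : ∀ k, |(iD k : ℝ)| ≤ (m:ℝ) - 1 := by
    intro k
    have h1 := (hi k).1
    have h2 := (hi k).2
    rw [abs_of_nonneg (by exact_mod_cast h1)]
    have : ((iD k : ℤ):ℝ) ≤ ((m-1 : ℤ):ℝ) := by exact_mod_cast h2
    push_cast at this
    linarith
  have hjR : ∀ k, |(jD k : ℝ)| ≤ (n:ℝ) - 1 := by
    intro k
    have h1 := (hj k).1
    have h2 := (hj k).2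
    rw [abs_of_nonneg (by exact_mod_cast h1)]
    have : ((jD k : ℤ):ℝ) ≤ ((n-1 : ℤ):ℝ) := by exact_mod_cast h2
    push_cast at this
    linarith
  have hsum0 : Summable (fun k => ((p:ℝ))⁻¹ ^ (k+1) * (iD k : ℝ)) :=
    summable_geom_bdd hpinv hiR
  have hsum1 : Summable (fun k => gseq p q a (k+1) * (iD k : ℝ)
      + ((q:ℝ))⁻¹ ^ (k+1) * (jD k : ℝ)) :=
    (summable_gseq_mul hpR hqR hiR).add (summable_geom_bdd hqinv hjR)
  set X0 : ℝ := ∑' k : ℕ, ((p:ℝ))⁻¹ ^ (k+1) * (iD k : ℝ) with hX0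
  set X1 : ℝ := ∑' k : ℕ, (gseq p q a (k+1) * (iD k : ℝ) + ((q:ℝ))⁻¹ ^ (k+1) * (jD k : ℝ))
    with hX1
  refine ⟨![X0, X1], ?_, by
      simp only [Matrix.cons_val_zero]
      exact hsum0.hasSum, by
      simp only [Matrix.cons_val_one, Matrix.head_cons]
      exact hsum1.hasSum⟩
  refine ⟨fun k => ![(iD k : ℝ), (jD k : ℝ)], fun k => ⟨iD k, jD k, (hi k).1, (hi k).2,
    (hj k).1, (hj k).2, rfl⟩, ?_⟩
  have hfe : (fun k => ((matA p q a)⁻¹ ^ (k+1)).mulVec ![(iD k : ℝ), (jD k : ℝ)])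
      = fun k => ![((p:ℝ))⁻¹ ^ (k+1) * (iD k : ℝ),
          gseq p q a (k+1) * (iD k : ℝ) + ((q:ℝ))⁻¹ ^ (k+1) * (jD k : ℝ)] := by
    funext k
    rw [matA_inv_pow hp0 hq0, mulVec_two]
  rw [hfe]
  rw [Pi.hasSum]
  intro x
  fin_cases x
  · simp only [Matrix.cons_val_zero]
    exact hsum0.hasSum
  · simp only [Matrix.cons_val_one, Matrix.head_cons]
    exact hsum1.hasSum

lemma forward_core (p q m n : ℤ) (a : ℝ) (hp : 2 ≤ p) (hq : 2 ≤ |q|)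
    (hm1 : p + 1 < m) (hm2 : m < 2 * p - 1) (hn : |q| ≤ 2 * n - 1)
    (δ ε : ℕ → ℤ) (t : ℤ)
    (hδ : ∀ k, |δ k| ≤ m - 1) (hε : ∀ k, |ε k| ≤ n - 1) (ht : |t| ≤ n - 1)
    (h1 : HasSum (fun k => ((p:ℝ))⁻¹ ^ (k+1) * (δ k : ℝ)) 1)
    (h2 : HasSum (fun k => gseq p q a (k+1) * (δ k : ℝ) + ((q:ℝ))⁻¹ ^ (k+1) * (ε k : ℝ)) (t:ℝ)) :
    |a| * (|(q:ℝ)| - 2) ≤ (q:ℝ)^2 * ((n:ℝ) - 1) := by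
  have hpR : (2:ℝ) ≤ (p:ℝ) := by exact_mod_cast hp
  have hqR : (2:ℝ) ≤ |(q:ℝ)| := by
    have h' : ((2:ℤ):ℝ) ≤ ((|q|:ℤ):ℝ) := by exact_mod_cast hq
    simpa [Int.cast_abs] using h'
  have hp0 : ((p:ℝ)) ≠ 0 := by linarith
  have hq0 : ((q:ℝ)) ≠ 0 := by
    intro h0; rw [h0] at hqR; simp at hqR; linarith
  have hppos : (0:ℝ) < (p:ℝ) := by linarith
  have hpinv : |((p:ℝ))⁻¹| < 1 := by
    rw [abs_inv, inv_lt_one_iff₀]; right; rw [abs_of_pos hppos]; linarith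
  have hqinv : |((q:ℝ))⁻¹| < 1 := by
    rw [abs_inv, inv_lt_one_iff₀]; right; linarith
  set Qa : ℝ := |(q:ℝ)| with hQa
  have hQinvlt : Qa⁻¹ < 1 := by rw [inv_lt_one_iff₀]; right; linarith
  have hQne : (1:ℝ) - Qa⁻¹ ≠ 0 := by linarith
  have hQne1 : Qa - 1 ≠ 0 := by linarith
  have hQne0 : Qa ≠ 0 := by linarith
  have hQfrac : Qa⁻¹ / (1 - Qa⁻¹) = 1 / (Qa - 1) := by
    rw [div_eq_div_iff hQne hQne1]
    field_simp
  -- the R sequence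
  set R : ℕ → ℤ := fun K => Nat.rec 1 (fun k Rk => p * Rk - δ k) K with hRdef
  have hR0 : R 0 = 1 := rfl
  have hRs : ∀ k, R (k+1) = p * R k - δ k := fun k => rfl
  have δcast : ∀ k, (δ k : ℝ) = (p:ℝ) * (R k : ℝ) - (R (k+1) : ℝ) := by
    intro k; rw [hRs]; push_cast; ring
  have hps : ∀ K, ∑ k ∈ Finset.range K, ((p:ℝ))⁻¹ ^ (k+1) * (δ k : ℝ)
      = 1 - ((p:ℝ))⁻¹ ^ K * (R K : ℝ) := by
    intro K
    have h' := tele1 ((p:ℝ)) hp0 (fun k => (R k : ℝ)) K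
    rw [hR0] at h'
    push_cast at h'
    rw [← h']
    exact Finset.sum_congr rfl (fun k _ => by rw [δcast k])
  have hmR : ((m:ℝ)) - 1 ≤ 2 * (p:ℝ) - 3 := by
    have h' : m ≤ 2*p - 2 := by omega
    have h'' : ((m:ℤ):ℝ) ≤ ((2*p-2 : ℤ):ℝ) := by exact_mod_cast h'
    push_cast at h''
    linarith
  have hδR : ∀ k, |(δ k : ℝ)| ≤ (m:ℝ) - 1 := by
    intro k
    have h' : ((|δ k| : ℤ) : ℝ) ≤ ((m - 1 : ℤ) : ℝ) := by exact_mod_cast hδ k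
    rw [Int.cast_abs] at h'
    push_cast at h'
    linarith
  have hm0 : (0:ℝ) ≤ (m:ℝ) - 1 := (abs_nonneg _).trans (hδR 0)
  have hRbnd : ∀ K, |R K| ≤ 1 := by
    intro K
    have hsum := h1.summable
    have htail := hsum.sum_add_tsum_nat_add K
    rw [hps K, h1.tsum_eq] at htail
    have htail' : ∑' j : ℕ, ((p:ℝ))⁻¹ ^ (j+K+1) * (δ (j+K) : ℝ)
        = ((p:ℝ))⁻¹ ^ K * (R K : ℝ) := by linarith
    have htail2 : ((p:ℝ))⁻¹ ^ K * ∑' j : ℕ, ((p:ℝ))⁻¹ ^ (j+1) * (δ (j+K) : ℝ)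
        = ((p:ℝ))⁻¹ ^ K * (R K : ℝ) := by
      rw [← tsum_mul_left, ← htail']
      apply tsum_congr
      intro j
      rw [show j+K+1 = K + (j+1) by omega, pow_add]
      ring
    have hpK : ((p:ℝ))⁻¹ ^ K ≠ 0 := by positivity
    have hRK : (R K : ℝ) = ∑' j : ℕ, ((p:ℝ))⁻¹ ^ (j+1) * (δ (j+K) : ℝ) :=
      (mul_left_cancel₀ hpK htail2).symm
    have hbnd := tsum_geom_bdd hpinv hm0 (b := fun j => (δ (j+K) : ℝ)) (fun j => hδR (j+K))
    rw [← hRK, abs_inv, abs_of_pos hppos] at hbnd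
    have hpinvlt : ((p:ℝ))⁻¹ < 1 := by rw [inv_lt_one_iff₀]; right; linarith
    have hfrac : ((p:ℝ))⁻¹ / (1 - ((p:ℝ))⁻¹) = 1 / ((p:ℝ) - 1) := by
      rw [div_eq_div_iff (by linarith : (1:ℝ) - ((p:ℝ))⁻¹ ≠ 0) (by linarith : (p:ℝ) - 1 ≠ 0)]
      field_simp
    rw [hfrac, mul_one_div] at hbnd
    have hlt : ((m:ℝ) - 1) / ((p:ℝ) - 1) < 2 := by
      rw [div_lt_iff₀ (by linarith)]
      linarith
    have hR2 : |(R K : ℝ)| < 2 := lt_of_le_of_lt hbnd hlt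
    have hR2' : |R K| < 2 := by
      have h' : ((|R K| : ℤ) : ℝ) < ((2:ℤ):ℝ) := by
        rw [Int.cast_abs]; exact_mod_cast hR2
      exact_mod_cast h'
    omega
  have hRR : ∀ K, |(R K : ℝ)| ≤ 1 := by
    intro K
    have h' : ((|R K| : ℤ) : ℝ) ≤ ((1:ℤ):ℝ) := by exact_mod_cast hRbnd K
    rw [Int.cast_abs] at h'
    simpa using h'
  have hUsummable : Summable (fun k => ((q:ℝ))⁻¹ ^ (k+1) * (R k : ℝ)) :=
    summable_geom_bdd hqinv hRR
  set U : ℝ := ∑' k : ℕ, ((q:ℝ))⁻¹ ^ (k+1) * (R k : ℝ) with hU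
  have hgsummable : Summable (fun k => gseq p q a (k+1) * (δ k : ℝ)) :=
    summable_gseq_mul hpR hqR hδR
  have hgsum : HasSum (fun k => gseq p q a (k+1) * (δ k : ℝ)) (a * U) := by
    apply hasSum_of_tendsto hgsummable
    have heq : ∀ K, ∑ k ∈ Finset.range K, gseq p q a (k+1) * (δ k : ℝ)
        = a * ∑ k ∈ Finset.range K, ((q:ℝ))⁻¹ ^ (k+1) * (R k : ℝ)
          - gseq p q a K * (R K : ℝ) := by
      intro K
      rw [← tele2 hp0 hq0]
      exact Finset.sum_congr rfl (fun k _ => by rw [δcast k])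
    have ht1 : Tendsto (fun K => a * ∑ k ∈ Finset.range K, ((q:ℝ))⁻¹ ^ (k+1) * (R k : ℝ))
        atTop (nhds (a * U)) :=
      (hUsummable.hasSum.tendsto_sum_nat).const_mul a
    have ht2 : Tendsto (fun K => gseq p q a K * (R K : ℝ)) atTop (nhds 0) := by
      rw [tendsto_zero_iff_norm_tendsto_zero]
      apply squeeze_zero (fun K => norm_nonneg _)
        (g := fun K : ℕ => |a| * ((K:ℝ) * (2⁻¹:ℝ) ^ (K+1)))
      · intro K
        rw [Real.norm_eq_abs, abs_mul]
        calc |gseq p q a K| * |(R K : ℝ)| ≤ (|a| * K * (2⁻¹:ℝ) ^ (K+1)) * 1 :=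
              mul_le_mul (gseq_bound hpR hqR K) (hRR K) (abs_nonneg _) (by positivity)
          _ = |a| * ((K:ℝ) * (2⁻¹:ℝ) ^ (K+1)) := by ring
      · have h0 : Summable (fun K : ℕ => (K:ℝ) * (2⁻¹:ℝ) ^ K) := by
          simpa using summable_pow_mul_geometric_of_norm_lt_one (R := ℝ) 1
            (r := (2⁻¹:ℝ)) (by rw [Real.norm_eq_abs, abs_lt]; constructor <;> norm_num)
        have h1' : Summable (fun K : ℕ => |a| * ((K:ℝ) * (2⁻¹:ℝ) ^ (K+1))) :=
          Summable.mul_left _ ((h0.mul_right (2⁻¹:ℝ)).congr (fun K => by ring))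
        exact h1'.tendsto_atTop_zero
    have h3 := ht1.sub ht2
    rw [sub_zero] at h3
    exact h3.congr (fun K => (heq K).symm)
  have hεR : ∀ k, |(ε k : ℝ)| ≤ (n:ℝ) - 1 := by
    intro k
    have h' : ((|ε k| : ℤ) : ℝ) ≤ ((n - 1 : ℤ) : ℝ) := by exact_mod_cast hε k
    rw [Int.cast_abs] at h'
    push_cast at h'
    linarith
  have hεsummable : Summable (fun k => ((q:ℝ))⁻¹ ^ (k+1) * (ε k : ℝ)) :=
    summable_geom_bdd hqinv hεR
  set E : ℝ := ∑' k : ℕ, ((q:ℝ))⁻¹ ^ (k+1) * (ε k : ℝ) with hE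
  have hn0 : (0:ℝ) ≤ (n:ℝ) - 1 := (abs_nonneg _).trans (hεR 0)
  have hEbnd : |E| ≤ ((n:ℝ) - 1) * (1 / (Qa - 1)) := by
    have h' := tsum_geom_bdd hqinv hn0 hεR
    rwa [abs_inv, ← hQa, hQfrac] at h'
  have htsum : HasSum (fun k => gseq p q a (k+1) * (δ k : ℝ) + ((q:ℝ))⁻¹ ^ (k+1) * (ε k : ℝ))
      (a * U + E) := hgsum.add hεsummable.hasSum
  have htval : (t:ℝ) = a * U + E := h2.unique htsum
  -- |U| lower bound
  have htailbnd : |∑' k : ℕ, ((q:ℝ))⁻¹ ^ (k+1) * (R (k+1) : ℝ)| ≤ 1 * (1 / (Qa - 1)) := by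
    have h' := tsum_geom_bdd hqinv (by norm_num : (0:ℝ) ≤ 1) (b := fun k => (R (k+1) : ℝ))
      (fun k => hRR (k+1))
    rwa [abs_inv, ← hQa, hQfrac] at h'
  have hUlow : Qa⁻¹ - Qa⁻¹ * (1 / (Qa - 1)) ≤ |U| := by
    have hUsplit : U = ((q:ℝ))⁻¹ ^ (0+1) * ((R 0 : ℤ) : ℝ)
        + ((q:ℝ))⁻¹ * ∑' k : ℕ, ((q:ℝ))⁻¹ ^ (k+1) * (R (k+1) : ℝ) := by
      rw [hU, hUsummable.tsum_eq_zero_add]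
      congr 1
      rw [← tsum_mul_left]
      apply tsum_congr
      intro k
      rw [pow_succ]
      ring
    have h0 : |((q:ℝ))⁻¹ ^ (0+1) * ((R 0 : ℤ) : ℝ)| = Qa⁻¹ := by
      rw [hR0]
      simp [abs_inv, hQa]
    have hstep : |((q:ℝ))⁻¹ * ∑' k : ℕ, ((q:ℝ))⁻¹ ^ (k+1) * (R (k+1) : ℝ)|
        ≤ Qa⁻¹ * (1 / (Qa - 1)) := by
      rw [abs_mul, abs_inv, ← hQa]
      calc Qa⁻¹ * |∑' k : ℕ, ((q:ℝ))⁻¹ ^ (k+1) * (R (k+1) : ℝ)|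
          ≤ Qa⁻¹ * (1 * (1 / (Qa - 1))) :=
            mul_le_mul_of_nonneg_left htailbnd (by positivity)
        _ = Qa⁻¹ * (1 / (Qa - 1)) := by ring
    rw [hUsplit]
    have habs : |((q:ℝ))⁻¹ ^ (0+1) * ((R 0 : ℤ) : ℝ)|
        - |((q:ℝ))⁻¹ * ∑' k : ℕ, ((q:ℝ))⁻¹ ^ (k+1) * (R (k+1) : ℝ)|
        ≤ |((q:ℝ))⁻¹ ^ (0+1) * ((R 0 : ℤ) : ℝ)
          + ((q:ℝ))⁻¹ * ∑' k : ℕ, ((q:ℝ))⁻¹ ^ (k+1) * (R (k+1) : ℝ)| := by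
      have h' := abs_sub_abs_le_abs_sub (((q:ℝ))⁻¹ ^ (0+1) * ((R 0 : ℤ) : ℝ))
        (-(((q:ℝ))⁻¹ * ∑' k : ℕ, ((q:ℝ))⁻¹ ^ (k+1) * (R (k+1) : ℝ)))
      simpa using h'
    rw [h0] at habs
    linarith
  -- conclude
  have htR : |(t:ℝ)| ≤ (n:ℝ) - 1 := by
    have h' : ((|t| : ℤ) : ℝ) ≤ ((n - 1 : ℤ) : ℝ) := by exact_mod_cast ht
    rw [Int.cast_abs] at h'
    push_cast at h'
    linarith
  have hkey : |a| * (Qa⁻¹ - Qa⁻¹ * (1 / (Qa - 1)))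
      ≤ ((n:ℝ) - 1) + ((n:ℝ) - 1) * (1 / (Qa - 1)) := by
    have h' : |a| * |U| = |a * U| := (abs_mul a U).symm
    have h'' : |a * U| = |(t:ℝ) - E| := by rw [htval]; ring_nf
    calc |a| * (Qa⁻¹ - Qa⁻¹ * (1 / (Qa - 1))) ≤ |a| * |U| :=
          mul_le_mul_of_nonneg_left hUlow (abs_nonneg a)
      _ = |(t:ℝ) - E| := by rw [h', h'']
      _ ≤ |(t:ℝ)| + |E| := abs_sub _ _
      _ ≤ ((n:ℝ) - 1) + ((n:ℝ) - 1) * (1 / (Qa - 1)) := add_le_add htR hEbnd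
  have hQ0 : (0:ℝ) < Qa := by linarith
  have hQ1 : (0:ℝ) < Qa - 1 := by linarith
  have expand1 : (Qa⁻¹ - Qa⁻¹ * (1 / (Qa - 1))) * (Qa * (Qa - 1)) = Qa - 2 := by
    field_simp
    ring
  have expand2 : (((n:ℝ) - 1) + ((n:ℝ) - 1) * (1 / (Qa - 1))) * (Qa * (Qa - 1))
      = ((n:ℝ) - 1) * Qa^2 := by
    field_simp
    ring
  have h3 : |a| * (Qa - 2) ≤ ((n:ℝ) - 1) * Qa^2 := by
    have h4 := mul_le_mul_of_nonneg_right hkey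
      (show (0:ℝ) ≤ Qa * (Qa - 1) by positivity)
    calc |a| * (Qa - 2) = |a| * ((Qa⁻¹ - Qa⁻¹ * (1 / (Qa - 1))) * (Qa * (Qa - 1))) := by
          rw [expand1]
      _ = (|a| * (Qa⁻¹ - Qa⁻¹ * (1 / (Qa - 1)))) * (Qa * (Qa - 1)) := by ring
      _ ≤ (((n:ℝ) - 1) + ((n:ℝ) - 1) * (1 / (Qa - 1))) * (Qa * (Qa - 1)) := h4
      _ = ((n:ℝ) - 1) * Qa^2 := expand2
  have hsq : (q:ℝ)^2 = Qa^2 := (sq_abs _).symm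
  rw [hsq]
  linarith

lemma backward_core (p q m n : ℤ) (a : ℝ) (hp : 2 ≤ p) (hq : 2 ≤ |q|)
    (hm1 : p + 1 < m) (hm2 : m < 2 * p - 1) (hn : |q| ≤ 2 * n - 1)
    (hineq : |a| * (|(q:ℝ)| - 2) ≤ (q:ℝ)^2 * ((n:ℝ) - 1)) :
    ∃ (δ ε : ℕ → ℤ) (t : ℤ), (∀ k, |δ k| ≤ m - 1) ∧ (∀ k, |ε k| ≤ n - 1) ∧ |t| ≤ n - 1 ∧
      HasSum (fun k => ((p:ℝ))⁻¹ ^ (k+1) * (δ k : ℝ)) 1 ∧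
      HasSum (fun k => gseq p q a (k+1) * (δ k : ℝ) + ((q:ℝ))⁻¹ ^ (k+1) * (ε k : ℝ)) (t:ℝ) := by
  have hpR : (2:ℝ) ≤ (p:ℝ) := by exact_mod_cast hp
  have hqR : (2:ℝ) ≤ |(q:ℝ)| := by
    have h' : ((2:ℤ):ℝ) ≤ ((|q|:ℤ):ℝ) := by exact_mod_cast hq
    simpa [Int.cast_abs] using h'
  have hq0 : ((q:ℝ)) ≠ 0 := by intro h0; rw [h0] at hqR; simp at hqR; linarith
  set Qa : ℝ := |(q:ℝ)| with hQa
  have hQ1 : (0:ℝ) < Qa - 1 := by linarith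
  have hQ0 : (0:ℝ) < Qa := by linarith
  have hn2 : 2 ≤ n := by omega
  have hnR : (1:ℝ) ≤ (n:ℝ) - 1 := by
    have h' : ((2:ℤ):ℝ) ≤ ((n:ℤ):ℝ) := by exact_mod_cast hn2
    push_cast at h'; linarith
  have hnq : Qa ≤ 2*(n:ℝ) - 1 := by
    have h' : ((|q|:ℤ):ℝ) ≤ ((2*n-1 : ℤ):ℝ) := by exact_mod_cast hn
    rw [Int.cast_abs] at h'
    push_cast at h'
    linarith
  -- sign and R sequence
  set s : ℤ := if 0 < q then 1 else -1 with hs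
  have hsq : ((s:ℤ):ℝ) * Qa = (q:ℝ) := by
    rw [hQa]
    rcases lt_trichotomy q 0 with hlt | heq | hgt
    · rw [hs, if_neg (by omega), abs_of_neg (by exact_mod_cast (by exact_mod_cast hlt : (q:ℝ) < 0))]
      push_cast; ring
    · exfalso; rw [heq] at hq; simp at hq
    · rw [hs, if_pos hgt, abs_of_pos (by exact_mod_cast hgt)]
      push_cast; ring
  have hs1 : s = 1 ∨ s = -1 := by rw [hs]; split <;> simp
  set R : ℕ → ℤ := fun k => if k = 0 then 1 else -s^k with hR
  have hRabs : ∀ k, |R k| ≤ 1 := by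
    intro k
    rw [hR]
    rcases hs1 with h' | h' <;> rw [h'] <;> simp only [] <;> split <;>
      simp [abs_pow, abs_neg]
  have hRR : ∀ k, |(R k : ℝ)| ≤ 1 := by
    intro k
    have h' : ((|R k| : ℤ) : ℝ) ≤ ((1:ℤ):ℝ) := by exact_mod_cast hRabs k
    rw [Int.cast_abs] at h'
    simpa using h'
  set δ : ℕ → ℤ := fun k => p * R k - R (k+1) with hδ
  have hδbnd : ∀ k, |δ k| ≤ m - 1 := by
    intro k
    have hb1 := abs_le.mp (hRabs k)
    have hb2 := abs_le.mp (hRabs (k+1))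
    have hp0 : (0:ℤ) ≤ p := by omega
    have hle : p * R k ≤ p := by
      have := mul_le_mul_of_nonneg_left hb1.2 hp0
      simpa using this
    have hge : -p ≤ p * R k := by
      have := mul_le_mul_of_nonneg_left hb1.1 hp0
      simpa using this
    rw [hδ, abs_le]
    show -(m-1) ≤ p * R k - R (k+1) ∧ p * R k - R (k+1) ≤ m - 1
    constructor <;> linarith
  have hδR : ∀ k, |(δ k : ℝ)| ≤ (m:ℝ) - 1 := by
    intro k
    have h' : ((|δ k| : ℤ) : ℝ) ≤ ((m - 1 : ℤ) : ℝ) := by exact_mod_cast hδbnd k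
    rw [Int.cast_abs] at h'
    push_cast at h'
    linarith
  have hδc : ∀ k, (δ k : ℝ) = (p:ℝ) * (R k : ℝ) - (R (k+1) : ℝ) := by
    intro k; rw [hδ]; push_cast; ring
  -- first HasSum
  have h1 : HasSum (fun k => ((p:ℝ))⁻¹ ^ (k+1) * (δ k : ℝ)) 1 := by
    have := hasSum_p_part hpR R δ hRR hδR hδc
    simpa [hR] using this
  -- the value U'
  have hqinv : |((q:ℝ))⁻¹| < 1 := by rw [abs_inv, inv_lt_one_iff₀]; right; linarith
  have hUsummable : Summable (fun k => ((q:ℝ))⁻¹ ^ (k+1) * (R k : ℝ)) :=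
    summable_geom_bdd hqinv hRR
  set U : ℝ := ∑' k : ℕ, ((q:ℝ))⁻¹ ^ (k+1) * (R k : ℝ) with hU
  have hsinv : ((q:ℝ))⁻¹ * (s:ℝ) = Qa⁻¹ := by
    have h' : (s:ℝ) * Qa = (q:ℝ) := hsq
    field_simp
    nlinarith [h']
  have hUval : U = ((q:ℝ))⁻¹ - ((q:ℝ))⁻¹ * (1/(Qa - 1)) := by
    rw [hU, hUsummable.tsum_eq_zero_add]
    have hterm : ∀ k : ℕ, ((q:ℝ))⁻¹ ^ ((k+1)+1) * (R (k+1) : ℝ)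
        = -((q:ℝ))⁻¹ * Qa⁻¹ ^ (k+1) := by
      intro k
      have hRk : (R (k+1) : ℝ) = -(s:ℝ)^(k+1) := by
        simp [hR]
      rw [hRk, ← hsinv]
      rw [mul_pow, pow_succ]
      ring
    have htails : ∑' k : ℕ, ((q:ℝ))⁻¹ ^ ((k+1)+1) * (R (k+1) : ℝ)
        = -((q:ℝ))⁻¹ * (Qa⁻¹ / (1 - Qa⁻¹)) := by
      rw [tsum_congr hterm, tsum_mul_left, tsum_geom_pow Qa⁻¹ (by positivity)
        (by rw [inv_lt_one_iff₀]; right; linarith)]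
    rw [htails]
    have hfrac : Qa⁻¹ / (1 - Qa⁻¹) = 1 / (Qa - 1) := by
      rw [div_eq_div_iff (by
        have : Qa⁻¹ < 1 := by rw [inv_lt_one_iff₀]; right; linarith
        linarith : (1:ℝ) - Qa⁻¹ ≠ 0) (by linarith : Qa - 1 ≠ 0)]
      field_simp
    rw [hfrac]
    have hR0 : R 0 = 1 := by rw [hR]; simp
    rw [hR0]
    push_cast
    ring
  -- |U| and the bound on C
  have hQa2 : (0:ℝ) ≤ Qa - 2 := by linarith
  have habsU : |U| = (Qa - 2)/(Qa*(Qa-1)) := by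
    have hU2 : U = ((q:ℝ))⁻¹ * ((Qa-2)/(Qa-1)) := by
      rw [hUval]; field_simp; ring
    rw [hU2, abs_mul, abs_inv, ← hQa, abs_of_nonneg (by positivity)]
    field_simp
  set C : ℝ := a * U with hC
  set hv : ℝ := ((n:ℝ)-1)/(Qa-1) with hhv
  have hh2 : 1/2 ≤ hv := by
    rw [hhv, le_div_iff₀ hQ1]; linarith
  have hineq' : |a| * (Qa - 2) ≤ Qa^2 * ((n:ℝ)-1) := by
    have hsq2 : (q:ℝ)^2 = Qa^2 := (sq_abs _).symm
    rwa [hsq2] at hineq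
  have hCb : |C| ≤ ((n:ℝ)-1) + hv := by
    have eU : |C| = (|a| * (Qa - 2)) / (Qa*(Qa-1)) := by
      rw [hC, abs_mul, habsU, mul_div_assoc']
    have efin : (Qa^2*((n:ℝ)-1))/(Qa*(Qa-1)) = ((n:ℝ)-1) + ((n:ℝ)-1)/(Qa-1) := by
      field_simp
      ring
    rw [eU, hhv, ← efin]
    gcongr

  -- choose t
  have hN1 : (1:ℤ) ≤ n - 1 := by omega
  have hCb' : |C| ≤ (((n-1:ℤ)):ℝ) + hv := by push_cast; linarith
  obtain ⟨ht1, ht2⟩ := clampI_spec hN1 hh2 hCb'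
  set t : ℤ := clampI (n-1) C with htdef
  have he : |(t:ℝ) - C| ≤ hv := by rwa [abs_sub_comm] at ht2
  have hqh : (|(q:ℝ)|) * hv = (((n-1:ℤ)):ℝ) + hv := by
    rw [← hQa, hhv]
    push_cast
    field_simp
    ring
  obtain ⟨ε, hεbnd, hεsum⟩ := greedy q (n-1) hq hN1 hv hh2 hqh ((t:ℝ) - C) he
  have hg := hasSum_g_part (a := a) hpR hqR R δ hRR hδR hδc
  rw [← hU, ← hC] at hg
  have h2fin : HasSum (fun k => gseq p q a (k+1) * (δ k : ℝ)
      + ((q:ℝ))⁻¹ ^ (k+1) * (ε k : ℝ)) ((t:ℝ)) := by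
    have := hg.add hεsum
    have heq : C + ((t:ℝ) - C) = (t:ℝ) := by ring
    rwa [heq] at this
  exact ⟨δ, ε, t, hδbnd, hεbnd, ht1, h1, h2fin⟩

end Stmt10Aux

open Stmt10Aux in
theorem stmt_10 (p q m n : ℤ) (a : ℝ) (hp : 2 ≤ p) (hq : 2 ≤ |q|)
    (hm1 : p + 1 < m) (hm2 : m < 2 * p - 1) (hn : |q| ≤ 2 * n - 1) :
    ∀ i ∈ Set.Icc (0 : ℤ) (m - 2),
      (Gi (matA p q a) (selfAffineSet (matA p q a) (digitSet m n)) n i ∩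
        Gi (matA p q a) (selfAffineSet (matA p q a) (digitSet m n)) n (i + 1)).Nonempty ↔
      |a| * ((|q| : ℝ) - 2) ≤ (q : ℝ) ^ 2 * ((n : ℝ) - 1) := by
  have hpR : (2:ℝ) ≤ (p:ℝ) := by exact_mod_cast hp
  have hqR : (2:ℝ) ≤ |(q:ℝ)| := by
    have h' : ((2:ℤ):ℝ) ≤ ((|q|:ℤ):ℝ) := by exact_mod_cast hq
    simpa [Int.cast_abs] using h'
  have hp0 : ((p:ℝ)) ≠ 0 := by linarith
  have hq0 : ((q:ℝ)) ≠ 0 := by intro h0; rw [h0] at hqR; simp at hqR; linarith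
  intro i _hi
  constructor
  · rintro ⟨z, hz1, hz2⟩
    rw [Gi, Set.mem_iUnion₂] at hz1 hz2
    obtain ⟨j, hj, x, hxT, hxz⟩ := hz1
    obtain ⟨j', hj', y, hyT, hyz⟩ := hz2
    rw [Set.mem_Icc] at hj hj'
    have hxy : x + ![(i:ℝ), (j:ℝ)] = y + ![((i+1:ℤ):ℝ), (j':ℝ)] :=
      matA_mulVec_inj hp0 hq0 (hxz.trans hyz.symm)
    have hcomp0 := congrFun hxy 0
    have hcomp1 := congrFun hxy 1
    simp only [Pi.add_apply, Matrix.cons_val_zero, Matrix.cons_val_one, Matrix.head_cons]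
      at hcomp0 hcomp1
    push_cast at hcomp0 hcomp1
    have hx0y0 : x 0 - y 0 = 1 := by linarith
    have hx1y1 : x 1 - y 1 = ((j' - j : ℤ) : ℝ) := by push_cast; linarith
    set t : ℤ := j' - j with htdef
    have ht : |t| ≤ n - 1 := by rw [htdef, abs_le]; omega
    -- digits of x
    obtain ⟨dx, hdx, hsx⟩ := hxT
    choose ix jx hix0 hix1 hjx0 hjx1 hdxeq using hdx
    obtain ⟨dy, hdy, hsy⟩ := hyT
    choose iy jy hiy0 hiy1 hjy0 hjy1 hdyeq using hdy
    have hfex : (fun k => ((matA p q a)⁻¹ ^ (k+1)).mulVec (dx k))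
        = fun k => ![((p:ℝ))⁻¹ ^ (k+1) * (ix k : ℝ),
            gseq p q a (k+1) * (ix k : ℝ) + ((q:ℝ))⁻¹ ^ (k+1) * (jx k : ℝ)] := by
      funext k
      rw [hdxeq k, matA_inv_pow hp0 hq0, mulVec_two]
    have hfey : (fun k => ((matA p q a)⁻¹ ^ (k+1)).mulVec (dy k))
        = fun k => ![((p:ℝ))⁻¹ ^ (k+1) * (iy k : ℝ),
            gseq p q a (k+1) * (iy k : ℝ) + ((q:ℝ))⁻¹ ^ (k+1) * (jy k : ℝ)] := by
      funext k
      rw [hdyeq k, matA_inv_pow hp0 hq0, mulVec_two]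
    rw [hfex, Pi.hasSum] at hsx
    rw [hfey, Pi.hasSum] at hsy
    have c0x := hsx 0
    have c1x := hsx 1
    have c0y := hsy 0
    have c1y := hsy 1
    simp only [Matrix.cons_val_zero, Matrix.cons_val_one, Matrix.head_cons] at c0x c1x c0y c1y
    set δ : ℕ → ℤ := fun k => ix k - iy k with hδdef
    set ε : ℕ → ℤ := fun k => jx k - jy k with hεdef
    have hδbnd : ∀ k, |δ k| ≤ m - 1 := by
      intro k
      have h1 := hix0 k; have h2 := hix1 k; have h3 := hiy0 k; have h4 := hiy1 k
      show |ix k - iy k| ≤ m - 1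
      rw [abs_le]
      omega
    have hεbnd : ∀ k, |ε k| ≤ n - 1 := by
      intro k
      have h1 := hjx0 k; have h2 := hjx1 k; have h3 := hjy0 k; have h4 := hjy1 k
      show |jx k - jy k| ≤ n - 1
      rw [abs_le]
      omega
    have h1sum : HasSum (fun k => ((p:ℝ))⁻¹ ^ (k+1) * (δ k : ℝ)) 1 := by
      have hs := c0x.sub c0y
      rw [hx0y0] at hs
      have hfeq : (fun k => ((p:ℝ))⁻¹ ^ (k+1) * (ix k : ℝ) - ((p:ℝ))⁻¹ ^ (k+1) * (iy k : ℝ))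
          = fun k => ((p:ℝ))⁻¹ ^ (k+1) * (δ k : ℝ) := by
        funext k
        show ((p:ℝ))⁻¹ ^ (k+1) * (ix k : ℝ) - ((p:ℝ))⁻¹ ^ (k+1) * (iy k : ℝ)
          = ((p:ℝ))⁻¹ ^ (k+1) * ((ix k - iy k : ℤ) : ℝ)
        push_cast
        ring
      rwa [hfeq] at hs
    have h2sum : HasSum (fun k => gseq p q a (k+1) * (δ k : ℝ)
        + ((q:ℝ))⁻¹ ^ (k+1) * (ε k : ℝ)) ((t:ℝ)) := by
      have hs := c1x.sub c1y
      rw [hx1y1] at hs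
      have hfeq : (fun k => (gseq p q a (k+1) * (ix k : ℝ) + ((q:ℝ))⁻¹ ^ (k+1) * (jx k : ℝ))
            - (gseq p q a (k+1) * (iy k : ℝ) + ((q:ℝ))⁻¹ ^ (k+1) * (jy k : ℝ)))
          = fun k => gseq p q a (k+1) * (δ k : ℝ) + ((q:ℝ))⁻¹ ^ (k+1) * (ε k : ℝ) := by
        funext k
        show _ = gseq p q a (k+1) * ((ix k - iy k : ℤ) : ℝ)
          + ((q:ℝ))⁻¹ ^ (k+1) * ((jx k - jy k : ℤ) : ℝ)
        push_cast
        ring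
      rwa [hfeq] at hs
    exact forward_core p q m n a hp hq hm1 hm2 hn δ ε t hδbnd hεbnd ht h1sum h2sum
  · intro hineq
    obtain ⟨δ, ε, t, hδbnd, hεbnd, ht, h1sum, h2sum⟩ :=
      backward_core p q m n a hp hq hm1 hm2 hn hineq
    have habs := fun k => abs_le.mp (hδbnd k)
    have habsε := fun k => abs_le.mp (hεbnd k)
    have habst := abs_le.mp ht
    have hmn1 : (0:ℤ) ≤ m - 1 := by omega
    have hnn1 : (0:ℤ) ≤ n - 1 := by
      have := hεbnd 0
      have := abs_nonneg (ε 0)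
      omega
    have hb1 : ∀ k, 0 ≤ max (δ k) 0 ∧ max (δ k) 0 ≤ m - 1 := by
      intro k
      have h := habs k
      refine ⟨le_max_right _ _, ?_⟩
      rw [max_le_iff]
      omega
    have hb2 : ∀ k, 0 ≤ max (ε k) 0 ∧ max (ε k) 0 ≤ n - 1 := by
      intro k
      have h := habsε k
      refine ⟨le_max_right _ _, ?_⟩
      rw [max_le_iff]
      omega
    have hb3 : ∀ k, 0 ≤ max (-δ k) 0 ∧ max (-δ k) 0 ≤ m - 1 := by
      intro k
      have h := habs k
      refine ⟨le_max_right _ _, ?_⟩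
      rw [max_le_iff]
      omega
    have hb4 : ∀ k, 0 ≤ max (-ε k) 0 ∧ max (-ε k) 0 ≤ n - 1 := by
      intro k
      have h := habsε k
      refine ⟨le_max_right _ _, ?_⟩
      rw [max_le_iff]
      omega
    obtain ⟨x, hxT, hx0, hx1⟩ := point_spec hp hq (fun k => max (δ k) 0)
      (fun k => max (ε k) 0) hb1 hb2
    obtain ⟨y, hyT, hy0, hy1⟩ := point_spec hp hq (fun k => max (-δ k) 0)
      (fun k => max (-ε k) 0) hb3 hb4
    have hmaxδ : ∀ k, ((max (δ k) 0 : ℤ) : ℝ) - ((max (-δ k) 0 : ℤ) : ℝ) = (δ k : ℝ) := by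
      intro k
      have : max (δ k) 0 - max (-δ k) 0 = δ k := by omega
      exact_mod_cast congrArg (fun z : ℤ => (z : ℝ)) this
    have hmaxε : ∀ k, ((max (ε k) 0 : ℤ) : ℝ) - ((max (-ε k) 0 : ℤ) : ℝ) = (ε k : ℝ) := by
      intro k
      have : max (ε k) 0 - max (-ε k) 0 = ε k := by omega
      exact_mod_cast congrArg (fun z : ℤ => (z : ℝ)) this
    have hdiff0 : x 0 - y 0 = 1 := by
      have hs := hx0.sub hy0
      have hfeq : (fun k => ((p:ℝ))⁻¹ ^ (k+1) * ((max (δ k) 0 : ℤ) : ℝ)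
            - ((p:ℝ))⁻¹ ^ (k+1) * ((max (-δ k) 0 : ℤ) : ℝ))
          = fun k => ((p:ℝ))⁻¹ ^ (k+1) * (δ k : ℝ) := by
        funext k
        rw [← hmaxδ k]
        ring
      rw [hfeq] at hs
      exact hs.unique h1sum
    have hdiff1 : x 1 - y 1 = (t:ℝ) := by
      have hs := hx1.sub hy1
      have hfeq : (fun k => (gseq p q a (k+1) * ((max (δ k) 0 : ℤ) : ℝ)
              + ((q:ℝ))⁻¹ ^ (k+1) * ((max (ε k) 0 : ℤ) : ℝ))
            - (gseq p q a (k+1) * ((max (-δ k) 0 : ℤ) : ℝ)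
              + ((q:ℝ))⁻¹ ^ (k+1) * ((max (-ε k) 0 : ℤ) : ℝ)))
          = fun k => gseq p q a (k+1) * (δ k : ℝ) + ((q:ℝ))⁻¹ ^ (k+1) * (ε k : ℝ) := by
        funext k
        rw [← hmaxδ k, ← hmaxε k]
        ring
      rw [hfeq] at hs
      exact hs.unique h2sum
    refine ⟨(matA p q a)⁻¹.mulVec (x + ![(i:ℝ), ((max (-t) 0 : ℤ):ℝ)]), ?_, ?_⟩
    · rw [Gi, Set.mem_iUnion₂]
      exact ⟨max (-t) 0, Set.mem_Icc.mpr ⟨le_max_right _ _, by omega⟩, x, hxT, rfl⟩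
    · rw [Gi, Set.mem_iUnion₂]
      refine ⟨max t 0, Set.mem_Icc.mpr ⟨le_max_right _ _, by omega⟩, y, hyT, ?_⟩
      show (matA p q a)⁻¹.mulVec (y + ![((i+1:ℤ):ℝ), ((max t 0 : ℤ):ℝ)]) = _
      have hmax : ((max t 0 : ℤ):ℝ) - ((max (-t) 0 : ℤ):ℝ) = (t:ℝ) := by
        have h' : max t 0 - max (-t) 0 = t := by omega
        exact_mod_cast congrArg (fun z : ℤ => (z : ℝ)) h'
      have hvec : y + ![((i+1:ℤ):ℝ), ((max t 0 : ℤ):ℝ)]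
          = x + ![(i:ℝ), ((max (-t) 0 : ℤ):ℝ)] := by
        funext w
        fin_cases w
        · show y 0 + ![((i+1:ℤ):ℝ), ((max t 0 : ℤ):ℝ)] 0
            = x 0 + ![(i:ℝ), ((max (-t) 0 : ℤ):ℝ)] 0
          simp only [Matrix.cons_val_zero]
          push_cast
          linarith
        · show y 1 + ![((i+1:ℤ):ℝ), ((max t 0 : ℤ):ℝ)] 1
            = x 1 + ![(i:ℝ), ((max (-t) 0 : ℤ):ℝ)] 1
          simp only [Matrix.cons_val_one, Matrix.head_cons, Matrix.cons_val_zero]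
          linarith
      rw [hvec]
end

section
/- Let p, q, m, n be integers with p ≥ 2, |q| = 2, p + 1 < m < 2p − 1, and 2n − 1 ≥ |q|, and let a be any real number. Then G_i(T) ∩ G_{i+1}(T) ≠ ∅ for every i ∈ {0, …, m−2}, and S_{i,j}(T) ∩ S_{i,j+1}(T) ≠ ∅ for every i ∈ {0, …, m−1} and every j ∈ {0, …, n−2}. -/
set_option maxHeartbeats 2000000


open Matrix

/-! ### Auxiliary lemmas -/

lemma matA_inv (p q : ℤ) (a : ℝ) (hP : (p:ℝ) ≠ 0) (hQ : (q:ℝ) ≠ 0) :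
    (matA p q a)⁻¹ = !![((p:ℝ))⁻¹, 0; a/((p:ℝ)*(q:ℝ)), ((q:ℝ))⁻¹] := by
  apply inv_eq_right_inv
  ext i j
  fin_cases i <;> fin_cases j <;>
    simp [matA, Matrix.mul_apply, Fin.sum_univ_two, Matrix.one_apply] <;>
    field_simp <;> ring

lemma matA_inv_pow (p q : ℤ) (a : ℝ) (hP : (p:ℝ) ≠ 0) (hQ : (q:ℝ) ≠ 0)
    (hPQ : (q:ℝ) ≠ (p:ℝ)) (k : ℕ) :
    (matA p q a)⁻¹ ^ k =
      !![((p:ℝ)⁻¹)^k, 0;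
         a/((q:ℝ)-(p:ℝ)) * (((p:ℝ)⁻¹)^k - ((q:ℝ)⁻¹)^k), ((q:ℝ)⁻¹)^k] := by
  induction k with
  | zero => simp [Matrix.one_fin_two]
  | succ k ih =>
      have hqp : (q:ℝ) - (p:ℝ) ≠ 0 := sub_ne_zero.mpr hPQ
      rw [pow_succ, ih, matA_inv p q a hP hQ]
      ext i j
      fin_cases i <;> fin_cases j <;>
        simp only [Matrix.mul_apply, Fin.sum_univ_two, pow_succ, Matrix.cons_val',
          Matrix.cons_val_zero, Matrix.cons_val_one, Matrix.head_cons, Matrix.head_fin_const,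
          Matrix.empty_val', Matrix.cons_val_fin_one, Matrix.of_apply, Fin.zero_eta, Fin.mk_one] <;>
        field_simp <;> ring

lemma mulVec_explicit (A C D x y : ℝ) :
    (!![A, 0; C, D]).mulVec ![x, y] = ![A*x, C*x + D*y] := by
  funext i
  fin_cases i <;> simp [Matrix.mulVec, dotProduct, Fin.sum_univ_two] <;> ring

/-- Master lemma: membership in the self-affine set from three scalar `HasSum`s. -/
lemma mem_T (p q m n : ℤ) (a : ℝ) (hP : (p:ℝ) ≠ 0) (hQ : (q:ℝ) ≠ 0)
    (hPQ : (q:ℝ) ≠ (p:ℝ)) (di dj : ℕ → ℝ)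
    (hdig : ∀ k, ![di k, dj k] ∈ digitSet m n)
    (S1 S2 S3 : ℝ)
    (h1 : HasSum (fun k => ((p:ℝ)⁻¹)^(k+1) * di k) S1)
    (h2 : HasSum (fun k => ((q:ℝ)⁻¹)^(k+1) * di k) S2)
    (h3 : HasSum (fun k => ((q:ℝ)⁻¹)^(k+1) * dj k) S3) :
    ![S1, a/((q:ℝ)-(p:ℝ)) * (S1 - S2) + S3]
      ∈ selfAffineSet (matA p q a) (digitSet m n) := by
  refine ⟨fun k => ![di k, dj k], hdig, ?_⟩
  have hfun : (fun k => ((matA p q a)⁻¹ ^ (k+1)).mulVec ![di k, dj k])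
      = fun k => ![((p:ℝ)⁻¹)^(k+1) * di k,
          a/((q:ℝ)-(p:ℝ)) * (((p:ℝ)⁻¹)^(k+1) - ((q:ℝ)⁻¹)^(k+1)) * di k
            + ((q:ℝ)⁻¹)^(k+1) * dj k] := by
    funext k
    rw [matA_inv_pow p q a hP hQ hPQ, mulVec_explicit]
  rw [hfun, Pi.hasSum]
  intro i
  fin_cases i
  · exact h1
  · have h := ((h1.sub h2).mul_left (a/((q:ℝ)-(p:ℝ)))).add h3
    show HasSum (fun k => a/((q:ℝ)-(p:ℝ)) * (((p:ℝ)⁻¹)^(k+1) - ((q:ℝ)⁻¹)^(k+1)) * di k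
      + ((q:ℝ)⁻¹)^(k+1) * dj k) (a/((q:ℝ)-(p:ℝ)) * (S1 - S2) + S3)
    convert h using 1
    · rfl
    funext k
    ring

lemma vec_mem_digitSet {m n : ℤ} (i j : ℤ) (h1 : 0 ≤ i) (h2 : i ≤ m-1) (h3 : 0 ≤ j)
    (h4 : j ≤ n-1) (x y : ℝ) (hx : x = (i:ℝ)) (hy : y = (j:ℝ)) :
    ![x, y] ∈ digitSet m n :=
  ⟨i, j, h1, h2, h3, h4, by rw [hx, hy]⟩

/-! ### Scalar series -/

lemma hs_zero (t : ℝ) : HasSum (fun k : ℕ => t^(k+1) * 0) 0 := by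
  simpa using (hasSum_zero : HasSum (fun _ : ℕ => (0:ℝ)) 0)

lemma hs_geo (t c : ℝ) (h : |t| < 1) :
    HasSum (fun k : ℕ => t^(k+1) * c) (c * t * (1-t)⁻¹) := by
  have h' := (hasSum_geometric_of_norm_lt_one
    (by rwa [Real.norm_eq_abs] : ‖t‖ < 1)).mul_left (c*t)
  convert h' using 1
  · rfl
  funext k
  ring

lemma hs_single (t c : ℝ) :
    HasSum (fun k : ℕ => t^(k+1) * (if k = 0 then c else 0)) (t * c) := by
  have h := hasSum_single (f := fun k : ℕ => t^(k+1) * (if k = 0 then c else 0)) 0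
    (fun b hb => by simp [hb])
  simpa using h

lemma hs_tail (t c : ℝ) (h : |t| < 1) :
    HasSum (fun k : ℕ => t^(k+1) * (if k = 0 then 0 else c))
      (c * t * (1-t)⁻¹ - t * c) := by
  have h' := (hs_geo t c h).sub (hs_single t c)
  convert h' using 1
  · rfl
  funext k
  by_cases hk : k = 0 <;> simp [hk]

lemma hs_odd (t c : ℝ) (h : |t| < 1) :
    HasSum (fun k : ℕ => t^(k+1) * (if Even k then 0 else c))
      (c*t/2 * (1-t)⁻¹ - c*t/2 * (1-(-t))⁻¹) := by
  have h1 := (hasSum_geometric_of_norm_lt_one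
    (by rwa [Real.norm_eq_abs] : ‖t‖ < 1)).mul_left (c*t/2)
  have h2 := (hasSum_geometric_of_norm_lt_one
    (by rwa [Real.norm_eq_abs, abs_neg] : ‖-t‖ < 1)).mul_left (c*t/2)
  have h' := h1.sub h2
  convert h' using 1
  · rfl
  funext k
  rcases Nat.even_or_odd k with he | ho
  · simp [he, he.neg_pow]
  · simp [Nat.not_even_iff_odd.mpr ho, ho.neg_pow]
    ring

lemma hs_even (t c : ℝ) (h : |t| < 1) :
    HasSum (fun k : ℕ => t^(k+1) * (if Even k then c else 0))
      (c*t/2 * (1-t)⁻¹ + c*t/2 * (1-(-t))⁻¹) := by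
  have h1 := (hasSum_geometric_of_norm_lt_one
    (by rwa [Real.norm_eq_abs] : ‖t‖ < 1)).mul_left (c*t/2)
  have h2 := (hasSum_geometric_of_norm_lt_one
    (by rwa [Real.norm_eq_abs, abs_neg] : ‖-t‖ < 1)).mul_left (c*t/2)
  have h' := h1.add h2
  convert h' using 1
  · rfl
  funext k
  rcases Nat.even_or_odd k with he | ho
  · simp [he, he.neg_pow]
    ring
  · simp [Nat.not_even_iff_odd.mpr ho, ho.neg_pow]

lemma hs_eventail (t c : ℝ) (h : |t| < 1) :
    HasSum (fun k : ℕ => t^(k+1) * (if k = 0 then 0 else if Even k then c else 0))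
      (c*t/2 * (1-t)⁻¹ + c*t/2 * (1-(-t))⁻¹ - t * c) := by
  have h' := (hs_even t c h).sub (hs_single t c)
  convert h' using 1
  · rfl
  funext k
  by_cases hk : k = 0
  · simp [hk]
  · rcases Nat.even_or_odd k with he | ho
    · simp [hk, he]
    · simp [hk, Nat.not_even_iff_odd.mpr ho]

theorem stmt_12 (p q m n : ℤ) (a : ℝ) (hp : 2 ≤ p) (hq : |q| = 2)
    (hm1 : p + 1 < m) (hm2 : m < 2 * p - 1) (hn : |q| ≤ 2 * n - 1) :
    (∀ i ∈ Set.Icc (0 : ℤ) (m - 2),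
      (Gi (matA p q a) (selfAffineSet (matA p q a) (digitSet m n)) n i ∩
        Gi (matA p q a) (selfAffineSet (matA p q a) (digitSet m n)) n (i + 1)).Nonempty) ∧
    (∀ i ∈ Set.Icc (0 : ℤ) (m - 1), ∀ j ∈ Set.Icc (0 : ℤ) (n - 2),
      (Sij (matA p q a) (selfAffineSet (matA p q a) (digitSet m n)) i j ∩
        Sij (matA p q a) (selfAffineSet (matA p q a) (digitSet m n)) i (j + 1)).Nonempty) := by
  have hp4 : 4 ≤ p := by omega
  have hq2 : q = 2 ∨ q = -2 := by
    rcases abs_eq (by norm_num : (0:ℤ) ≤ 2) |>.mp hq with h | h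
    · exact Or.inl h
    · exact Or.inr h
  have hn2 : 2 ≤ n := by rw [hq] at hn; omega
  have hP4 : (4:ℝ) ≤ (p:ℝ) := by exact_mod_cast hp4
  have hP0 : (p:ℝ) ≠ 0 := by linarith
  have hQ0 : (q:ℝ) ≠ 0 := by rcases hq2 with h | h <;> rw [h] <;> norm_num
  have hPQ : (q:ℝ) ≠ (p:ℝ) := by
    have hqp : q ≠ p := by rcases hq2 with h | h <;> omega
    exact fun hc => hqp (by exact_mod_cast hc)
  have hQP : (q:ℝ) - (p:ℝ) ≠ 0 := sub_ne_zero.mpr hPQ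
  have hrabs : |(p:ℝ)⁻¹| < 1 := by
    rw [abs_inv, abs_of_pos (by linarith : (0:ℝ) < (p:ℝ))]
    rw [inv_lt_one_iff₀]
    right; linarith
  have habsq : |(q:ℝ)| = 2 := by rw [← Int.cast_abs, hq]; norm_num
  have hsabs : |(q:ℝ)⁻¹| < 1 := by rw [abs_inv, habsq]; norm_num
  have hrlt : (p:ℝ)⁻¹ < 1 := (abs_lt.mp hrabs).2
  have hrgt : -1 < (p:ℝ)⁻¹ := (abs_lt.mp hrabs).1
  have d1 : (1:ℝ) - (p:ℝ)⁻¹ ≠ 0 := by intro hc; nlinarith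
  have d2 : (1:ℝ) - (-(p:ℝ)⁻¹) ≠ 0 := by intro hc; nlinarith
  have e1 : (p:ℝ) - 1 ≠ 0 := by intro hc; nlinarith
  have e2 : (p:ℝ) + 1 ≠ 0 := by intro hc; nlinarith
  have e3 : (2:ℝ) - (p:ℝ) ≠ 0 := by intro hc; nlinarith
  have e4 : (-2:ℝ) - (p:ℝ) ≠ 0 := by intro hc; nlinarith
  have e5 : (p:ℝ) - 2 ≠ 0 := by intro hc; nlinarith
  have e6 : (p:ℝ) + 2 ≠ 0 := by intro hc; nlinarith
  set T := selfAffineSet (matA p q a) (digitSet m n) with hT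
  -- Key existence: points of T differing by (1,0) and by (0,1).
  have key1 : ∃ x ∈ T, ∃ y ∈ T, x = y + ![(1:ℝ), 0] := by
    rcases hq2 with h | h
    · -- q = 2
      have hx := mem_T p q m n a hP0 hQ0 hPQ
        (fun k => if k = 0 then (p:ℝ)+1 else 0) (fun _ => 0)
        (fun k => by
          by_cases hk : k = 0
          · exact vec_mem_digitSet (p+1) 0 (by omega) (by omega) (by omega) (by omega)
              _ _ (by simp [hk] <;> push_cast <;> ring) (by simp)
          · exact vec_mem_digitSet 0 0 (by omega) (by omega) (by omega) (by omega)
              _ _ (by simp [hk]) (by simp))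
        _ _ _ (hs_single ((p:ℝ)⁻¹) ((p:ℝ)+1)) (hs_single ((q:ℝ)⁻¹) ((p:ℝ)+1))
        (hs_zero ((q:ℝ)⁻¹))
      have hy := mem_T p q m n a hP0 hQ0 hPQ
        (fun k => if k = 0 then 0 else (p:ℝ)-1) (fun _ => 0)
        (fun k => by
          by_cases hk : k = 0
          · exact vec_mem_digitSet 0 0 (by omega) (by omega) (by omega) (by omega)
              _ _ (by simp [hk]) (by simp)
          · exact vec_mem_digitSet (p-1) 0 (by omega) (by omega) (by omega) (by omega)
              _ _ (by simp [hk] <;> push_cast <;> ring) (by simp))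
        _ _ _ (hs_tail ((p:ℝ)⁻¹) ((p:ℝ)-1) hrabs) (hs_tail ((q:ℝ)⁻¹) ((p:ℝ)-1) hsabs)
        (hs_zero ((q:ℝ)⁻¹))
      refine ⟨_, hx, _, hy, ?_⟩
      have hQ2 : (q:ℝ) = 2 := by rw [h]; norm_num
      rw [hQ2]
      funext idx
      fin_cases idx <;>
        simp only [Matrix.cons_val_zero, Matrix.cons_val_one, Matrix.head_cons, Pi.add_apply,
          Fin.zero_eta, Fin.mk_one] <;>
        field_simp <;> ring
    · -- q = -2
      have hx := mem_T p q m n a hP0 hQ0 hPQ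
        (fun k => (if k = 0 then (p:ℝ)-1 else 0) + (if Even k then 0 else (p:ℝ)+1))
        (fun _ => 0)
        (fun k => by
          by_cases hk : k = 0
          · exact vec_mem_digitSet (p-1) 0 (by omega) (by omega) (by omega) (by omega)
              _ _ (by simp [hk] <;> push_cast <;> ring) (by simp)
          · rcases Nat.even_or_odd k with he | ho
            · exact vec_mem_digitSet 0 0 (by omega) (by omega) (by omega) (by omega)
                _ _ (by simp [hk, he]) (by simp)
            · exact vec_mem_digitSet (p+1) 0 (by omega) (by omega) (by omega) (by omega)
                _ _ (by simp [hk, Nat.not_even_iff_odd.mpr ho] <;> push_cast <;> ring) (by simp))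
        _ _ _
        (by
          have := (hs_single ((p:ℝ)⁻¹) ((p:ℝ)-1)).add (hs_odd ((p:ℝ)⁻¹) ((p:ℝ)+1) hrabs)
          convert this using 1
          funext k; ring)
        (by
          have := (hs_single ((q:ℝ)⁻¹) ((p:ℝ)-1)).add (hs_odd ((q:ℝ)⁻¹) ((p:ℝ)+1) hsabs)
          convert this using 1
          funext k; ring)
        (hs_zero ((q:ℝ)⁻¹))
      have hy := mem_T p q m n a hP0 hQ0 hPQ
        (fun k => if k = 0 then 0 else if Even k then (p:ℝ)+1 else 0) (fun _ => 0)
        (fun k => by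
          by_cases hk : k = 0
          · exact vec_mem_digitSet 0 0 (by omega) (by omega) (by omega) (by omega)
              _ _ (by simp [hk]) (by simp)
          · rcases Nat.even_or_odd k with he | ho
            · exact vec_mem_digitSet (p+1) 0 (by omega) (by omega) (by omega) (by omega)
                _ _ (by simp [hk, he] <;> push_cast <;> ring) (by simp)
            · exact vec_mem_digitSet 0 0 (by omega) (by omega) (by omega) (by omega)
                _ _ (by simp [hk, Nat.not_even_iff_odd.mpr ho]) (by simp))
        _ _ _ (hs_eventail ((p:ℝ)⁻¹) ((p:ℝ)+1) hrabs)
        (hs_eventail ((q:ℝ)⁻¹) ((p:ℝ)+1) hsabs) (hs_zero ((q:ℝ)⁻¹))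
      refine ⟨_, hx, _, hy, ?_⟩
      have hQ2 : (q:ℝ) = -2 := by rw [h]; norm_num
      have e7 : (1:ℝ) + (p:ℝ) ≠ 0 := by intro hc; nlinarith
      rw [hQ2]
      funext idx
      fin_cases idx <;>
        simp only [Matrix.cons_val_zero, Matrix.cons_val_one, Matrix.head_cons, Pi.add_apply,
          Fin.zero_eta, Fin.mk_one] <;>
        field_simp <;> ring_nf <;> field_simp <;> ring
  have key2 : ∃ x ∈ T, ∃ y ∈ T, x = y + ![(0:ℝ), 1] := by
    have hy := mem_T p q m n a hP0 hQ0 hPQ (fun _ => 0) (fun _ => 0)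
      (fun k => vec_mem_digitSet 0 0 (by omega) (by omega) (by omega) (by omega)
        _ _ (by simp) (by simp))
      _ _ _ (hs_zero ((p:ℝ)⁻¹)) (hs_zero ((q:ℝ)⁻¹)) (hs_zero ((q:ℝ)⁻¹))
    rcases hq2 with h | h
    · -- q = 2
      have hx := mem_T p q m n a hP0 hQ0 hPQ (fun _ => 0) (fun _ => (1:ℝ))
        (fun k => vec_mem_digitSet 0 1 (by omega) (by omega) (by omega) (by omega)
          _ _ (by simp) (by simp))
        _ _ _ (hs_zero ((p:ℝ)⁻¹)) (hs_zero ((q:ℝ)⁻¹)) (hs_geo ((q:ℝ)⁻¹) 1 hsabs)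
      refine ⟨_, hx, _, hy, ?_⟩
      have hQ2 : (q:ℝ) = 2 := by rw [h]; norm_num
      rw [hQ2]
      funext idx
      fin_cases idx <;>
        simp only [Matrix.cons_val_zero, Matrix.cons_val_one, Matrix.head_cons, Pi.add_apply] <;>
        norm_num
    · -- q = -2
      have hx := mem_T p q m n a hP0 hQ0 hPQ (fun _ => 0)
        (fun k => if Even k then 0 else (1:ℝ))
        (fun k => by
          rcases Nat.even_or_odd k with he | ho
          · exact vec_mem_digitSet 0 0 (by omega) (by omega) (by omega) (by omega)
              _ _ (by simp) (by simp [he])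
          · exact vec_mem_digitSet 0 1 (by omega) (by omega) (by omega) (by omega)
              _ _ (by simp) (by simp [Nat.not_even_iff_odd.mpr ho]))
        _ _ _ (hs_zero ((p:ℝ)⁻¹)) (hs_zero ((q:ℝ)⁻¹)) (hs_odd ((q:ℝ)⁻¹) 1 hsabs)
      have hy' := mem_T p q m n a hP0 hQ0 hPQ (fun _ => 0)
        (fun k => if Even k then (1:ℝ) else 0)
        (fun k => by
          rcases Nat.even_or_odd k with he | ho
          · exact vec_mem_digitSet 0 1 (by omega) (by omega) (by omega) (by omega)
              _ _ (by simp) (by simp [he])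
          · exact vec_mem_digitSet 0 0 (by omega) (by omega) (by omega) (by omega)
              _ _ (by simp) (by simp [Nat.not_even_iff_odd.mpr ho]))
        _ _ _ (hs_zero ((p:ℝ)⁻¹)) (hs_zero ((q:ℝ)⁻¹)) (hs_even ((q:ℝ)⁻¹) 1 hsabs)
      refine ⟨_, hx, _, hy', ?_⟩
      have hQ2 : (q:ℝ) = -2 := by rw [h]; norm_num
      rw [hQ2]
      funext idx
      fin_cases idx <;>
        simp only [Matrix.cons_val_zero, Matrix.cons_val_one, Matrix.head_cons, Pi.add_apply] <;>
        norm_num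
  constructor
  · intro i hi
    obtain ⟨x, hx, y, hy, hxy⟩ := key1
    refine ⟨(matA p q a)⁻¹.mulVec (x + ![(i:ℝ), ((0:ℤ):ℝ)]), ?_, ?_⟩
    · simp only [Gi]
      exact Set.mem_biUnion (by simp; omega : (0:ℤ) ∈ Set.Icc (0:ℤ) (n-1)) ⟨x, hx, rfl⟩
    · simp only [Gi]
      refine Set.mem_biUnion (by simp; omega : (0:ℤ) ∈ Set.Icc (0:ℤ) (n-1)) ⟨y, hy, ?_⟩
      show (matA p q a)⁻¹.mulVec (y + ![((i+1:ℤ):ℝ), ((0:ℤ):ℝ)])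
        = (matA p q a)⁻¹.mulVec (x + ![(i:ℝ), ((0:ℤ):ℝ)])
      apply congrArg
      rw [hxy]
      funext idx
      fin_cases idx <;> simp [Matrix.vecHead, Matrix.vecTail] <;> push_cast <;> ring
  · intro i hi j hj
    obtain ⟨x, hx, y, hy, hxy⟩ := key2
    refine ⟨(matA p q a)⁻¹.mulVec (x + ![(i:ℝ), (j:ℝ)]), ⟨x, hx, rfl⟩, y, hy, ?_⟩
    show (matA p q a)⁻¹.mulVec (y + ![(i:ℝ), ((j+1:ℤ):ℝ)])
      = (matA p q a)⁻¹.mulVec (x + ![(i:ℝ), (j:ℝ)])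
    apply congrArg
    rw [hxy]
    funext idx
    fin_cases idx <;> simp [Matrix.vecHead, Matrix.vecTail] <;> push_cast <;> ring
end

section
/- Let p, q, m, n be integers with |p| ≥ 2, |q| ≥ 2, m, n ≥ 1, mn = |pq|, and m < |p|, and let a ∈ ℝ. Then the self-affine set T(A, D) is not a tile of ℝ²: there is no discrete set J ⊆ ℝ² such that ⋃_{t ∈ J} (T + t) = ℝ² and (T° + t) ∩ (T° + s) = ∅ for all distinct s, t ∈ J, where T° denotes the interior of T. -/
open Matrix

/-- The expanding matrix with rows `(p, 0)` and `(a, q)`. -/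
noncomputable def matB (p q : ℤ) (a : ℝ) : Matrix (Fin 2) (Fin 2) ℝ :=
  !![(p : ℝ), 0; a, (q : ℝ)]

/-- `T` is a tile of `ℝ²`: there is a discrete set `J` whose translates of `T` cover `ℝ²`
with pairwise disjoint interiors. -/
def IsTile (T : Set (Fin 2 → ℝ)) : Prop :=
  ∃ J : Set (Fin 2 → ℝ), DiscreteTopology J ∧
    (⋃ t ∈ J, (fun x => x + t) '' T) = Set.univ ∧
    ∀ s ∈ J, ∀ t ∈ J, s ≠ t →
      ((fun x => x + s) '' interior T) ∩ ((fun x => x + t) '' interior T) = ∅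

open MeasureTheory Set Pointwise

/-- The projection of the self-affine set to the first coordinate. -/
def T1 (p m : ℤ) : Set ℝ :=
  {y | ∃ c : ℕ → ℤ, (∀ k, 0 ≤ c k ∧ c k ≤ m - 1) ∧
    HasSum (fun k => ((p : ℝ)⁻¹) ^ (k + 1) * (c k : ℝ)) y}

lemma matB_inv (p q : ℤ) (a : ℝ) (hp : (p : ℝ) ≠ 0) (hq : (q : ℝ) ≠ 0) :
    (matB p q a)⁻¹ = !![(p : ℝ)⁻¹, 0; -a / (p * q), (q : ℝ)⁻¹] := by
  apply inv_eq_right_inv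
  ext i j
  fin_cases i <;> fin_cases j <;>
    simp [matB, Matrix.mul_apply, Fin.sum_univ_two, Matrix.one_apply] <;>
    field_simp <;> ring

lemma matB_inv_pow (p q : ℤ) (a : ℝ) (hp : (p : ℝ) ≠ 0) (hq : (q : ℝ) ≠ 0) (k : ℕ) :
    ((matB p q a)⁻¹ ^ k) 0 0 = ((p : ℝ)⁻¹) ^ k ∧ ((matB p q a)⁻¹ ^ k) 0 1 = 0 := by
  induction k with
  | zero => simp [Matrix.one_apply]
  | succ k ih =>
    constructor
    · rw [pow_succ, Matrix.mul_apply, Fin.sum_univ_two, ih.1, ih.2,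
        matB_inv p q a hp hq, pow_succ]
      simp
    · rw [pow_succ, Matrix.mul_apply, Fin.sum_univ_two, ih.1, ih.2,
        matB_inv p q a hp hq]
      simp

lemma mem_T1 (p q m n : ℤ) (a : ℝ) (hp : (p : ℝ) ≠ 0) (hq : (q : ℝ) ≠ 0)
    {x : Fin 2 → ℝ} (hx : x ∈ selfAffineSet (matB p q a) (digitSet m n)) :
    x 0 ∈ T1 p m := by
  obtain ⟨d, hd, hsum⟩ := hx
  choose i j hi1 hi2 hj1 hj2 hv using hd
  refine ⟨i, fun k => ⟨hi1 k, hi2 k⟩, ?_⟩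
  have h0 : HasSum (fun k => (((matB p q a)⁻¹ ^ (k + 1)).mulVec (d k)) 0) (x 0) :=
    Pi.hasSum.mp hsum 0
  have heq : ∀ k, (((matB p q a)⁻¹ ^ (k + 1)).mulVec (d k)) 0
      = ((p : ℝ)⁻¹) ^ (k + 1) * (i k : ℝ) := by
    intro k
    rw [hv k]
    simp only [Matrix.mulVec, dotProduct, Fin.sum_univ_two]
    rw [(matB_inv_pow p q a hp hq (k + 1)).1, (matB_inv_pow p q a hp hq (k + 1)).2]
    simp
  exact (funext heq) ▸ h0

lemma T1_bound (p m : ℤ) (hp : 2 ≤ |p|) (hm : 1 ≤ m) :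
    T1 p m ⊆ Set.Icc (-((m : ℝ) - 1)) ((m : ℝ) - 1) := by
  rintro y ⟨c, hc, hsum⟩
  have hpabs : (2 : ℝ) ≤ |(p : ℝ)| := by
    rw [← Int.cast_abs]; exact_mod_cast hp
  have hpinv : |(p : ℝ)|⁻¹ ≤ 2⁻¹ := inv_anti₀ (by norm_num) hpabs
  set f := fun k => ((p : ℝ)⁻¹) ^ (k + 1) * (c k : ℝ) with hf
  have hbound : ∀ k, ‖f k‖ ≤ ((m : ℝ) - 1) * 2⁻¹ ^ (k + 1) := by
    intro k
    have hck : |(c k : ℝ)| ≤ (m : ℝ) - 1 := by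
      rw [abs_of_nonneg (by exact_mod_cast (hc k).1)]
      have h := (hc k).2
      have h2 : ((c k : ℤ) : ℝ) ≤ ((m - 1 : ℤ) : ℝ) := by exact_mod_cast h
      push_cast at h2
      linarith
    have h1 : ‖f k‖ = |(p : ℝ)|⁻¹ ^ (k + 1) * |(c k : ℝ)| := by
      simp [hf, abs_mul, abs_pow, abs_inv]
    rw [h1, mul_comm]
    apply mul_le_mul hck (pow_le_pow_left₀ (by positivity) hpinv _) (by positivity)
      (by exact_mod_cast sub_nonneg.mpr (by exact_mod_cast hm : (1 : ℝ) ≤ (m : ℝ)))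
  have hgsum : Summable fun k => ((m : ℝ) - 1) * 2⁻¹ ^ (k + 1) := by
    apply Summable.mul_left
    exact (summable_geometric_of_lt_one (by norm_num) (by norm_num)).comp_injective
      (add_left_injective 1)
  have hfs : Summable fun k => ‖f k‖ :=
    Summable.of_nonneg_of_le (fun _ => norm_nonneg _) hbound hgsum
  have habs : |y| ≤ ((m : ℝ) - 1) := by
    have h1 : ‖y‖ ≤ ∑' k, ‖f k‖ := by
      rw [← hsum.tsum_eq]; exact norm_tsum_le_tsum_norm hfs
    have h2 : ∑' k, ‖f k‖ ≤ ∑' k, ((m : ℝ) - 1) * 2⁻¹ ^ (k + 1) :=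
      Summable.tsum_le_tsum hbound hfs hgsum
    have h3 : ∑' k, ((m : ℝ) - 1) * 2⁻¹ ^ (k + 1) = (m : ℝ) - 1 := by
      rw [tsum_mul_left]
      have : ∑' k : ℕ, (2 : ℝ)⁻¹ ^ (k + 1) = 1 := by
        have := tsum_geometric_inv_two
        calc ∑' k : ℕ, (2 : ℝ)⁻¹ ^ (k + 1) = ∑' k : ℕ, 2⁻¹ * 2⁻¹ ^ k := by
              congr 1; funext k; rw [pow_succ]; ring
          _ = 2⁻¹ * ∑' k : ℕ, (2 : ℝ)⁻¹ ^ k := tsum_mul_left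
          _ = 1 := by rw [this]; norm_num
      rw [this, mul_one]
    calc |y| = ‖y‖ := (Real.norm_eq_abs y).symm
      _ ≤ ∑' k, ‖f k‖ := h1
      _ ≤ _ := h2
      _ = _ := h3
  exact abs_le.mp habs

lemma T1_self_affine (p m : ℤ) (hp : (p : ℝ) ≠ 0) :
    T1 p m ⊆ ⋃ i ∈ Finset.Icc (0 : ℤ) (m - 1),
      (fun z => (p : ℝ)⁻¹ * (z + (i : ℝ))) '' T1 p m := by
  rintro y ⟨c, hc, hsum⟩
  simp only [Set.mem_iUnion, Finset.mem_Icc]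
  set f := fun k => ((p : ℝ)⁻¹) ^ (k + 1) * (c k : ℝ) with hf
  have h1 : HasSum (fun n => f (n + 1)) (y - f 0) := by
    apply (hasSum_nat_add_iff 1).mpr
    simpa using hsum
  have h2 : HasSum (fun n => ((p : ℝ)⁻¹) ^ (n + 1) * (c (n + 1) : ℝ))
      ((p : ℝ) * (y - f 0)) := by
    have h := h1.mul_left (p : ℝ)
    have he : ∀ n, (p : ℝ) * f (n + 1) = ((p : ℝ)⁻¹) ^ (n + 1) * (c (n + 1) : ℝ) := by
      intro n
      simp only [hf]
      rw [pow_succ]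
      field_simp
    exact (funext he) ▸ h
  refine ⟨c 0, ⟨(hc 0).1, (hc 0).2⟩, (p : ℝ) * (y - f 0),
    ⟨fun k => c (k + 1), fun k => hc (k + 1), h2⟩, ?_⟩
  have hf0 : f 0 = (p : ℝ)⁻¹ * (c 0 : ℝ) := by simp [hf]
  field_simp
  rw [hf0]
  field_simp
  ring

lemma volume_image_affine (r c : ℝ) (s : Set ℝ) :
    volume ((fun z => r * (z + c)) '' s) = ENNReal.ofReal |r| * volume s := by
  have h1 : (fun z => r * (z + c)) '' s = r • ((fun z => z + c) '' s) := by
    rw [← Set.image_smul, Set.image_image]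
    simp [smul_eq_mul]
  rw [h1, Measure.addHaar_smul, Set.image_add_right, measure_preimage_add_right]
  simp

lemma T1_null (p m : ℤ) (hp : 2 ≤ |p|) (hm : 1 ≤ m) (hmp : m < |p|) :
    volume (T1 p m) = 0 := by
  have hp0 : (p : ℝ) ≠ 0 := by
    intro h
    rw [show p = 0 by exact_mod_cast h] at hp
    norm_num at hp
  have hpabs : (2 : ℝ) ≤ |(p : ℝ)| := by
    rw [← Int.cast_abs]; exact_mod_cast hp
  have hppos : (0 : ℝ) < |(p : ℝ)| := by linarith
  set t := volume (T1 p m) with ht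
  have htfin : t ≠ ⊤ := by
    apply ne_top_of_le_ne_top _ (measure_mono (T1_bound p m hp hm))
    exact (measure_Icc_lt_top).ne
  set C : ENNReal := ENNReal.ofReal ((m : ℝ) * |(p : ℝ)|⁻¹) with hC
  have hcard : (Finset.Icc (0 : ℤ) (m - 1)).card = m.toNat := by
    rw [Int.card_Icc]
    congr 1
    ring
  have key : t ≤ C * t := by
    calc t ≤ volume (⋃ i ∈ Finset.Icc (0 : ℤ) (m - 1),
          (fun z => (p : ℝ)⁻¹ * (z + (i : ℝ))) '' T1 p m) :=
        measure_mono (T1_self_affine p m hp0)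
      _ ≤ ∑ i ∈ Finset.Icc (0 : ℤ) (m - 1),
          volume ((fun z => (p : ℝ)⁻¹ * (z + (i : ℝ))) '' T1 p m) :=
        measure_biUnion_finset_le _ _
      _ = ∑ _i ∈ Finset.Icc (0 : ℤ) (m - 1), ENNReal.ofReal |(p : ℝ)⁻¹| * t := by
        apply Finset.sum_congr rfl
        intro i _
        rw [volume_image_affine]
      _ = (m.toNat : ENNReal) * (ENNReal.ofReal |(p : ℝ)⁻¹| * t) := by
        rw [Finset.sum_const, hcard, nsmul_eq_mul]
      _ = C * t := by
        rw [← mul_assoc, hC]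
        congr 1
        rw [← ENNReal.ofReal_natCast, ← ENNReal.ofReal_mul (by positivity)]
        congr 1
        rw [abs_inv]
        congr 1
        exact_mod_cast Int.toNat_of_nonneg (by omega)
  have hClt : C < 1 := by
    rw [hC, ENNReal.ofReal_lt_one, ← div_eq_mul_inv, div_lt_one hppos]
    rw [← Int.cast_abs]
    exact_mod_cast hmp
  by_contra ht0
  have : C * t < 1 * t := by
    rw [mul_comm C, mul_comm 1]; exact ENNReal.mul_lt_mul_right ht0 htfin hClt
  rw [one_mul] at this
  exact absurd (key.trans_lt this) (lt_irrefl t)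

theorem stmt_14 (p q m n : ℤ) (a : ℝ) (hp : 2 ≤ |p|) (hq : 2 ≤ |q|)
    (hm : 1 ≤ m) (hn : 1 ≤ n) (hmn : m * n = |p * q|) (hmp : m < |p|) :
    ¬ IsTile (selfAffineSet (matB p q a) (digitSet m n)) := by
  rintro ⟨J, hJdisc, hcover, -⟩
  have hp0 : (p : ℝ) ≠ 0 := by
    intro h
    rw [show p = 0 by exact_mod_cast h] at hp
    norm_num at hp
  have hq0 : (q : ℝ) ≠ 0 := by
    intro h
    rw [show q = 0 by exact_mod_cast h] at hq
    norm_num at hq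
  set T := selfAffineSet (matB p q a) (digitSet m n) with hT
  have hT1 : volume (T1 p m) = 0 := T1_null p m hp hm hmp
  have hsub : T ⊆ Set.pi Set.univ (fun i : Fin 2 => if i = 0 then T1 p m else Set.univ) := by
    intro x hx
    intro i _
    fin_cases i
    · simpa using mem_T1 p q m n a hp0 hq0 hx
    · simp
  have hTnull : volume T = 0 := by
    refine le_antisymm ?_ zero_le
    refine le_trans (measure_mono hsub) ?_
    rw [volume_pi_pi]
    rw [Fin.prod_univ_two]
    simp [hT1]
  have hJc : J.Countable := by
    haveI := hJdisc
    have : Countable J := countable_of_Lindelof_of_discrete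
    exact Set.countable_coe_iff.mpr this
  have huniv : volume (Set.univ : Set (Fin 2 → ℝ)) = 0 := by
    rw [← hcover]
    refine le_antisymm (le_trans (measure_biUnion_le volume hJc _) ?_) zero_le
    have heach : ∀ t : J, volume ((fun x => x + (t : Fin 2 → ℝ)) '' T) = 0 := by
      intro t
      rw [Set.image_add_right, measure_preimage_add_right, hTnull]
    rw [tsum_congr heach]
    simp
  have hcube : volume (Set.pi Set.univ (fun _ : Fin 2 => Set.Icc (0 : ℝ) 1)) = 1 := by
    rw [volume_pi_pi]
    simp [Real.volume_Icc]
  have hle : (1 : ENNReal) ≤ 0 := by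
    rw [← hcube, ← huniv]
    exact measure_mono (Set.subset_univ _)
  simp at hle
end

section
/- Let p, q be integers with |p| ≥ 2 and |q| ≥ 2, let a ∈ ℝ, and set m = |p| and n = |q|. Then the self-affine set T(A, D) is a tile of ℝ²: there exists a discrete set J ⊆ ℝ² such that ⋃_{t ∈ J} (T + t) = ℝ² and (T° + t) ∩ (T° + s) = ∅ for all distinct s, t ∈ J, where T° denotes the interior of T. -/
open Finset

namespace Radix

noncomputable def r (b : ℤ) : ℝ := ((b : ℝ))⁻¹

def M (b : ℤ) : ℤ := |b| - 1

noncomputable def minpat (b : ℤ) (k : ℕ) : ℤ := if 0 ≤ r b ^ (k + 1) then 0 else M b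

noncomputable def maxpat (b : ℤ) (k : ℕ) : ℤ := M b - minpat b k

noncomputable def digitVal (b : ℤ) (d : ℕ → ℤ) (k : ℕ) : ℝ := (d k : ℝ) * r b ^ (k + 1)

def Valid (b : ℤ) (d : ℕ → ℤ) : Prop := ∀ k, 0 ≤ d k ∧ d k ≤ M b

noncomputable def alpha (b : ℤ) : ℝ := ∑' k, digitVal b (minpat b) k

noncomputable def gap (b : ℤ) (k : ℕ) : ℝ := (M b : ℤ) * |r b| ^ (k + 1)

variable {b : ℤ} (hb : 2 ≤ |b|)

section basic
include hb

lemma habs : (2 : ℝ) ≤ |(b : ℝ)| := by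
  have : ((2:ℤ):ℝ) ≤ ((|b|:ℤ):ℝ) := Int.cast_le.2 hb
  simpa [Int.cast_abs] using this

lemma hbne : (b : ℝ) ≠ 0 := by
  intro h
  have := habs hb
  rw [h] at this
  norm_num at this

lemma hrabs : |r b| ≤ 1 / 2 := by
  have hpos : (0:ℝ) < |(b:ℝ)| := lt_of_lt_of_le (by norm_num) (habs hb)
  rw [r, abs_inv]
  rw [inv_le_comm₀ hpos (by norm_num)]
  linarith [habs hb]

lemma hrpos : 0 < |r b| := abs_pos.2 (inv_ne_zero (hbne hb))

lemma hrlt : |r b| < 1 := lt_of_le_of_lt (hrabs hb) (by norm_num)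

lemma hrne : r b ≠ 0 := inv_ne_zero (hbne hb)

lemma hMpos : 1 ≤ M b := by unfold M; omega

lemma hMr : (M b : ℝ) * |r b| = 1 - |r b| := by
  have hpos : (0:ℝ) < |(b:ℝ)| := lt_of_lt_of_le (by norm_num) (habs hb)
  have hM : (M b : ℝ) = |(b:ℝ)| - 1 := by
    unfold M; push_cast [Int.cast_abs]; ring
  rw [hM, r, abs_inv]
  field_simp

lemma valid_minpat : Valid b (minpat b) := by
  intro k
  have := hMpos hb
  unfold minpat
  constructor
  · split <;> omega
  · split <;> omega

lemma valid_maxpat : Valid b (maxpat b) := by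
  intro k
  have := valid_minpat hb k
  unfold maxpat
  omega

lemma digit_sandwich {d : ℕ → ℤ} (hd : Valid b d) (k : ℕ) :
    digitVal b (minpat b) k ≤ digitVal b d k ∧ digitVal b d k ≤ digitVal b (maxpat b) k := by
  have hd0 : (0:ℝ) ≤ (d k : ℝ) := by exact_mod_cast (hd k).1
  have hdM : (d k : ℝ) ≤ (M b : ℝ) := by exact_mod_cast (hd k).2
  unfold digitVal minpat maxpat minpat
  rcases le_or_gt 0 (r b ^ (k+1)) with h | h
  · rw [if_pos h]
    push_cast
    constructor <;> nlinarith
  · rw [if_neg (not_le.2 h)]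
    push_cast
    constructor <;> nlinarith

lemma digitVal_abs_le {d : ℕ → ℤ} (hd : Valid b d) (k : ℕ) :
    |digitVal b d k| ≤ gap b k := by
  have hd0 : (0:ℝ) ≤ (d k : ℝ) := by exact_mod_cast (hd k).1
  have hdM : (d k : ℝ) ≤ (M b : ℝ) := by exact_mod_cast (hd k).2
  unfold digitVal gap
  rw [abs_mul, abs_pow]
  push_cast
  apply mul_le_mul_of_nonneg_right _ (by positivity)
  rw [abs_of_nonneg hd0]
  exact hdM

lemma hasSum_gap : HasSum (gap b) 1 := by
  have h0 : (0:ℝ) ≤ |r b| := (hrpos hb).le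
  have h1 := hasSum_geometric_of_lt_one h0 (hrlt hb)
  have h3 : HasSum (fun k : ℕ => (M b : ℝ) * |r b| * |r b| ^ k) ((M b : ℝ) * |r b| * (1 - |r b|)⁻¹) :=
    h1.mul_left _
  have he : gap b = fun k : ℕ => (M b : ℝ) * |r b| * |r b| ^ k := by
    funext k; unfold gap; push_cast; ring
  rw [he]
  convert h3 using 1
  rw [hMr hb]
  have hne : (1:ℝ) - |r b| ≠ 0 := by
    have := hrlt hb; intro h; rw [sub_eq_zero] at h; rw [← h] at this; simp at this
  field_simp

lemma summable_digitVal {d : ℕ → ℤ} (hd : Valid b d) : Summable (digitVal b d) :=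
  Summable.of_norm_bounded (hasSum_gap hb).summable
    (fun k => by simpa [Real.norm_eq_abs] using digitVal_abs_le hb hd k)

lemma hasSum_minpat : HasSum (digitVal b (minpat b)) (alpha b) :=
  (summable_digitVal hb (valid_minpat hb)).hasSum

lemma digitVal_maxpat_eq (k : ℕ) :
    digitVal b (maxpat b) k = digitVal b (minpat b) k + gap b k := by
  unfold digitVal maxpat minpat gap
  rw [← abs_pow]
  rcases le_or_gt 0 (r b ^ (k+1)) with h | h
  · rw [if_pos h, abs_of_nonneg h]
    push_cast; ring
  · rw [if_neg (not_le.2 h), abs_of_neg h]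
    push_cast; ring

lemma hasSum_maxpat : HasSum (digitVal b (maxpat b)) (alpha b + 1) := by
  have h := (hasSum_minpat hb).add (hasSum_gap hb)
  have he : digitVal b (maxpat b) = fun k => digitVal b (minpat b) k + gap b k :=
    funext (digitVal_maxpat_eq hb)
  rw [he]
  exact h

lemma mem_Icc_of_hasSum {d : ℕ → ℤ} {x : ℝ} (hd : Valid b d)
    (hx : HasSum (digitVal b d) x) : alpha b ≤ x ∧ x ≤ alpha b + 1 := by
  constructor
  · exact hasSum_le (fun k => (digit_sandwich hb hd k).1) (hasSum_minpat hb) hx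
  · exact hasSum_le (fun k => (digit_sandwich hb hd k).2) hx (hasSum_maxpat hb)

lemma eq_minpat_of_hasSum {d : ℕ → ℤ} (hd : Valid b d)
    (hx : HasSum (digitVal b d) (alpha b)) : d = minpat b := by
  have hdiff : HasSum (fun k => digitVal b d k - digitVal b (minpat b) k) 0 := by
    simpa using hx.sub (hasSum_minpat hb)
  funext k
  have h1 : digitVal b d k - digitVal b (minpat b) k ≤ 0 :=
    le_hasSum hdiff k (fun j _ => by linarith [(digit_sandwich hb hd j).1])
  have h2 := (digit_sandwich hb hd k).1
  have h3 : digitVal b d k = digitVal b (minpat b) k := by linarith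
  unfold digitVal at h3
  have := mul_right_cancel₀ (pow_ne_zero _ (hrne hb)) h3
  exact_mod_cast this

lemma eq_maxpat_of_hasSum {d : ℕ → ℤ} (hd : Valid b d)
    (hx : HasSum (digitVal b d) (alpha b + 1)) : d = maxpat b := by
  have hdiff : HasSum (fun k => digitVal b (maxpat b) k - digitVal b d k) 0 := by
    simpa using (hasSum_maxpat hb).sub hx
  funext k
  have h1 : digitVal b (maxpat b) k - digitVal b d k ≤ 0 :=
    le_hasSum hdiff k (fun j _ => by linarith [(digit_sandwich hb hd j).2])
  have h2 := (digit_sandwich hb hd k).2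
  have h3 : digitVal b d k = digitVal b (maxpat b) k := by linarith
  unfold digitVal at h3
  have h4 := mul_right_cancel₀ (pow_ne_zero _ (hrne hb)) h3
  exact_mod_cast h4

end basic

end Radix

namespace Radix
open Finset
variable {b : ℤ} (hb : 2 ≤ |b|)

section part2
include hb

lemma hasSum_shift {d : ℕ → ℤ} {x : ℝ} (hx : HasSum (digitVal b d) x) (N : ℕ) :
    HasSum (digitVal b (fun j => d (N + j)))
      ((b : ℝ) ^ N * (x - ∑ k ∈ range N, digitVal b d k)) := by
  have t1 : HasSum (fun k => digitVal b d (k + N)) (x - ∑ k ∈ range N, digitVal b d k) := by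
    apply (hasSum_nat_add_iff N).2
    simpa [sub_add_cancel] using hx
  have t2 := t1.mul_left ((b : ℝ) ^ N)
  suffices h : digitVal b (fun j => d (N + j)) = fun k => (b:ℝ) ^ N * digitVal b d (k + N) by
    rw [h]; exact t2
  funext k
  unfold digitVal r
  show ((d (N + k) : ℝ)) * ((b:ℝ))⁻¹ ^ (k + 1) = (b:ℝ) ^ N * ((d (k + N) : ℝ) * ((b:ℝ))⁻¹ ^ (k + N + 1))
  have hcan : (b:ℝ) ^ N * ((b:ℝ))⁻¹ ^ N = 1 := by
    rw [← mul_pow, mul_inv_cancel₀ (hbne hb), one_pow]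
  rw [add_comm N k]
  field_simp
  linear_combination (-((d (k + N) : ℝ) * ((b:ℝ))⁻¹ * ((b:ℝ))⁻¹ ^ k)) * hcan

lemma minpat_pos (hpos : 0 < b) : ∀ k, minpat b k = 0 := by
  intro k
  have : (0:ℝ) < r b := by
    unfold r
    have : (0:ℝ) < (b:ℝ) := by exact_mod_cast hpos
    positivity
  unfold minpat
  rw [if_pos (le_of_lt (pow_pos this _))]

lemma minpat_neg (hneg : b < 0) : ∀ k, minpat b k = if Even k then M b else 0 := by
  intro k
  have hr : r b < 0 := by
    unfold r
    rw [inv_lt_zero]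
    exact_mod_cast hneg
  unfold minpat
  rcases Nat.even_or_odd k with he | ho
  · rw [if_neg (not_le.2 (Odd.pow_neg (Even.add_one he) hr)), if_pos he]
  · rw [if_pos (Even.pow_pos (Odd.add_one ho) (hrne hb)).le,
      if_neg (Nat.not_even_iff_odd.2 ho)]

lemma pat_shift (N : ℕ) :
    (∀ j, minpat b (N + j) = minpat b j) ∨ (∀ j, minpat b (N + j) = maxpat b j) := by
  have hbne' : b ≠ 0 := by
    intro h; rw [h] at hb; simp at hb
  rcases lt_or_gt_of_ne hbne' with hneg | hpos
  · rcases Nat.even_or_odd N with he | ho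
    · left
      intro j
      rw [minpat_neg hb hneg, minpat_neg hb hneg]
      have : Even (N + j) ↔ Even j := by
        rw [Nat.even_add]; tauto
      simp only [this]
    · right
      intro j
      rw [minpat_neg hb hneg]
      unfold maxpat
      rw [minpat_neg hb hneg]
      have hno : ¬ Even N := Nat.not_even_iff_odd.2 ho
      have : Even (N + j) ↔ ¬ Even j := by
        rw [Nat.even_add]; tauto
      simp only [this]
      rcases Classical.em (Even j) with h | h <;> simp [h]
  · left
    intro j
    rw [minpat_pos hb hpos, minpat_pos hb hpos]

lemma alpha_pos_eq (hpos : 0 < b) : alpha b = 0 := by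
  unfold alpha
  have : ∀ k, digitVal b (minpat b) k = 0 := by
    intro k; unfold digitVal; rw [minpat_pos hb hpos]; simp
  simp [this]

omit hb in
lemma cast_abs_b : ((|b| : ℤ) : ℝ) = |(b:ℝ)| := by push_cast [Int.cast_abs]; ring

lemma alpha_neg_eq (hneg : b < 0) : (b:ℝ) * alpha b = alpha b + |b| := by
  have hs := hasSum_shift hb (hasSum_minpat hb) 1
  have h0 : minpat b 0 = M b := by
    rw [minpat_neg hb hneg]; simp
  have hshift : (fun j => minpat b (1 + j)) = maxpat b := by
    funext j
    rcases pat_shift hb 1 with h | h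
    · exfalso
      have h0' := h 0
      rw [minpat_neg hb hneg, minpat_neg hb hneg] at h0'
      have hM := hMpos hb
      norm_num at h0'
      omega
    · exact h j
  rw [hshift] at hs
  have h2 := hasSum_maxpat hb
  have := hs.unique h2
  have hsum : ∑ k ∈ range 1, digitVal b (minpat b) k = (M b : ℝ) * r b := by
    simp [digitVal, h0, pow_one]
  rw [hsum] at this
  have hbr : (b:ℝ) * r b = 1 := by
    unfold r; exact mul_inv_cancel₀ (hbne hb)
  have hM1 : (M b : ℝ) = -(b:ℝ) - 1 := by
    unfold M
    push_cast [Int.cast_abs]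
    rw [abs_of_neg (by exact_mod_cast hneg : (b:ℝ) < 0)]
  have habsb : ((|b| : ℤ) : ℝ) = -(b:ℝ) := by
    rw [cast_abs_b, abs_of_neg (by exact_mod_cast hneg : (b:ℝ) < 0)]
  rw [habsb]
  have expand : (b:ℝ) ^ 1 * (alpha b - (M b:ℝ) * r b) = (b:ℝ) * alpha b - (M b : ℝ) := by
    rw [pow_one, mul_sub, ← mul_assoc, mul_comm (b:ℝ) ((M b:ℝ)), mul_assoc, hbr, mul_one]
  rw [expand] at this
  rw [hM1] at this
  linarith

lemma mul_mem_of_mem {x : ℝ} (hx : x ∈ Set.Icc (alpha b) (alpha b + 1)) :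
    (b:ℝ) * x ∈ Set.Icc (alpha b) (alpha b + |b|) := by
  obtain ⟨hx1, hx2⟩ := hx
  have hbne' : b ≠ 0 := by intro h; rw [h] at hb; simp at hb
  rcases lt_or_gt_of_ne hbne' with hneg | hpos
  · have hbR : (b:ℝ) < 0 := by exact_mod_cast hneg
    have e1 := alpha_neg_eq hb hneg
    have habsb : ((|b| : ℤ) : ℝ) = -(b:ℝ) := by
      rw [cast_abs_b, abs_of_neg hbR]
    rw [habsb] at e1
    constructor
    · nlinarith
    · rw [habsb]; nlinarith
  · have hbR : (0:ℝ) < (b:ℝ) := by exact_mod_cast hpos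
    have e1 := alpha_pos_eq hb hpos
    have habsb : ((|b| : ℤ) : ℝ) = (b:ℝ) := by
      rw [cast_abs_b, abs_of_pos hbR]
    rw [e1] at hx1 hx2 ⊢
    rw [habsb]
    constructor
    · nlinarith
    · nlinarith

lemma exists_digit {x : ℝ} (hx : x ∈ Set.Icc (alpha b) (alpha b + 1)) :
    ∃ dig : ℤ, 0 ≤ dig ∧ dig ≤ M b ∧
      (b:ℝ) * x - dig ∈ Set.Icc (alpha b) (alpha b + 1) := by
  have hu := mul_mem_of_mem hb hx
  have hu1 : alpha b ≤ (b:ℝ) * x := hu.1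
  have hu2 : (b:ℝ) * x ≤ alpha b + ((|b| : ℤ) : ℝ) := hu.2
  set u : ℝ := (b:ℝ) * x - alpha b with hudef
  have hueq : (b:ℝ) * x = u + alpha b := by rw [hudef]; ring
  have hu0 : 0 ≤ u := by rw [hudef]; linarith
  have huM : u ≤ ((|b| : ℤ) : ℝ) := by rw [hudef]; linarith
  have hMb : ((M b : ℤ) : ℝ) = ((|b| : ℤ) : ℝ) - 1 := by unfold M; push_cast; ring
  rcases le_or_gt ⌊u⌋ (M b) with hle | hgt
  · refine ⟨⌊u⌋, ?_, hle, ?_⟩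
    · exact Int.le_floor.2 (by exact_mod_cast hu0)
    · have hf1 := Int.floor_le u
      have hf2 := Int.lt_floor_add_one u
      rw [Set.mem_Icc]
      constructor
      · linarith
      · linarith
  · refine ⟨M b, by have := hMpos hb; omega, le_refl _, ?_⟩
    have h1 : ((M b : ℤ) : ℝ) + 1 ≤ ((⌊u⌋ : ℤ) : ℝ) := by exact_mod_cast hgt
    have h2 : ((⌊u⌋ : ℤ) : ℝ) ≤ u := Int.floor_le u
    rw [Set.mem_Icc]
    constructor
    · linarith
    · linarith

end part2
end Radix

namespace Radix
open Finset
variable {b : ℤ} (hb : 2 ≤ |b|)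

section part3
include hb

lemma exists_rep_tail {x : ℝ} (hx : x ∈ Set.Icc (alpha b) (alpha b + 1)) (N : ℕ) :
    ∃ d : ℕ → ℤ, Valid b d ∧ HasSum (digitVal b d) x ∧
      ∃ t ∈ Set.Icc (alpha b) (alpha b + 1),
        x = ∑ k ∈ range N, digitVal b d k + r b ^ N * t := by
  classical
  let T := {t : ℝ // t ∈ Set.Icc (alpha b) (alpha b + 1)}
  have step : ∀ t : T, ∃ dig : ℤ, 0 ≤ dig ∧ dig ≤ M b ∧
      (b:ℝ) * t.1 - dig ∈ Set.Icc (alpha b) (alpha b + 1) := fun t => exists_digit hb t.2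
  let F : T → ℤ × T := fun t =>
    ⟨(step t).choose, ⟨(b:ℝ) * t.1 - (step t).choose, (step t).choose_spec.2.2⟩⟩
  let X : ℕ → T := fun n => Nat.rec ⟨x, hx⟩ (fun _ t => (F t).2) n
  let d : ℕ → ℤ := fun n => (F (X n)).1
  have Xsucc : ∀ n, (X (n+1)).1 = (b:ℝ) * (X n).1 - (d n : ℝ) := fun n => rfl
  have hvalid : Valid b d := fun n => ⟨(step (X n)).choose_spec.1, (step (X n)).choose_spec.2.1⟩
  have hrb : r b * (b:ℝ) = 1 := inv_mul_cancel₀ (hbne hb)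
  have key : ∀ L, ∑ k ∈ range L, digitVal b d k = x - r b ^ L * (X L).1 := by
    intro L
    induction L with
    | zero => simp [X]
    | succ L ih =>
      rw [Finset.sum_range_succ, ih, Xsucc L]
      unfold digitVal
      have expand : r b ^ (L+1) = r b ^ L * r b := by ring
      rw [expand]
      linear_combination ((X L).1 * r b ^ L) * hrb
  have hsummable := summable_digitVal hb hvalid
  have htendsto : Filter.Tendsto (fun L => ∑ k ∈ range L, digitVal b d k)
      Filter.atTop (nhds x) := by
    have hb0 : (0:ℝ) ≤ |r b| := (hrpos hb).le
    have h1 : Filter.Tendsto (fun L : ℕ => |r b| ^ L) Filter.atTop (nhds 0) :=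
      tendsto_pow_atTop_nhds_zero_of_lt_one hb0 (hrlt hb)
    have h2 : Filter.Tendsto (fun L : ℕ => (|alpha b| + 1) * |r b| ^ L) Filter.atTop (nhds 0) := by
      have := h1.const_mul (|alpha b| + 1)
      simpa using this
    have h3 : Filter.Tendsto (fun L : ℕ => r b ^ L * (X L).1) Filter.atTop (nhds 0) := by
      apply squeeze_zero_norm _ h2
      intro L
      rw [Real.norm_eq_abs, abs_mul, abs_pow]
      rw [mul_comm]
      apply mul_le_mul_of_nonneg_right _ (by positivity)
      have hm := (X L).2
      rw [Set.mem_Icc] at hm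
      rw [abs_le]
      constructor
      · have := abs_nonneg (alpha b); have := neg_abs_le (alpha b); linarith [hm.1]
      · have := le_abs_self (alpha b); linarith [hm.2]
    have : Filter.Tendsto (fun L => x - r b ^ L * (X L).1) Filter.atTop (nhds (x - 0)) :=
      tendsto_const_nhds.sub h3
    rw [sub_zero] at this
    exact this.congr (fun L => (key L).symm)
  refine ⟨d, hvalid, (hsummable.hasSum_iff_tendsto_nat).2 htendsto, (X N).1, (X N).2, ?_⟩
  rw [key N]; ring

lemma exists_rep {x : ℝ} (hx : x ∈ Set.Icc (alpha b) (alpha b + 1)) :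
    ∃ d : ℕ → ℤ, Valid b d ∧ HasSum (digitVal b d) x := by
  obtain ⟨d, h1, h2, _⟩ := exists_rep_tail hb hx 0
  exact ⟨d, h1, h2⟩

lemma minpat_ne_maxpat (k : ℕ) : minpat b k ≠ maxpat b k := by
  have hM := hMpos hb
  have : minpat b k = 0 ∨ minpat b k = M b := by
    unfold minpat; split
    · left; rfl
    · right; rfl
  unfold maxpat
  omega

lemma unique_rep {dd de : ℕ → ℤ} (h1v : Valid b dd) (h2v : Valid b de) {x : ℝ}
    (h1 : HasSum (digitVal b dd) x) (h2 : HasSum (digitVal b de) x)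
    (hmin : ∀ L, ∃ k, L ≤ k ∧ dd k ≠ minpat b k)
    (hmax : ∀ L, ∃ k, L ≤ k ∧ dd k ≠ maxpat b k) : de = dd := by
  classical
  by_contra hne
  have hex : ∃ n, dd n ≠ de n := by
    by_contra h; push_neg at h; exact hne (funext fun n => (h n).symm)
  set N := Nat.find hex with hNdef
  have hN : dd N ≠ de N := Nat.find_spec hex
  have hltN : ∀ k < N, dd k = de k := fun k hk => not_not.1 (Nat.find_min hex hk)
  have hPeq : ∀ L, L ≤ N → ∑ k ∈ range L, digitVal b dd k = ∑ k ∈ range L, digitVal b de k := by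
    intro L hL
    apply Finset.sum_congr rfl
    intro k hk
    unfold digitVal
    rw [hltN k (lt_of_lt_of_le (mem_range.1 hk) hL)]
  set YN := (b:ℝ) ^ N * (x - ∑ k ∈ range N, digitVal b dd k) with hYdef
  have hcan : (b:ℝ)^(N+1) * (r b)^(N+1) = 1 := by
    unfold r; rw [← mul_pow, mul_inv_cancel₀ (hbne hb), one_pow]
  have hval1 : (b:ℝ)^(N+1) * (x - ∑ k ∈ range (N+1), digitVal b dd k)
      = (b:ℝ) * YN - (dd N : ℝ) := by
    rw [Finset.sum_range_succ, hYdef]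
    unfold digitVal
    linear_combination (-(dd N : ℝ)) * hcan
  have hval2 : (b:ℝ)^(N+1) * (x - ∑ k ∈ range (N+1), digitVal b de k)
      = (b:ℝ) * YN - (de N : ℝ) := by
    rw [Finset.sum_range_succ, hYdef, hPeq N (le_refl N)]
    unfold digitVal
    linear_combination (-(de N : ℝ)) * hcan
  have s1 : HasSum (digitVal b (fun j => dd (N+1+j))) ((b:ℝ) * YN - (dd N : ℝ)) := by
    have := hasSum_shift hb h1 (N+1); rwa [hval1] at this
  have s2 : HasSum (digitVal b (fun j => de (N+1+j))) ((b:ℝ) * YN - (de N : ℝ)) := by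
    have := hasSum_shift hb h2 (N+1); rwa [hval2] at this
  have m1 := mem_Icc_of_hasSum hb (fun j => h1v (N+1+j)) s1
  have m2 := mem_Icc_of_hasSum hb (fun j => h2v (N+1+j)) s2
  -- dd N ≠ de N forces an endpoint
  have hdiff : (1:ℝ) ≤ |(dd N : ℝ) - (de N : ℝ)| := by
    have : (1:ℤ) ≤ |dd N - de N| := Int.one_le_abs (by omega)
    calc (1:ℝ) ≤ ((|dd N - de N| : ℤ) : ℝ) := by exact_mod_cast this
    _ = |(dd N : ℝ) - (de N : ℝ)| := by push_cast [Int.cast_abs]; ring_nf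
  have hend : (b:ℝ) * YN - (dd N : ℝ) = alpha b ∨ (b:ℝ) * YN - (dd N : ℝ) = alpha b + 1 := by
    rcases abs_cases ((dd N : ℝ) - (de N : ℝ)) with ⟨he, _⟩ | ⟨he, _⟩
    · rw [he] at hdiff
      left; linarith [m1.1, m1.2, m2.1, m2.2]
    · rw [he] at hdiff
      right; linarith [m1.1, m1.2, m2.1, m2.2]
  have hpatterned : (∀ j, dd (N+1+j) = minpat b j) ∨ (∀ j, dd (N+1+j) = maxpat b j) := by
    rcases hend with he | he
    · left
      rw [he] at s1
      have := eq_minpat_of_hasSum hb (fun j => h1v (N+1+j)) s1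
      exact fun j => congrFun this j
    · right
      rw [he] at s1
      have := eq_maxpat_of_hasSum hb (fun j => h1v (N+1+j)) s1
      exact fun j => congrFun this j
  have hMdef : ∀ j, maxpat b j = M b - minpat b j := fun j => rfl
  rcases pat_shift hb (N+1) with hps | hps
  · rcases hpatterned with hp | hp
    · obtain ⟨k, hk1, hk2⟩ := hmin (N+1)
      have hj : dd k = minpat b k := by
        have hkN : k = N + 1 + (k - (N+1)) := by omega
        rw [hkN, hp (k - (N+1)), ← hps (k - (N+1))]
      exact hk2 hj
    · obtain ⟨k, hk1, hk2⟩ := hmax (N+1)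
      have hj : dd k = maxpat b k := by
        have hkN : k = N + 1 + (k - (N+1)) := by omega
        rw [hkN, hp (k - (N+1)), hMdef, hMdef, ← hps (k - (N+1))]
      exact hk2 hj
  · rcases hpatterned with hp | hp
    · obtain ⟨k, hk1, hk2⟩ := hmax (N+1)
      have hj : dd k = maxpat b k := by
        have hkN : k = N + 1 + (k - (N+1)) := by omega
        have h5 := hps (k - (N+1))
        rw [hMdef] at h5
        have h6 : minpat b (k - (N+1)) = M b - minpat b (N+1+(k-(N+1))) := by omega
        rw [hkN, hp (k - (N+1)), h6, hMdef]
      exact hk2 hj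
    · obtain ⟨k, hk1, hk2⟩ := hmin (N+1)
      have hj : dd k = minpat b k := by
        have hkN : k = N + 1 + (k - (N+1)) := by omega
        have h5 := hps (k - (N+1))
        rw [hMdef] at h5
        have h6 : maxpat b (k - (N+1)) = minpat b (N+1+(k-(N+1))) := by
          rw [hMdef]; omega
        rw [hkN, hp (k - (N+1)), h6]
      exact hk2 hj

end part3
end Radix

namespace Radix
open Finset
variable {b : ℤ} (hb : 2 ≤ |b|)

noncomputable def sp (b : ℤ) (k : ℕ) : ℤ := if Even k then maxpat b k else minpat b k

include hb

lemma valid_sp : Valid b (sp b) := by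
  intro k
  unfold sp
  split
  · exact valid_maxpat hb k
  · exact valid_minpat hb k

lemma glue_dev_min (N : ℕ) (d : ℕ → ℤ) :
    ∀ L, ∃ k, L ≤ k ∧ (fun k => if k < N then d k else sp b (k - N)) k ≠ minpat b k := by
  intro L
  rcases pat_shift hb N with hps | hps
  · refine ⟨N + 2 * (L + 1), by omega, ?_⟩
    have h1 : ¬ (N + 2 * (L + 1) < N) := by omega
    have h2 : N + 2 * (L + 1) - N = 2 * (L + 1) := by omega
    simp only [if_neg h1, h2]
    unfold sp
    rw [if_pos ⟨L + 1, by ring⟩, hps (2 * (L + 1))]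
    exact (minpat_ne_maxpat hb _).symm
  · refine ⟨N + (2 * L + 1), by omega, ?_⟩
    have h1 : ¬ (N + (2 * L + 1) < N) := by omega
    have h2 : N + (2 * L + 1) - N = 2 * L + 1 := by omega
    simp only [if_neg h1, h2]
    unfold sp
    rw [if_neg (by simp [Nat.even_iff, Nat.add_mod]), hps (2 * L + 1)]
    exact minpat_ne_maxpat hb _

lemma glue_dev_max (N : ℕ) (d : ℕ → ℤ) :
    ∀ L, ∃ k, L ≤ k ∧ (fun k => if k < N then d k else sp b (k - N)) k ≠ maxpat b k := by
  intro L
  have hMdef : ∀ j, maxpat b j = M b - minpat b j := fun j => rfl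
  rcases pat_shift hb N with hps | hps
  · refine ⟨N + (2 * L + 1), by omega, ?_⟩
    have h1 : ¬ (N + (2 * L + 1) < N) := by omega
    have h2 : N + (2 * L + 1) - N = 2 * L + 1 := by omega
    simp only [if_neg h1, h2]
    unfold sp
    rw [if_neg (by simp [Nat.even_iff, Nat.add_mod])]
    intro hcontra
    have h5 := hps (2 * L + 1)
    have h6 := minpat_ne_maxpat hb (2 * L + 1)
    have h7 := hMdef (N + (2 * L + 1))
    have h8 := hMdef (2 * L + 1)
    omega
  · refine ⟨N + 2 * (L + 1), by omega, ?_⟩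
    have h1 : ¬ (N + 2 * (L + 1) < N) := by omega
    have h2 : N + 2 * (L + 1) - N = 2 * (L + 1) := by omega
    simp only [if_neg h1, h2]
    unfold sp
    rw [if_pos ⟨L + 1, by ring⟩]
    intro hcontra
    have h5 := hps (2 * (L + 1))
    have h6 := minpat_ne_maxpat hb (2 * (L + 1))
    have h7 := hMdef (N + 2 * (L + 1))
    have h8 := hMdef (2 * (L + 1))
    omega

lemma exists_unique_rep_near {x₀ : ℝ} (hx : x₀ ∈ Set.Icc (alpha b) (alpha b + 1))
    {ε : ℝ} (hε : 0 < ε) :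
    ∃ y d, Valid b d ∧ HasSum (digitVal b d) y ∧ |y - x₀| < ε ∧
      ∀ d', Valid b d' → HasSum (digitVal b d') y → d' = d := by
  classical
  obtain ⟨N, hN⟩ := exists_pow_lt_of_lt_one hε (hrlt hb)
  obtain ⟨d, hdv, hdsum, t, htmem, hteq⟩ := exists_rep_tail hb hx N
  set σ := ∑' k, digitVal b (sp b) k with hσdef
  have hσsum : HasSum (digitVal b (sp b)) σ := (summable_digitVal hb (valid_sp hb)).hasSum
  have hσmem := mem_Icc_of_hasSum hb (valid_sp hb) hσsum
  set e : ℕ → ℤ := fun k => if k < N then d k else sp b (k - N) with hedef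
  have hev : Valid b e := by
    intro k
    rw [hedef]
    dsimp only
    split
    · exact hdv k
    · exact valid_sp hb _
  set y := ∑ k ∈ range N, digitVal b d k + r b ^ N * σ with hydef
  have hhead : ∑ k ∈ range N, digitVal b e k = ∑ k ∈ range N, digitVal b d k := by
    apply Finset.sum_congr rfl
    intro k hk
    unfold digitVal
    rw [hedef]
    simp only [mem_range.1 hk, if_pos]
  have hfe : (fun k => digitVal b e (k + N)) = (fun k => r b ^ N * digitVal b (sp b) k) := by
    funext k
    unfold digitVal
    rw [hedef]
    dsimp only
    rw [if_neg (by omega : ¬ (k + N < N))]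
    have h3 : k + N - N = k := by omega
    rw [h3, show k + N + 1 = N + (k + 1) by ring, pow_add]
    ring
  have htail : HasSum (fun k => digitVal b e (k + N)) (r b ^ N * σ) := by
    rw [hfe]; exact hσsum.mul_left _
  have hesum : HasSum (digitVal b e) y := by
    have := (hasSum_nat_add_iff N).1 htail
    rw [hhead] at this
    rw [hydef, add_comm]
    exact this
  have hclose : |y - x₀| < ε := by
    have h1 : y - x₀ = r b ^ N * (σ - t) := by
      rw [hydef, hteq]; ring
    rw [h1, abs_mul, abs_pow]
    have h2 : |σ - t| ≤ 1 := by
      rw [abs_le]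
      rw [Set.mem_Icc] at htmem
      constructor
      · linarith [hσmem.1, htmem.2]
      · linarith [hσmem.2, htmem.1]
    calc |r b| ^ N * |σ - t| ≤ |r b| ^ N * 1 := by
          apply mul_le_mul_of_nonneg_left h2 (by positivity)
      _ = |r b| ^ N := by ring
      _ < ε := hN
  exact ⟨y, e, hev, hesum, hclose,
    fun d' hd'v hd's => unique_rep hb hev hd'v hesum hd's (glue_dev_min hb N d) (glue_dev_max hb N d)⟩

end Radix

open Matrix

namespace SAT

noncomputable def cseq (p q : ℤ) (a : ℝ) : ℕ → ℝ
  | 0 => 0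
  | (k+1) => cseq p q a k * Radix.r p + Radix.r q ^ k * (-a * Radix.r p * Radix.r q)

variable {p q : ℤ} {a : ℝ} (hp : 2 ≤ |p|) (hq : 2 ≤ |q|)

lemma mulVec_tri (u w v x y : ℝ) :
    (!![u, 0; w, v]).mulVec ![x, y] = ![u * x, w * x + v * y] := by
  funext i
  fin_cases i <;>
    simp [Matrix.mulVec, dotProduct, Fin.sum_univ_two]

include hp hq

lemma matB_inv : (matB p q a)⁻¹ = !![Radix.r p, 0; -a * Radix.r p * Radix.r q, Radix.r q] := by
  apply inv_eq_right_inv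
  have hpne := Radix.hbne hp
  have hqne := Radix.hbne hq
  unfold matB Radix.r
  rw [Matrix.mul_fin_two]
  have e1 : (p:ℝ) * ((p:ℝ))⁻¹ = 1 := mul_inv_cancel₀ hpne
  have e2 : (q:ℝ) * ((q:ℝ))⁻¹ = 1 := mul_inv_cancel₀ hqne
  rw [Matrix.one_fin_two]
  ext i j
  fin_cases i <;> fin_cases j <;>
    simp only [Matrix.cons_val', Matrix.cons_val_zero, Matrix.cons_val_one, Matrix.head_cons,
      Matrix.empty_val', Matrix.cons_val_fin_one, Matrix.cons_val_succ, Matrix.of_apply,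
        Fin.zero_eta, Fin.mk_one] <;>
    field_simp <;> ring


lemma matB_inv_pow (k : ℕ) :
    (matB p q a)⁻¹ ^ k = !![Radix.r p ^ k, 0; cseq p q a k, Radix.r q ^ k] := by
  induction k with
  | zero =>
    simp only [pow_zero]
    rw [Matrix.one_fin_two]
    norm_num [cseq]
  | succ k ih =>
    rw [pow_succ, ih, matB_inv hp hq, Matrix.mul_fin_two]
    have hc : cseq p q a (k+1) = cseq p q a k * Radix.r p + Radix.r q ^ k * (-a * Radix.r p * Radix.r q) := rfl
    ext i j
    fin_cases i <;> fin_cases j <;>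
      simp only [Matrix.cons_val', Matrix.cons_val_zero, Matrix.cons_val_one, Matrix.head_cons,
        Matrix.empty_val', Matrix.cons_val_fin_one, hc] <;> ring

lemma cseq_abs_le (k : ℕ) : |cseq p q a k| ≤ |a| * k * (2⁻¹ : ℝ) ^ k := by
  induction k with
  | zero => simp [cseq]
  | succ k ih =>
    have hrp : |Radix.r p| ≤ (2⁻¹:ℝ) := by rw [← one_div]; exact Radix.hrabs hp
    have hrq : |Radix.r q| ≤ (2⁻¹:ℝ) := by rw [← one_div]; exact Radix.hrabs hq
    have hrq' : |Radix.r q| ^ k ≤ (2⁻¹ : ℝ) ^ k := by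
      apply pow_le_pow_left₀ (abs_nonneg _)
      linarith
    have h1 : |cseq p q a (k+1)| ≤ |cseq p q a k| * |Radix.r p| + |Radix.r q| ^ k * (|a| * |Radix.r p| * |Radix.r q|) := by
      rw [show cseq p q a (k+1) = cseq p q a k * Radix.r p + Radix.r q ^ k * (-a * Radix.r p * Radix.r q) from rfl]
      calc _ ≤ |cseq p q a k * Radix.r p| + |Radix.r q ^ k * (-a * Radix.r p * Radix.r q)| :=
            abs_add_le _ _
        _ = _ := by rw [abs_mul, abs_mul, abs_pow, abs_mul, abs_mul, abs_neg]
    have h2 : |cseq p q a k| * |Radix.r p| ≤ (|a| * k * (2⁻¹:ℝ)^k) * (2⁻¹:ℝ) := by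
      apply mul_le_mul ih hrp (abs_nonneg _) (by positivity)
    have h3 : |Radix.r q| ^ k * (|a| * |Radix.r p| * |Radix.r q|) ≤ (2⁻¹:ℝ)^k * (|a| * 2⁻¹) := by
      apply mul_le_mul hrq' _ (by positivity) (by positivity)
      have hx : |Radix.r p| * |Radix.r q| ≤ 2⁻¹ * 2⁻¹ :=
        mul_le_mul hrp hrq (abs_nonneg _) (by norm_num)
      nlinarith [abs_nonneg a, hx, abs_nonneg (Radix.r p), abs_nonneg (Radix.r q)]
    have hk : (0:ℝ) ≤ |a| * (2⁻¹:ℝ)^k := by positivity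
    push_cast
    calc |cseq p q a (k+1)| ≤ (|a| * k * (2⁻¹:ℝ)^k) * (2⁻¹:ℝ) + (2⁻¹:ℝ)^k * (|a| * 2⁻¹) := by
          linarith
      _ = |a| * (k + 1) * ((2⁻¹:ℝ)^k * 2⁻¹) := by ring
      _ = |a| * (k + 1) * (2⁻¹:ℝ)^(k+1) := by rw [pow_succ]

set_option maxHeartbeats 1000000 in
lemma summable_cseq_mul (i : ℕ → ℤ) (hvi : Radix.Valid p i) :
    Summable (fun k => cseq p q a (k+1) * (i k : ℝ)) := by
  have hbase : Summable (fun n : ℕ => (n:ℝ) ^ 1 * (2⁻¹:ℝ) ^ n) :=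
    summable_pow_mul_geometric_of_norm_lt_one 1
      (by rw [Real.norm_eq_abs, abs_of_pos (by norm_num : (0:ℝ) < 2⁻¹)]; norm_num)
  have hshift : Summable (fun n : ℕ => ((n+1:ℕ):ℝ) ^ 1 * (2⁻¹:ℝ) ^ (n+1)) :=
    (summable_nat_add_iff 1).2 hbase
  have hmul := hshift.mul_left (|a| * ((Radix.M p : ℤ):ℝ))
  apply Summable.of_norm_bounded hmul
  intro k
  rw [Real.norm_eq_abs, abs_mul]
  have h1 := cseq_abs_le (a := a) hp hq (k+1)
  have h2 : |(i k : ℝ)| ≤ ((Radix.M p : ℤ):ℝ) := by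
    rw [abs_of_nonneg (by exact_mod_cast (hvi k).1 : (0:ℝ) ≤ (i k:ℝ))]
    exact_mod_cast (hvi k).2
  have h3 : (0:ℝ) ≤ ((Radix.M p : ℤ):ℝ) := by
    have := Radix.hMpos hp
    exact_mod_cast by omega
  calc |cseq p q a (k+1)| * |(i k:ℝ)|
      ≤ (|a| * ((k+1:ℕ):ℝ) * (2⁻¹:ℝ)^(k+1)) * ((Radix.M p : ℤ):ℝ) := by
        apply mul_le_mul h1 h2 (abs_nonneg _) (by positivity)
    _ = |a| * ((Radix.M p : ℤ):ℝ) * (((k+1:ℕ):ℝ) ^ 1 * (2⁻¹:ℝ)^(k+1)) := by push_cast; ring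

omit hp hq in
lemma hasSum_pi_two {f : ℕ → (Fin 2 → ℝ)} {x : Fin 2 → ℝ}
    (h0 : HasSum (fun k => f k 0) (x 0)) (h1 : HasSum (fun k => f k 1) (x 1)) :
    HasSum f x := by
  rw [Pi.hasSum]
  intro c
  fin_cases c
  · exact h0
  · exact h1

lemma mem_T_iff (x : Fin 2 → ℝ) :
    x ∈ selfAffineSet (matB p q a) (digitSet |p| |q|) ↔
      ∃ i j : ℕ → ℤ, Radix.Valid p i ∧ Radix.Valid q j ∧
        HasSum (Radix.digitVal p i) (x 0) ∧
        HasSum (fun k => cseq p q a (k+1) * (i k : ℝ) + Radix.digitVal q j k) (x 1) := by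
  have comp0 : ∀ (i j : ℕ → ℤ) (k : ℕ),
      ((matB p q a)⁻¹ ^ (k+1)).mulVec ![(i k : ℝ), (j k : ℝ)] 0 = Radix.digitVal p i k := by
    intro i j k
    rw [matB_inv_pow hp hq, mulVec_tri]
    rw [Matrix.cons_val_zero]
    unfold Radix.digitVal
    ring
  have comp1 : ∀ (i j : ℕ → ℤ) (k : ℕ),
      ((matB p q a)⁻¹ ^ (k+1)).mulVec ![(i k : ℝ), (j k : ℝ)] 1
        = cseq p q a (k+1) * (i k : ℝ) + Radix.digitVal q j k := by
    intro i j k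
    rw [matB_inv_pow hp hq, mulVec_tri]
    rw [Matrix.cons_val_one, Matrix.cons_val_zero]
    unfold Radix.digitVal
    ring
  constructor
  · rintro ⟨d, hd, hsum⟩
    choose i j h1 h2 h3 h4 h5 using hd
    have hde : d = fun k => ![(i k : ℝ), (j k : ℝ)] := funext h5
    rw [hde] at hsum
    refine ⟨i, j, fun k => ⟨h1 k, h2 k⟩, fun k => ⟨h3 k, h4 k⟩, ?_, ?_⟩
    · have h0 := Pi.hasSum.1 hsum 0
      have he : (fun k => ((matB p q a)⁻¹ ^ (k+1)).mulVec ![(i k : ℝ), (j k : ℝ)] 0)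
          = Radix.digitVal p i := funext (comp0 i j)
      rwa [he] at h0
    · have h0 := Pi.hasSum.1 hsum 1
      have he : (fun k => ((matB p q a)⁻¹ ^ (k+1)).mulVec ![(i k : ℝ), (j k : ℝ)] 1)
          = fun k => cseq p q a (k+1) * (i k : ℝ) + Radix.digitVal q j k := funext (comp1 i j)
      rwa [he] at h0
  · rintro ⟨i, j, hvi, hvj, hs0, hs1⟩
    refine ⟨fun k => ![(i k : ℝ), (j k : ℝ)],
      fun k => ⟨i k, j k, (hvi k).1, (hvi k).2, (hvj k).1, (hvj k).2, rfl⟩, ?_⟩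
    apply hasSum_pi_two
    · have he : (fun k => ((matB p q a)⁻¹ ^ (k+1)).mulVec ![(i k : ℝ), (j k : ℝ)] 0)
          = Radix.digitVal p i := funext (comp0 i j)
      rw [he]; exact hs0
    · have he : (fun k => ((matB p q a)⁻¹ ^ (k+1)).mulVec ![(i k : ℝ), (j k : ℝ)] 1)
          = fun k => cseq p q a (k+1) * (i k : ℝ) + Radix.digitVal q j k := funext (comp1 i j)
      rw [he]; exact hs1


def Jset : Set (Fin 2 → ℝ) := {v | ∃ k l : ℤ, v = ![(k:ℝ), (l:ℝ)]}

omit hp hq in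
lemma discrete_J : DiscreteTopology (Jset : Set (Fin 2 → ℝ)) := by
  rw [discreteTopology_subtype_iff]
  intro x hx
  rw [Filter.inf_principal_eq_bot, mem_nhdsWithin]
  refine ⟨Metric.ball x (1/2), Metric.isOpen_ball, Metric.mem_ball_self (by norm_num), ?_⟩
  rintro y ⟨hyb, hy⟩
  simp only [Set.mem_compl_iff]
  intro hyJ
  obtain ⟨k, l, rfl⟩ := hx
  obtain ⟨k', l', rfl⟩ := hyJ
  have hyne : ¬ (k' = k ∧ l' = l) := by
    rintro ⟨rfl, rfl⟩
    exact hy rfl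
  have hdist : dist (![(k':ℝ), (l':ℝ)] : Fin 2 → ℝ) ![(k:ℝ), (l:ℝ)] < 1/2 :=
    Metric.mem_ball.1 hyb
  have hcoord : ∀ (c : Fin 2), dist ((![(k':ℝ), (l':ℝ)] : Fin 2 → ℝ) c) ((![(k:ℝ), (l:ℝ)] : Fin 2 → ℝ) c) < 1/2 :=
    fun c => lt_of_le_of_lt (dist_le_pi_dist _ _ c) hdist
  have h0 := hcoord 0
  have h1 := hcoord 1
  simp only [Matrix.cons_val_zero, Matrix.cons_val_one, Matrix.head_cons, Real.dist_eq] at h0 h1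
  have hint : ∀ m m' : ℤ, m ≠ m' → (1:ℝ) ≤ |(m:ℝ) - (m':ℝ)| := by
    intro m m' hmm
    have : (1:ℤ) ≤ |m - m'| := Int.one_le_abs (by omega)
    calc (1:ℝ) ≤ ((|m - m'| : ℤ) : ℝ) := by exact_mod_cast this
      _ = |(m:ℝ) - (m':ℝ)| := by push_cast [Int.cast_abs]; ring_nf
  rcases Classical.em (k' = k) with hk | hk
  · have hl : l' ≠ l := fun h => hyne ⟨hk, h⟩
    have := hint l' l hl
    linarith
  · have := hint k' k hk
    linarith

include hp hq

lemma covering :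
    (⋃ t ∈ Jset, (fun x => x + t) '' (selfAffineSet (matB p q a) (digitSet |p| |q|)))
      = Set.univ := by
  apply Set.eq_univ_of_forall
  intro x
  rw [Set.mem_iUnion₂]
  set k := ⌊x 0 - Radix.alpha p⌋ with hkdef
  have hx0 : x 0 - (k:ℝ) ∈ Set.Icc (Radix.alpha p) (Radix.alpha p + 1) := by
    rw [Set.mem_Icc]
    constructor
    · have := Int.floor_le (x 0 - Radix.alpha p); rw [hkdef]; linarith
    · have := Int.lt_floor_add_one (x 0 - Radix.alpha p); rw [hkdef]; linarith
  obtain ⟨i, hvi, hsi⟩ := Radix.exists_rep hp hx0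
  set S := ∑' n, cseq p q a (n+1) * (i n : ℝ) with hSdef
  have hsc : HasSum (fun n => cseq p q a (n+1) * (i n : ℝ)) S :=
    (summable_cseq_mul hp hq i hvi).hasSum
  set l := ⌊x 1 - S - Radix.alpha q⌋ with hldef
  have hz : x 1 - S - (l:ℝ) ∈ Set.Icc (Radix.alpha q) (Radix.alpha q + 1) := by
    rw [Set.mem_Icc]
    constructor
    · have := Int.floor_le (x 1 - S - Radix.alpha q); rw [hldef]; linarith
    · have := Int.lt_floor_add_one (x 1 - S - Radix.alpha q); rw [hldef]; linarith
  obtain ⟨j, hvj, hsj⟩ := Radix.exists_rep hq hz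
  refine ⟨![(k:ℝ), (l:ℝ)], ⟨k, l, rfl⟩, x - ![(k:ℝ), (l:ℝ)], ?_, sub_add_cancel x _⟩
  rw [mem_T_iff hp hq]
  refine ⟨i, j, hvi, hvj, ?_, ?_⟩
  · have he : (x - ![(k:ℝ), (l:ℝ)]) 0 = x 0 - (k:ℝ) := by
      simp [Pi.sub_apply]
    rw [he]; exact hsi
  · have he : (x - ![(k:ℝ), (l:ℝ)]) 1 = x 1 - (l:ℝ) := by
      simp [Pi.sub_apply]
    rw [he]
    have hadd := hsc.add hsj
    have : S + (x 1 - S - (l:ℝ)) = x 1 - (l:ℝ) := by ring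
    rwa [this] at hadd

lemma disjoint_interiors (s t : Fin 2 → ℝ) (hs : s ∈ Jset) (ht : t ∈ Jset) (hst : s ≠ t) :
    ((fun x => x + s) '' interior (selfAffineSet (matB p q a) (digitSet |p| |q|))) ∩
      ((fun x => x + t) '' interior (selfAffineSet (matB p q a) (digitSet |p| |q|))) = ∅ := by
  set T := selfAffineSet (matB p q a) (digitSet |p| |q|) with hTdef
  obtain ⟨k, l, rfl⟩ := hs
  obtain ⟨k', l', rfl⟩ := ht
  by_contra hne
  obtain ⟨v, hv⟩ := Set.nonempty_iff_ne_empty.2 hne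
  set U := ((fun x => x + ![(k:ℝ), (l:ℝ)]) '' interior T) ∩
    ((fun x => x + ![(k':ℝ), (l':ℝ)]) '' interior T) with hUdef
  have hUopen : IsOpen U :=
    IsOpen.inter (isOpenMap_add_right _ _ isOpen_interior) (isOpenMap_add_right _ _ isOpen_interior)
  obtain ⟨ε, hε, hball⟩ := Metric.isOpen_iff.1 hUopen v hv
  have hmem : ∀ u ∈ U, (u - ![(k:ℝ), (l:ℝ)]) ∈ T ∧ (u - ![(k':ℝ), (l':ℝ)]) ∈ T := by
    rintro u ⟨⟨w, hw, hwe⟩, ⟨w', hw', hwe'⟩⟩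
    constructor
    · rw [← eq_sub_of_add_eq hwe]
      exact interior_subset hw
    · rw [← eq_sub_of_add_eq hwe']
      exact interior_subset hw'
  have hcoord0 : ∀ (u : Fin 2 → ℝ) (m m' : ℤ), (u - ![(m:ℝ), (m':ℝ)]) 0 = u 0 - (m:ℝ) := by
    intro u m m'; simp [Pi.sub_apply]
  have hcoord1 : ∀ (u : Fin 2 → ℝ) (m m' : ℤ), (u - ![(m:ℝ), (m':ℝ)]) 1 = u 1 - (m':ℝ) := by
    intro u m m'; simp [Pi.sub_apply]
  have hIcc0 : ∀ (u : Fin 2 → ℝ) (m m' : ℤ), (u - ![(m:ℝ), (m':ℝ)]) ∈ T →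
      u 0 - (m:ℝ) ∈ Set.Icc (Radix.alpha p) (Radix.alpha p + 1) := by
    intro u m m' hu
    rw [mem_T_iff hp hq] at hu
    obtain ⟨i, j, hvi, hvj, hs0, hs1⟩ := hu
    rw [hcoord0 u m m'] at hs0
    have := Radix.mem_Icc_of_hasSum hp hvi hs0
    rw [Set.mem_Icc]
    exact this
  -- auxiliary: build a point of U by perturbation
  have hballmem : ∀ (d0 d1 : ℝ), |d0| < ε → |d1| < ε → v + ![d0, d1] ∈ U := by
    intro d0 d1 h0 h1
    apply hball
    rw [Metric.mem_ball]
    rw [dist_pi_lt_iff hε]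
    intro c
    fin_cases c <;>
      simp [Real.dist_eq, h0, h1]
  rcases eq_or_ne k k' with rfl | hkk
  · -- same first translation component: l ≠ l'
    have hll : l ≠ l' := by
      intro h
      exact hst (by rw [h])
    -- unique representation point near v 0 - k
    have hv0 : v 0 - (k:ℝ) ∈ Set.Icc (Radix.alpha p) (Radix.alpha p + 1) :=
      hIcc0 v k l ((hmem v hv).1)
    obtain ⟨y, d, hvd, hds, hclose, huniq⟩ := Radix.exists_unique_rep_near hp hv0 hε
    set S := ∑' n, cseq p q a (n+1) * (d n : ℝ) with hSdef
    have hSsum : HasSum (fun n => cseq p q a (n+1) * (d n : ℝ)) S :=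
      (summable_cseq_mul hp hq d hvd).hasSum
    have key : ∀ (u : Fin 2 → ℝ) (ll : ℤ), u 0 = y + (k:ℝ) →
        (u - ![(k:ℝ), (ll:ℝ)]) ∈ T →
        u 1 - (ll:ℝ) - S ∈ Set.Icc (Radix.alpha q) (Radix.alpha q + 1) := by
      intro u ll hu0 humem
      rw [mem_T_iff hp hq] at humem
      obtain ⟨i, j, hvi, hvj, hs0, hs1⟩ := humem
      rw [hcoord0 u k ll, hu0] at hs0
      have hy : y + (k:ℝ) - (k:ℝ) = y := by ring
      rw [hy] at hs0
      have hid : i = d := huniq i hvi hs0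
      subst hid
      rw [hcoord1 u k ll] at hs1
      have hj : HasSum (Radix.digitVal q j) (u 1 - (ll:ℝ) - S) := by
        have hsub := hs1.sub hSsum
        have he : (fun n => cseq p q a (n+1) * (i n : ℝ) + Radix.digitVal q j n
            - cseq p q a (n+1) * (i n : ℝ)) = Radix.digitVal q j := by
          funext n; ring
        rwa [he] at hsub
      have := Radix.mem_Icc_of_hasSum hq hvj hj
      rw [Set.mem_Icc]
      exact this
    -- two probe points
    have hP : v + ![y - (v 0 - (k:ℝ)), 0] ∈ U := by
      apply hballmem
      · exact hclose
      · rw [abs_zero]; exact hε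
    have hP' : v + ![y - (v 0 - (k:ℝ)), ε/2] ∈ U := by
      apply hballmem
      · exact hclose
      · rw [abs_of_pos (by linarith)]; linarith
    have hP0 : (v + ![y - (v 0 - (k:ℝ)), 0]) 0 = y + (k:ℝ) := by
      simp [Pi.add_apply]; ring
    have hP'0 : (v + ![y - (v 0 - (k:ℝ)), ε/2]) 0 = y + (k:ℝ) := by
      simp [Pi.add_apply]; ring
    have hP1 : (v + ![y - (v 0 - (k:ℝ)), 0]) 1 = v 1 := by
      simp [Pi.add_apply]
    have hP'1 : (v + ![y - (v 0 - (k:ℝ)), ε/2]) 1 = v 1 + ε/2 := by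
      simp [Pi.add_apply]
    have m1 := key _ l hP0 ((hmem _ hP).1)
    have m2 := key _ l' hP0 ((hmem _ hP).2)
    have m3 := key _ l hP'0 ((hmem _ hP').1)
    have m4 := key _ l' hP'0 ((hmem _ hP').2)
    rw [hP1, Set.mem_Icc] at m1 m2
    rw [hP'1, Set.mem_Icc] at m3 m4
    -- derive contradiction
    have hb1 : (-1:ℝ) ≤ (l:ℝ) - (l':ℝ) := by linarith [m1.2, m2.1]
    have hb2 : (l:ℝ) - (l':ℝ) ≤ 1 := by linarith [m1.1, m2.2]
    have hz1 : (-1:ℤ) ≤ l - l' := by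
      have h' : ((-1:ℤ):ℝ) ≤ ((l - l' : ℤ):ℝ) := by push_cast; linarith
      exact_mod_cast h'
    have hz2 : l - l' ≤ 1 := by
      have h' : ((l - l' : ℤ):ℝ) ≤ ((1:ℤ):ℝ) := by push_cast; linarith
      exact_mod_cast h'
    have hcases : l - l' = 1 ∨ l - l' = -1 := by omega
    rcases hcases with hc | hc
    · have hcR : (l:ℝ) = (l':ℝ) + 1 := by
        rw [show l = l' + 1 by omega]; push_cast; ring
      linarith [m1.1, m2.2, m4.2, hε]
    · have hcR : (l':ℝ) = (l:ℝ) + 1 := by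
        rw [show l' = l + 1 by omega]; push_cast; ring
      linarith [m2.1, m3.2, m1.2, hε]
  · -- k ≠ k' : first coordinates pinned
    have pin : ∀ u ∈ U, u 0 = Radix.alpha p + 1 + (((min k k' : ℤ)) : ℝ) := by
      intro u hu
      have h1 := hIcc0 u k l ((hmem u hu).1)
      have h2 := hIcc0 u k' l' ((hmem u hu).2)
      rw [Set.mem_Icc] at h1 h2
      rcases lt_or_gt_of_ne hkk with hlt | hgt
      · have hcast : (k:ℝ) + 1 ≤ (k':ℝ) := by exact_mod_cast by omega
        have hmin : (min k k' : ℤ) = k := min_eq_left hlt.le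
        rw [hmin]
        linarith [h1.1, h1.2, h2.1, h2.2]
      · have hcast : (k':ℝ) + 1 ≤ (k:ℝ) := by exact_mod_cast by omega
        have hmin : (min k k' : ℤ) = k' := min_eq_right hgt.le
        rw [hmin]
        linarith [h1.1, h1.2, h2.1, h2.2]
    have hP : v + ![ε/2, 0] ∈ U := by
      apply hballmem
      · rw [abs_of_pos (by linarith)]; linarith
      · rw [abs_zero]; exact hε
    have e1 := pin v hv
    have e2 := pin _ hP
    have : (v + ![ε/2, 0]) 0 = v 0 + ε/2 := by simp [Pi.add_apply]
    rw [this] at e2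
    linarith


end SAT

theorem stmt_15 (p q : ℤ) (a : ℝ) (hp : 2 ≤ |p|) (hq : 2 ≤ |q|) :
    IsTile (selfAffineSet (matB p q a) (digitSet |p| |q|)) := by
  exact ⟨SAT.Jset, SAT.discrete_J, SAT.covering hp hq,
    fun s hs t ht hst => SAT.disjoint_interiors hp hq s t hs ht hst⟩
end

section
/- Let p, q, m, n be integers with |p| ≥ 2, |q| ≥ 2, m, n ≥ 1, mn = |pq|, and m > |p|, and let a = 0. Then the self-affine set T(A, D) is not a tile of ℝ²: there is no discrete set J ⊆ ℝ² such that ⋃_{t ∈ J} (T + t) = ℝ² and (T° + t) ∩ (T° + s) = ∅ for all distinct s, t ∈ J, where T° denotes the interior of T. -/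
open Matrix

section Aux

open MeasureTheory Filter
open scoped ENNReal

/-- The set of sums `∑ q^{-(k+1)} c_k` with integer digits `0 ≤ c_k ≤ n-1` is Lebesgue-null
whenever `n < |q|`. -/
lemma aux_Ynull (q n : ℤ) (hq : 2 ≤ |q|) (hn : 1 ≤ n) (hnq : n < |q|) :
    volume {y : ℝ | ∃ c : ℕ → ℤ, (∀ k, 0 ≤ c k ∧ c k ≤ n - 1) ∧
      HasSum (fun k => ((q:ℝ)⁻¹)^(k+1) * (c k : ℝ)) y} = 0 := by
  set Y := {y : ℝ | ∃ c : ℕ → ℤ, (∀ k, 0 ≤ c k ∧ c k ≤ n - 1) ∧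
      HasSum (fun k => ((q:ℝ)⁻¹)^(k+1) * (c k : ℝ)) y} with hY
  set N := n.toNat with hNdef
  have hNn : (N : ℤ) = n := Int.toNat_of_nonneg (by omega)
  have hb2 : (2:ℝ) ≤ |(q:ℝ)| := by
    have : ((|q| : ℤ) : ℝ) = |(q:ℝ)| := by push_cast; rfl
    rw [← this]; exact_mod_cast hq
  have hbpos : (0:ℝ) < |(q:ℝ)| := by linarith
  have hbinv : |(q:ℝ)|⁻¹ ≤ (2:ℝ)⁻¹ := by
    rw [inv_le_inv₀ hbpos (by norm_num)]; linarith
  have hbinvpos : (0:ℝ) ≤ |(q:ℝ)|⁻¹ := by positivity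
  set C1 : ℝ := (n:ℝ) - 1 with hC1
  have hC1nn : 0 ≤ C1 := by
    have : (1:ℝ) ≤ (n:ℝ) := by exact_mod_cast hn
    simp [hC1]; linarith
  -- covering step for each K
  have key : ∀ K : ℕ, volume Y ≤
      ENNReal.ofReal (2 * (C1 * ((N:ℝ) * |(q:ℝ)|⁻¹)^K)) := by
    intro K
    set r : ℝ := C1 * |(q:ℝ)|⁻¹ ^ K with hr
    have hrnn : 0 ≤ r := by positivity
    set ctr : (Fin K → Fin N) → ℝ :=
      fun σ => ∑ k : Fin K, ((q:ℝ)⁻¹)^((k:ℕ)+1) * ((σ k : ℕ) : ℝ) with hctr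
    have hcover : Y ⊆ ⋃ σ : Fin K → Fin N, Metric.closedBall (ctr σ) r := by
      rintro y ⟨c, hc, hsum⟩
      have hcN : ∀ k, (c k).toNat < N := by
        intro k; have := (hc k).1; have := (hc k).2; omega
      set σ : Fin K → Fin N := fun k => ⟨(c (k:ℕ)).toNat, hcN _⟩ with hσ
      set s : ℝ := ∑ k ∈ Finset.range K, ((q:ℝ)⁻¹)^(k+1) * (c k : ℝ) with hs
      have hctrσ : ctr σ = s := by
        rw [hctr, hs, ← Fin.sum_univ_eq_sum_range (fun k => ((q:ℝ)⁻¹)^(k+1) * (c k : ℝ)) K]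
        refine Finset.sum_congr rfl fun k _ => ?_
        congr 1
        rw [hσ]
        simp only
        rw [← Int.cast_natCast, Int.toNat_of_nonneg (hc (k:ℕ)).1]
      -- tail bound
      have h2 : HasSum (fun k => ((q:ℝ)⁻¹)^(k+K+1) * (c (k+K) : ℝ)) (y - s) := by
        refine (hasSum_nat_add_iff (f := fun k => ((q:ℝ)⁻¹)^(k+1) * (c k : ℝ)) K).mpr ?_
        rw [← hs, sub_add_cancel]
        exact hsum
      set g : ℕ → ℝ := fun k => r / 2 / 2 ^ k with hg
      have hgsum : HasSum g r := hasSum_geometric_two' r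
      have hbound : ∀ k, ‖((q:ℝ)⁻¹)^(k+K+1) * (c (k+K) : ℝ)‖ ≤ g k := by
        intro k
        have h1 : ‖((q:ℝ)⁻¹)^(k+K+1) * (c (k+K) : ℝ)‖
            = |(q:ℝ)|⁻¹^(k+K+1) * |(c (k+K) : ℝ)| := by
          rw [norm_mul, norm_pow, norm_inv]; rfl
        have hck : |(c (k+K) : ℝ)| ≤ C1 := by
          rw [abs_le]; constructor
          · have : (0:ℝ) ≤ (c (k+K) : ℝ) := by exact_mod_cast (hc _).1
            linarith
          · have : ((c (k+K) : ℤ) : ℝ) ≤ ((n - 1 : ℤ) : ℝ) := by exact_mod_cast (hc _).2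
            push_cast at this; simpa [hC1] using this
        rw [h1, hg]
        have e1 : |(q:ℝ)|⁻¹^(k+K+1) = |(q:ℝ)|⁻¹^K * (|(q:ℝ)|⁻¹^k * |(q:ℝ)|⁻¹) := by ring
        have e2 : |(q:ℝ)|⁻¹^k ≤ ((2:ℝ)⁻¹)^k := pow_le_pow_left₀ hbinvpos hbinv k
        have habs : 0 ≤ |(c (k+K) : ℝ)| := abs_nonneg _
        calc |(q:ℝ)|⁻¹^(k+K+1) * |(c (k+K) : ℝ)|
            ≤ |(q:ℝ)|⁻¹^(k+K+1) * C1 := by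
              apply mul_le_mul_of_nonneg_left hck (by positivity)
          _ = C1 * |(q:ℝ)|⁻¹^K * (|(q:ℝ)|⁻¹^k * |(q:ℝ)|⁻¹) := by rw [e1]; ring
          _ ≤ C1 * |(q:ℝ)|⁻¹^K * (((2:ℝ)⁻¹)^k * (2:ℝ)⁻¹) := by
              apply mul_le_mul_of_nonneg_left _ (by positivity)
              apply mul_le_mul e2 hbinv hbinvpos (by positivity)
          _ = r / 2 / 2 ^ k := by rw [hr, inv_pow]; ring_nf; simp only [one_div]
      have hsabs : Summable (fun k => ‖((q:ℝ)⁻¹)^(k+K+1) * (c (k+K) : ℝ)‖) :=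
        Summable.of_nonneg_of_le (fun k => norm_nonneg _) hbound hgsum.summable
      have hyball : |y - s| ≤ r := by
        rw [← h2.tsum_eq]
        calc |∑' k, ((q:ℝ)⁻¹)^(k+K+1) * (c (k+K) : ℝ)|
            ≤ ∑' k, ‖((q:ℝ)⁻¹)^(k+K+1) * (c (k+K) : ℝ)‖ := norm_tsum_le_tsum_norm hsabs
          _ ≤ ∑' k, g k := Summable.tsum_le_tsum hbound hsabs hgsum.summable
          _ = r := hgsum.tsum_eq
      exact Set.mem_iUnion.2 ⟨σ, by
        rw [Metric.mem_closedBall, Real.dist_eq, hctrσ]; exact hyball⟩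
    calc volume Y ≤ volume (⋃ σ : Fin K → Fin N, Metric.closedBall (ctr σ) r) :=
          measure_mono hcover
      _ ≤ ∑' σ : Fin K → Fin N, volume (Metric.closedBall (ctr σ) r) := measure_iUnion_le _
      _ = ∑' _ : Fin K → Fin N, ENNReal.ofReal (2 * r) := by
          simp [Real.volume_closedBall]
      _ = (Fintype.card (Fin K → Fin N)) * ENNReal.ofReal (2 * r) := by
          rw [tsum_fintype]; simp [Finset.sum_const, nsmul_eq_mul]
      _ = ((N : ℝ≥0∞))^K * ENNReal.ofReal (2 * r) := by
          simp [Fintype.card_fun]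
      _ = ENNReal.ofReal (2 * (C1 * ((N:ℝ) * |(q:ℝ)|⁻¹)^K)) := by
          rw [← Nat.cast_pow, ← ENNReal.ofReal_natCast (N^K), ← ENNReal.ofReal_mul (by positivity)]
          congr 1
          push_cast
          rw [hr, mul_pow]
          ring
  -- limit step
  have hx1 : (N:ℝ) * |(q:ℝ)|⁻¹ < 1 := by
    rw [mul_inv_lt_iff₀ hbpos, one_mul]
    calc (N:ℝ) = ((N:ℤ):ℝ) := by push_cast; ring
      _ < ((|q|:ℤ):ℝ) := by exact_mod_cast (hNn ▸ hnq)
      _ = |(q:ℝ)| := by push_cast; rfl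
  have hx0 : 0 ≤ (N:ℝ) * |(q:ℝ)|⁻¹ := by positivity
  have htend : Tendsto (fun K : ℕ => ENNReal.ofReal (2 * (C1 * ((N:ℝ) * |(q:ℝ)|⁻¹)^K)))
      atTop (nhds 0) := by
    have h0 := (tendsto_pow_atTop_nhds_zero_of_lt_one hx0 hx1).const_mul (2 * C1)
    rw [mul_zero] at h0
    have h1 : Tendsto (fun K : ℕ => 2 * (C1 * ((N:ℝ) * |(q:ℝ)|⁻¹)^K)) atTop (nhds 0) := by
      simpa [mul_assoc] using h0
    simpa using (ENNReal.tendsto_ofReal h1)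
  exact nonpos_iff_eq_zero.mp (ge_of_tendsto' htend key)

lemma aux_matB_inv (p q : ℤ) (hp : (p:ℝ) ≠ 0) (hq : (q:ℝ) ≠ 0) :
    (matB p q 0)⁻¹ = Matrix.diagonal ![(p:ℝ)⁻¹, (q:ℝ)⁻¹] := by
  apply inv_eq_right_inv
  ext i j
  rw [Matrix.mul_diagonal]
  fin_cases i <;> fin_cases j <;>
    simp [matB, Matrix.one_apply, mul_inv_cancel₀, hp, hq]

lemma aux_proj_mem (p q m n : ℤ) (hp : (p:ℝ) ≠ 0) (hq : (q:ℝ) ≠ 0)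
    (x : Fin 2 → ℝ) (hx : x ∈ selfAffineSet (matB p q 0) (digitSet m n)) :
    ∃ c : ℕ → ℤ, (∀ k, 0 ≤ c k ∧ c k ≤ n - 1) ∧
      HasSum (fun k => ((q:ℝ)⁻¹)^(k+1) * (c k : ℝ)) (x 1) := by
  obtain ⟨d, hd, hsum⟩ := hx
  choose i j hi0 hi1 hj0 hj1 hv using hd
  refine ⟨j, fun k => ⟨hj0 k, hj1 k⟩, ?_⟩
  have h1 := (Pi.hasSum.mp hsum) 1
  have key : ∀ k, (((matB p q 0)⁻¹ ^ (k + 1)).mulVec (d k)) 1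
      = ((q:ℝ)⁻¹)^(k+1) * (j k : ℝ) := by
    intro k
    rw [aux_matB_inv p q hp hq, Matrix.diagonal_pow, Matrix.mulVec_diagonal]
    have : d k 1 = (j k : ℝ) := by rw [hv k]; simp
    rw [this]
    congr 1
  simpa only [key] using h1

end Aux

theorem stmt_16 (p q m n : ℤ) (hp : 2 ≤ |p|) (hq : 2 ≤ |q|)
    (hm : 1 ≤ m) (hn : 1 ≤ n) (hmn : m * n = |p * q|) (hmp : |p| < m) :
    ¬ IsTile (selfAffineSet (matB p q 0) (digitSet m n)) := by
  classical
  open MeasureTheory in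
  rintro ⟨J, hJd, hcov, -⟩
  have hp0 : (p:ℝ) ≠ 0 := by
    have : p ≠ 0 := by intro h; rw [h] at hp; simp at hp
    exact_mod_cast this
  have hq0 : (q:ℝ) ≠ 0 := by
    have : q ≠ 0 := by intro h; rw [h] at hq; simp at hq
    exact_mod_cast this
  -- n < |q|
  have hnq : n < |q| := by
    have habs : m * n = |p| * |q| := by rw [hmn, abs_mul]
    nlinarith [abs_nonneg p, abs_nonneg q]
  -- the null vertical-fiber set
  set Y := {y : ℝ | ∃ c : ℕ → ℤ, (∀ k, 0 ≤ c k ∧ c k ≤ n - 1) ∧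
      HasSum (fun k => ((q:ℝ)⁻¹)^(k+1) * (c k : ℝ)) y} with hYdef
  have hY0 : volume Y = 0 := aux_Ynull q n hq hn hnq
  set Y' := toMeasurable volume Y with hY'def
  have hY'0 : volume Y' = 0 := by rw [measure_toMeasurable]; exact hY0
  set S : Set (Fin 2 → ℝ) := Set.pi Set.univ ![Set.univ, Y'] with hSdef
  have hTS : selfAffineSet (matB p q 0) (digitSet m n) ⊆ S := by
    intro x hx
    obtain ⟨c, hc, hcs⟩ := aux_proj_mem p q m n hp0 hq0 x hx
    rw [hSdef, Set.mem_univ_pi]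
    intro i
    fin_cases i
    · simp
    · simpa using subset_toMeasurable volume Y ⟨c, hc, hcs⟩
  have hS0 : volume S = 0 := by
    rw [hSdef, volume_pi_pi, Fin.prod_univ_two]
    simp [hY'0]
  -- translates of S are null
  have htrans : ∀ t : Fin 2 → ℝ, volume ((fun x => x + t) '' S) = 0 := by
    intro t
    have himg : (fun x => x + t) '' S = (fun x => x + (-t)) ⁻¹' S := by
      ext y
      simp only [Set.mem_image, Set.mem_preimage]
      constructor
      · rintro ⟨x, hx, rfl⟩; simpa using hx
      · intro h; exact ⟨y + (-t), h, by abel⟩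
    rw [himg, measure_preimage_add_right]
    exact hS0
  -- J is countable
  have hJc : J.Countable := by
    have hL : IsLindelof J :=
      (HereditarilyLindelofSpace.isHereditarilyLindelof_univ (X := Fin 2 → ℝ))
        J (Set.subset_univ J)
    exact hL.countable hJd
  -- the union is null
  have hucov : volume (⋃ t ∈ J, (fun x => x + t) ''
      (selfAffineSet (matB p q 0) (digitSet m n))) = 0 := by
    rw [measure_biUnion_null_iff hJc]
    intro t _
    refine measure_mono_null ?_ (htrans t)
    exact Set.image_mono hTS
  rw [hcov] at hucov
  -- but the whole space is not null
  have hcube : volume (Set.pi Set.univ (fun _ : Fin 2 => Set.Icc (0:ℝ) 1)) = 1 := by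
    rw [volume_pi_pi]
    simp [Real.volume_Icc]
  have : (1:ENNReal) ≤ 0 := by
    rw [← hucov, ← hcube]
    exact measure_mono (Set.subset_univ _)
  simp at this
end

section
/- Let p, q, m, n be integers with |p| ≥ 2, |q| ≥ 2, m, n ≥ 1, mn = |pq|, and m < |p| (so n > |q|), and let a ∈ ℝ. Then the map from D × D to ℝ² sending (d₀, d₁) to d₀ + A d₁ is not injective; that is, there exist pairs (d₀, d₁) ≠ (d₀′, d₁′) with d₀, d₁, d₀′, d₁′ ∈ D and d₀ + A d₁ = d₀′ + A d₁′. In particular the digit expansion set D_{A,2} = { d₀ + A d₁ : d₀, d₁ ∈ D } has fewer than (mn)² elements. -/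
open Matrix

lemma ncard_prod' {α β : Type*} (s : Set α) (t : Set β) :
    (s ×ˢ t).ncard = s.ncard * t.ncard := by
  rw [← Nat.card_coe_set_eq, ← Nat.card_coe_set_eq, ← Nat.card_coe_set_eq,
    ← Nat.card_prod]
  exact Nat.card_congr (Equiv.Set.prod s t)

lemma mulVec_matB (p q : ℤ) (a : ℝ) (x y : ℝ) :
    (matB p q a).mulVec ![x, y] = ![(p : ℝ) * x, a * x + (q : ℝ) * y] := by
  funext i
  fin_cases i <;>
    simp [matB, Matrix.mulVec, dotProduct, Fin.sum_univ_two]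

theorem stmt_18 (p q m n : ℤ) (a : ℝ) (hp : 2 ≤ |p|) (hq : 2 ≤ |q|)
    (hm : 1 ≤ m) (hn : 1 ≤ n) (hmn : m * n = |p * q|) (hmp : m < |p|) :
    (∃ d₀ d₁ d₀' d₁' : Fin 2 → ℝ,
      d₀ ∈ digitSet m n ∧ d₁ ∈ digitSet m n ∧
      d₀' ∈ digitSet m n ∧ d₁' ∈ digitSet m n ∧
      (d₀, d₁) ≠ (d₀', d₁') ∧
      d₀ + (matB p q a).mulVec d₁ = d₀' + (matB p q a).mulVec d₁') ∧
    {x : Fin 2 → ℝ | ∃ d₀ ∈ digitSet m n, ∃ d₁ ∈ digitSet m n,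
        x = d₀ + (matB p q a).mulVec d₁}.ncard < (m * n).toNat ^ 2 := by
  have hpq : m * n = |p| * |q| := by rw [hmn, abs_mul]
  have hqn : |q| ≤ n - 1 := by nlinarith [abs_nonneg p, abs_nonneg q]
  -- the collision digits for the second coordinate
  set e0 : ℤ := if 0 < q then 0 else 1 with he0
  set e1 : ℤ := if 0 < q then 1 else 0 with he1
  have he0r : (0:ℤ) ≤ e0 ∧ e0 ≤ n - 1 := by
    constructor <;> rw [he0] <;> split <;> omega
  have he1r : (0:ℤ) ≤ e1 ∧ e1 ≤ n - 1 := by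
    constructor <;> rw [he1] <;> split <;> omega
  have hkey : (|q| : ℤ) + q * e0 = q * e1 := by
    rw [he0, he1]
    split_ifs with h
    · rw [abs_of_pos h]; ring
    · rw [abs_of_nonpos (by omega)]; ring
  have hcastR : |(q : ℝ)| + (q : ℝ) * (e0 : ℝ) = (q : ℝ) * (e1 : ℝ) := by
    exact_mod_cast hkey
  -- membership helper
  have hmem : ∀ i j : ℤ, 0 ≤ i → i ≤ m - 1 → 0 ≤ j → j ≤ n - 1 →
      (![(i : ℝ), (j : ℝ)] : Fin 2 → ℝ) ∈ digitSet m n := by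
    intro i j h1 h2 h3 h4; exact ⟨i, j, h1, h2, h3, h4, rfl⟩
  set B := matB p q a with hB
  constructor
  · refine ⟨![((0:ℤ) : ℝ), ((|q| : ℤ) : ℝ)], ![((0:ℤ) : ℝ), (e0 : ℝ)],
      ![((0:ℤ) : ℝ), ((0:ℤ) : ℝ)], ![((0:ℤ) : ℝ), (e1 : ℝ)],
      hmem 0 |q| le_rfl (by omega) (abs_nonneg q) hqn,
      hmem 0 e0 le_rfl (by omega) he0r.1 he0r.2,
      hmem 0 0 le_rfl (by omega) le_rfl (by omega),
      hmem 0 e1 le_rfl (by omega) he1r.1 he1r.2, ?_, ?_⟩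
    · intro h
      have h1 := congrFun (congrArg Prod.fst h) 1
      simp at h1
      have hq0 : q = 0 := by exact_mod_cast h1
      rw [hq0] at hq
      simp at hq
    · rw [hB, mulVec_matB, mulVec_matB]
      funext i
      fin_cases i <;> simp <;> linarith [hcastR]
  · -- cardinality bound
    set I : Set ℤ := Set.Icc 0 (m - 1) with hI
    set J : Set ℤ := Set.Icc 0 (n - 1) with hJ
    set P : Set ((ℤ × ℤ) × ℤ × ℤ) := (I ×ˢ J) ×ˢ (I ×ˢ J) with hP
    have hPfin : P.Finite := by
      apply Set.Finite.prod <;> exact Set.Finite.prod (Set.finite_Icc _ _) (Set.finite_Icc _ _)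
    set g : (ℤ × ℤ) × ℤ × ℤ → (Fin 2 → ℝ) := fun w =>
      ![(w.1.1 : ℝ), (w.1.2 : ℝ)] + B.mulVec ![(w.2.1 : ℝ), (w.2.2 : ℝ)] with hg
    set bad : (ℤ × ℤ) × ℤ × ℤ := ((0, |q|), (0, e0)) with hbad
    set good : (ℤ × ℤ) × ℤ × ℤ := ((0, 0), (0, e1)) with hgood
    have hbadP : bad ∈ P := by
      rw [hbad, hP]
      exact ⟨⟨Set.mem_Icc.mpr ⟨le_rfl, show (0:ℤ) ≤ m - 1 by omega⟩,
          Set.mem_Icc.mpr ⟨abs_nonneg q, hqn⟩⟩,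
        Set.mem_Icc.mpr ⟨le_rfl, show (0:ℤ) ≤ m - 1 by omega⟩, Set.mem_Icc.mpr he0r⟩
    have hgoodP : good ∈ P := by
      rw [hgood, hP]
      exact ⟨⟨Set.mem_Icc.mpr ⟨le_rfl, show (0:ℤ) ≤ m - 1 by omega⟩,
          Set.mem_Icc.mpr ⟨le_rfl, show (0:ℤ) ≤ n - 1 by omega⟩⟩,
        Set.mem_Icc.mpr ⟨le_rfl, show (0:ℤ) ≤ m - 1 by omega⟩, Set.mem_Icc.mpr he1r⟩
    have hne : good ≠ bad := by
      intro h
      have h2 := congrArg (fun w : (ℤ × ℤ) × ℤ × ℤ => w.1.2) h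
      simp only [hgood, hbad] at h2
      rw [← h2] at hq
      norm_num at hq
    have hval : g good = g bad := by
      rw [hg]
      simp only
      rw [hB, mulVec_matB, mulVec_matB]
      funext i
      fin_cases i <;> simp [hgood, hbad] <;> linarith [hcastR]
    have hsub : {x : Fin 2 → ℝ | ∃ d₀ ∈ digitSet m n, ∃ d₁ ∈ digitSet m n,
        x = d₀ + B.mulVec d₁} ⊆ g '' (P \ {bad}) := by
      rintro x ⟨d₀, ⟨i, j, h1, h2, h3, h4, rfl⟩, d₁, ⟨i', j', h1', h2', h3', h4', rfl⟩, rfl⟩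
      by_cases hb : ((i, j), (i', j')) = bad
      · refine ⟨good, ⟨hgoodP, hne⟩, ?_⟩
        rw [hval, ← hb]
      · refine ⟨((i, j), (i', j')), ⟨?_, hb⟩, rfl⟩
        exact ⟨⟨Set.mem_Icc.mpr ⟨h1, h2⟩, Set.mem_Icc.mpr ⟨h3, h4⟩⟩,
          Set.mem_Icc.mpr ⟨h1', h2'⟩, Set.mem_Icc.mpr ⟨h3', h4'⟩⟩
    have hPcard : P.ncard = (m * n).toNat ^ 2 := by
      have hIc : I.ncard = m.toNat := by
        rw [hI, ← Finset.coe_Icc, Set.ncard_coe_finset, Int.card_Icc]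
        omega
      have hJc : J.ncard = n.toNat := by
        rw [hJ, ← Finset.coe_Icc, Set.ncard_coe_finset, Int.card_Icc]
        omega
      rw [hP, ncard_prod', ncard_prod', hIc, hJc]
      have h1 : (0:ℤ) ≤ m := by omega
      have h2 : (0:ℤ) ≤ n := by omega
      have h3 : ((m * n).toNat : ℤ) = (m.toNat : ℤ) * (n.toNat : ℤ) := by
        rw [Int.toNat_of_nonneg (mul_nonneg h1 h2), Int.toNat_of_nonneg h1,
          Int.toNat_of_nonneg h2]
      have h4 : (m * n).toNat = m.toNat * n.toNat := by exact_mod_cast h3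
      rw [h4]; ring
    calc {x : Fin 2 → ℝ | ∃ d₀ ∈ digitSet m n, ∃ d₁ ∈ digitSet m n,
            x = d₀ + B.mulVec d₁}.ncard
        ≤ (g '' (P \ {bad})).ncard :=
          Set.ncard_le_ncard hsub ((hPfin.diff).image _)
      _ ≤ (P \ {bad}).ncard := Set.ncard_image_le (hPfin.diff)
      _ < P.ncard := Set.ncard_lt_ncard (by
          refine ⟨Set.diff_subset, fun h => ?_⟩
          exact (h hbadP).2 rfl) hPfin
      _ = (m * n).toNat ^ 2 := hPcard
end

section
/- Let p, q, m, n be integers with |p| ≥ 2, |q| ≥ 2, m, n ≥ 1, mn = |pq|, m > |p|, and 2n − 1 ≥ |q|, and let a be a nonzero integer, with A the 2×2 real matrix with rows (p, 0) and (a, q). Then there exists k ≥ 1 and two distinct finite digit sequences (d₀, …, d_k) ≠ (d₀′, …, d_k′) with all d_i, d_i′ ∈ D such that ∑_{i=0}^{k} A^i d_i = ∑_{i=0}^{k} A^i d_i′; in particular #D_{A,k+1} < (mn)^{k+1}. -/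
open Matrix

lemma step' (Q nn z : ℤ) (hQ : 2 ≤ Q) (hnq : Q ≤ 2 * nn - 1) (hz : 2 ≤ z.natAbs) :
    ∃ y0 t : ℤ, -(nn - 1) ≤ y0 ∧ y0 ≤ nn - 1 ∧ 2 * y0 ≤ Q ∧ -Q ≤ 2 * y0 ∧
      z = Q * t + y0 ∧ t.natAbs < z.natAbs := by
  have hdm : Q * (z / Q) + z % Q = z := Int.mul_ediv_add_emod z Q
  have hr0 : 0 ≤ z % Q := Int.emod_nonneg z (by omega)
  have hrlt : z % Q < Q := Int.emod_lt_of_pos z (by omega)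
  by_cases hbr : 2 * (z % Q) ≤ Q
  case pos =>
    refine ⟨z % Q, z / Q, by omega, by omega, by omega, by omega, by omega, ?_⟩
    by_contra hc
    push_neg at hc
    have hA : (Q * (z / Q)).natAbs = Q.natAbs * (z / Q).natAbs := Int.natAbs_mul _ _
    have hB : 2 * (z / Q).natAbs ≤ Q.natAbs * (z / Q).natAbs :=
      Nat.mul_le_mul_right _ (by omega)
    have hB2 : Q.natAbs * 2 ≤ Q.natAbs * (z / Q).natAbs :=
      Nat.mul_le_mul_left _ (by omega)
    omega
  case neg =>
    refine ⟨z % Q - Q, z / Q + 1, by omega, by omega, by omega, by omega, by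
      have : Q * (z / Q + 1) = Q * (z / Q) + Q := by ring
      omega, ?_⟩
    by_contra hc
    push_neg at hc
    have hA : (Q * (z / Q + 1)).natAbs = Q.natAbs * (z / Q + 1).natAbs := Int.natAbs_mul _ _
    have hB : 2 * (z / Q + 1).natAbs ≤ Q.natAbs * (z / Q + 1).natAbs :=
      Nat.mul_le_mul_right _ (by omega)
    have hB2 : Q.natAbs * 2 ≤ Q.natAbs * (z / Q + 1).natAbs :=
      Nat.mul_le_mul_left _ (by omega)
    have h3 : Q * (z / Q + 1) = Q * (z / Q) + Q := by ring
    omega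

lemma radix (q nn : ℤ) (hq : 2 ≤ |q|) (hnq : |q| ≤ 2 * nn - 1) :
    ∀ z : ℤ, ∃ K : ℕ, ∃ y : ℕ → ℤ, (∀ i, |y i| ≤ nn - 1) ∧ (∀ i, K < i → y i = 0) ∧
      ∑ i ∈ Finset.range (K + 1), q ^ i * y i = z := by
  rw [Int.abs_eq_natAbs] at hq hnq
  have hn2 : 2 ≤ nn := by omega
  have main : ∀ N : ℕ, ∀ z : ℤ, z.natAbs ≤ N → ∃ K : ℕ, ∃ y : ℕ → ℤ,
      (∀ i, |y i| ≤ nn - 1) ∧ (∀ i, K < i → y i = 0) ∧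
      ∑ i ∈ Finset.range (K + 1), q ^ i * y i = z := by
    intro N
    induction N using Nat.strong_induction_on with
    | _ N ih =>
      intro z hz
      by_cases hz1 : z.natAbs ≤ 1
      · refine ⟨0, fun i => if i = 0 then z else 0, ?_, ?_, ?_⟩
        · intro i
          dsimp only
          split_ifs with h <;> rw [abs_le] <;> omega
        · intro i hi
          have : i ≠ 0 := by omega
          simp [this]
        · simp
      · obtain ⟨y0, t', h1, h2, h3, h4, h5, h6⟩ :=
          step' (q.natAbs : ℤ) nn z hq hnq (by omega)
        obtain ⟨t, key, keyabs⟩ : ∃ t : ℤ, z = q * t + y0 ∧ t.natAbs = t'.natAbs := by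
          have hsign : q = (q.natAbs : ℤ) ∨ q = -(q.natAbs : ℤ) := by omega
          rcases hsign with h | h
          · exact ⟨t', by rw [h]; exact h5, rfl⟩
          · refine ⟨-t', ?_, by simp⟩
            have h7 : q * (-t') = (q.natAbs : ℤ) * t' := by conv_lhs => rw [h, neg_mul_neg]
            omega
        obtain ⟨K, y, hyb, hy0', hsum⟩ := ih t.natAbs (by omega) t le_rfl
        refine ⟨K + 1, fun i => if i = 0 then y0 else y (i - 1), ?_, ?_, ?_⟩
        · intro i
          dsimp only
          split_ifs with h
          · rw [abs_le]; omega
          · exact hyb _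
        · intro i hi
          have : i ≠ 0 := by omega
          simp only [this, if_false]
          exact hy0' _ (by omega)
        · rw [Finset.sum_range_succ']
          simp only [Nat.add_eq_zero, one_ne_zero, and_false, if_false, Nat.add_sub_cancel,
            reduceIte, pow_zero, one_mul]
          have hmul : ∑ i ∈ Finset.range (K + 1), q ^ (i + 1) * y i
              = q * ∑ i ∈ Finset.range (K + 1), q ^ i * y i := by
            rw [Finset.mul_sum]; congr 1; ext i; ring
          rw [hmul, hsum]
          omega
  intro z; exact main z.natAbs z le_rfl

lemma matB_pow (p q : ℤ) (a : ℝ) : ∀ i : ℕ, ∃ c : ℝ,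
    (matB p q a) ^ i = !![(p:ℝ)^i, 0; c, (q:ℝ)^i] ∧ (i = 0 → c = 0) ∧ (i = 1 → c = a) := by
  intro i
  induction i with
  | zero => exact ⟨0, by simp [Matrix.one_fin_two], fun _ => rfl, by simp⟩
  | succ i ihh =>
    obtain ⟨c, hc, h0, h1⟩ := ihh
    refine ⟨a * (p:ℝ)^i + (q:ℝ) * c, ?_, by simp, ?_⟩
    · rw [pow_succ', hc, matB, Matrix.mul_fin_two]
      congr 1 <;> ring_nf
    · rintro hi
      have : i = 0 := by omega
      subst this
      simp [h0 rfl]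

theorem stmt_19 (p q m n a : ℤ) (hp : 2 ≤ |p|) (hq : 2 ≤ |q|)
    (hm : 1 ≤ m) (hn : 1 ≤ n) (hmn : m * n = |p * q|) (hmp : |p| < m)
    (hnq : |q| ≤ 2 * n - 1) (ha : a ≠ 0) :
    ∃ k : ℕ, 1 ≤ k ∧
      (∃ d d' : ℕ → (Fin 2 → ℝ),
        (∀ i ≤ k, d i ∈ digitSet m n ∧ d' i ∈ digitSet m n) ∧
        (∃ i ≤ k, d i ≠ d' i) ∧
        ∑ i ∈ Finset.range (k + 1), (matB p q (a : ℝ) ^ i).mulVec (d i) =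
          ∑ i ∈ Finset.range (k + 1), (matB p q (a : ℝ) ^ i).mulVec (d' i)) ∧
      {x : Fin 2 → ℝ | ∃ d : ℕ → (Fin 2 → ℝ), (∀ i < k + 1, d i ∈ digitSet m n) ∧
          x = ∑ i ∈ Finset.range (k + 1), (matB p q (a : ℝ) ^ i).mulVec (d i)}.ncard <
        (m * n).toNat ^ (k + 1) := by
  -- basic bounds
  have hpm : |p| ≤ m - 1 := by omega
  have hm3 : 3 ≤ m := by omega
  have hn2 : 2 ≤ n := by
    rw [Int.abs_eq_natAbs] at hq hnq; omega
  -- radix expansion of -a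
  obtain ⟨K, y, hyb, hyz, hysum⟩ := radix q n hq hnq (-a)
  have hyb' : ∀ i, -(n-1) ≤ y i ∧ y i ≤ n - 1 := fun i => abs_le.mp (hyb i)
  set k : ℕ := max K 1 with hk
  have hk1 : 1 ≤ k := le_max_right _ _
  have hKk : K ≤ k := le_max_left _ _
  -- the difference sequence
  set X : ℕ → ℤ := fun i => if i = 0 then -p else if i = 1 then 1 else 0 with hX
  have hXb : ∀ i, -(m-1) ≤ X i ∧ X i ≤ m - 1 := by
    intro i
    simp only [hX]
    split_ifs <;> constructor <;> rw [Int.abs_eq_natAbs] at hp hpm <;> omega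
  -- digit sequences
  set u1 : ℕ → ℤ := fun i => max (X i) 0 with hu1
  set u1' : ℕ → ℤ := fun i => max (-X i) 0 with hu1'
  set v1 : ℕ → ℤ := fun i => max (y i) 0 with hv1
  set v1' : ℕ → ℤ := fun i => max (-y i) 0 with hv1'
  set d : ℕ → Fin 2 → ℝ := fun i => ![((u1 i : ℤ) : ℝ), ((v1 i : ℤ) : ℝ)] with hd
  set d' : ℕ → Fin 2 → ℝ := fun i => ![((u1' i : ℤ) : ℝ), ((v1' i : ℤ) : ℝ)] with hd'
  -- powers of matB
  choose c hc hc0 hc1 using matB_pow p q (a : ℝ)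
  have hmv : ∀ (i : ℕ) (u v : ℝ), ((matB p q (a:ℝ))^i).mulVec ![u, v]
      = ![(p:ℝ)^i * u, c i * u + (q:ℝ)^i * v] := by
    intro i u v
    rw [hc i]
    funext j
    fin_cases j <;> simp [Matrix.mulVec, dotProduct, Fin.sum_univ_two]
  have hdiff : ∀ i, d i - d' i = ![((X i : ℤ) : ℝ), ((y i : ℤ) : ℝ)] := by
    intro i
    funext j
    have h1 : u1 i - u1' i = X i := by simp only [hu1, hu1']; omega
    have h2 : v1 i - v1' i = y i := by simp only [hv1, hv1']; omega
    fin_cases j <;> simp only [Pi.sub_apply, hd, hd', Fin.zero_eta, Fin.mk_one,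
      Matrix.cons_val_zero, Matrix.cons_val_one, Matrix.head_cons]
    · exact_mod_cast congrArg (fun t : ℤ => (t : ℝ)) h1
    · exact_mod_cast congrArg (fun t : ℤ => (t : ℝ)) h2
  -- the central cancellation
  have hsub2 : Finset.range 2 ⊆ Finset.range (k + 1) := by
    apply Finset.range_subset_range.mpr; omega
  have hX2 : ∀ i, 2 ≤ i → X i = 0 := by
    intro i hi; simp only [hX]; rw [if_neg (by omega), if_neg (by omega)]
  have hzero : ∑ i ∈ Finset.range (k + 1), ((matB p q (a:ℝ))^i).mulVec (d i - d' i) = 0 := by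
    have hcong : ∀ i ∈ Finset.range (k+1), ((matB p q (a:ℝ))^i).mulVec (d i - d' i)
        = ![(p:ℝ)^i * ((X i : ℤ) : ℝ), c i * ((X i : ℤ) : ℝ) + (q:ℝ)^i * ((y i : ℤ) : ℝ)] := by
      intro i _
      rw [hdiff i, hmv]
    rw [Finset.sum_congr rfl hcong]
    funext j
    rw [Finset.sum_apply]
    fin_cases j
    · simp only [Fin.zero_eta, Matrix.cons_val_zero, Pi.zero_apply]
      rw [← Finset.sum_subset hsub2 (by
        intro i _ hi2
        simp only [Finset.mem_range, not_lt] at hi2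
        rw [hX2 i hi2]
        simp)]
      rw [Finset.sum_range_succ, Finset.sum_range_one]
      simp only [hX, Fin.zero_eta, Matrix.cons_val_zero, if_true, if_false, pow_zero, pow_one,
        reduceIte]
      push_cast
      ring
    · simp only [Fin.mk_one, Matrix.cons_val_one, Matrix.head_cons, Matrix.cons_val_zero, Pi.zero_apply]
      rw [Finset.sum_add_distrib]
      have hA : ∑ i ∈ Finset.range (k+1), c i * ((X i : ℤ) : ℝ) = (a : ℝ) := by
        rw [← Finset.sum_subset hsub2 (by
          intro i _ hi2
          simp only [Finset.mem_range, not_lt] at hi2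
          rw [hX2 i hi2]
          simp)]
        rw [Finset.sum_range_succ, Finset.sum_range_one]
        simp only [hX, if_true, if_false, reduceIte]
        rw [hc0 0 rfl, hc1 1 rfl]
        push_cast
        ring
      have hB : ∑ i ∈ Finset.range (k+1), (q:ℝ)^i * ((y i : ℤ) : ℝ) = ((-a : ℤ) : ℝ) := by
        have hint : ∑ i ∈ Finset.range (k+1), q^i * y i = -a := by
          rw [← Finset.sum_subset (Finset.range_subset_range.mpr (by omega) :
              Finset.range (K+1) ⊆ Finset.range (k+1)) (by
            intro i _ hi2
            simp only [Finset.mem_range, not_lt] at hi2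
            rw [hyz i (by omega)]
            ring)]
          exact hysum
        calc ∑ i ∈ Finset.range (k+1), (q:ℝ)^i * ((y i : ℤ) : ℝ)
            = ((∑ i ∈ Finset.range (k+1), q^i * y i : ℤ) : ℝ) := by push_cast; rfl
          _ = ((-a : ℤ) : ℝ) := by rw [hint]
      rw [hA, hB]
      push_cast
      ring
  have hmain : ∑ i ∈ Finset.range (k + 1), ((matB p q (a:ℝ))^i).mulVec (d i)
      = ∑ i ∈ Finset.range (k + 1), ((matB p q (a:ℝ))^i).mulVec (d' i) := by
    rw [← sub_eq_zero, ← Finset.sum_sub_distrib]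
    rw [← hzero]
    congr 1
    funext i
    rw [Matrix.mulVec_sub]
  -- digit membership
  have hdmem : ∀ i, d i ∈ digitSet m n ∧ d' i ∈ digitSet m n := by
    intro i
    constructor
    · exact ⟨u1 i, v1 i, by simp [hu1], by have := hXb i; simp only [hu1]; omega,
        by simp [hv1], by have := hyb' i; simp only [hv1]; omega, rfl⟩
    · exact ⟨u1' i, v1' i, by simp [hu1'], by have := hXb i; simp only [hu1']; omega,
        by simp [hv1'], by have := hyb' i; simp only [hv1']; omega, rfl⟩
  have hX1 : X 1 = 1 := by simp [hX]
  have hune : d 1 ≠ d' 1 := by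
    intro h
    have h0 := congrFun h 0
    simp only [hd, hd', Matrix.cons_val_zero] at h0
    have : u1 1 = u1' 1 := by exact_mod_cast h0
    simp only [hu1, hu1', hX1] at this
    omega
  refine ⟨k, hk1, ⟨d, d', fun i _ => hdmem i, ⟨1, hk1, hune⟩, hmain⟩, ?_⟩
  -- counting part
  have hcast : ∀ z : ℤ, 0 ≤ z → ((z.toNat : ℕ) : ℝ) = (z : ℝ) := by
    intro z hz
    exact_mod_cast congrArg (fun t : ℤ => (t : ℝ)) (Int.toNat_of_nonneg hz)
  set F : (Fin (k+1) → Fin m.toNat × Fin n.toNat) → (Fin 2 → ℝ) :=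
    fun cc => ∑ i : Fin (k+1),
      ((matB p q (a:ℝ))^(i:ℕ)).mulVec ![(((cc i).1 : ℕ) : ℝ), (((cc i).2 : ℕ) : ℝ)] with hF
  set T : Finset (Fin 2 → ℝ) := Finset.image F Finset.univ with hT
  have hSeq : {x : Fin 2 → ℝ | ∃ d : ℕ → (Fin 2 → ℝ), (∀ i < k + 1, d i ∈ digitSet m n) ∧
      x = ∑ i ∈ Finset.range (k + 1), (matB p q (a : ℝ) ^ i).mulVec (d i)} = ↑T := by
    ext x
    simp only [Set.mem_setOf_eq, hT, Finset.coe_image, Set.mem_image, Finset.mem_coe,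
      Finset.mem_univ, Finset.coe_univ, Set.mem_univ, true_and]
    constructor
    · rintro ⟨d0, hd0, rfl⟩
      choose I J h1 h2 h3 h4 h5 using fun i : Fin (k+1) => hd0 i i.isLt
      refine ⟨fun i => (⟨(I i).toNat, by have := h2 i; omega⟩, ⟨(J i).toNat, by have := h4 i; omega⟩), ?_⟩
      rw [hF]
      simp only
      rw [Finset.sum_range]
      apply Finset.sum_congr rfl
      intro i _
      rw [h5 i, hcast _ (h1 i), hcast _ (h3 i)]
    · rintro ⟨cc, rfl⟩
      refine ⟨fun i => if h : i < k+1 then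
          ![(((cc ⟨i,h⟩).1 : ℕ) : ℝ), (((cc ⟨i,h⟩).2 : ℕ) : ℝ)] else 0, ?_, ?_⟩
      · intro i hi
        simp only [dif_pos hi]
        refine ⟨((cc ⟨i,hi⟩).1 : ℕ), ((cc ⟨i,hi⟩).2 : ℕ), by positivity,
          by have := (cc ⟨i,hi⟩).1.isLt; omega, by positivity,
          by have := (cc ⟨i,hi⟩).2.isLt; omega, ?_⟩
        push_cast
        rfl
      · rw [hF]
        simp only
        rw [Finset.sum_range]
        apply Finset.sum_congr rfl
        intro i _
        rw [dif_pos i.isLt]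
  rw [hSeq, Set.ncard_coe_finset]
  -- the two colliding digit tuples
  have hu1b : ∀ i, 0 ≤ u1 i ∧ u1 i ≤ m - 1 := by
    intro i; have := hXb i; simp only [hu1]; omega
  have hu1b' : ∀ i, 0 ≤ u1' i ∧ u1' i ≤ m - 1 := by
    intro i; have := hXb i; simp only [hu1']; omega
  have hv1b : ∀ i, 0 ≤ v1 i ∧ v1 i ≤ n - 1 := by
    intro i; have := hyb' i; simp only [hv1]; omega
  have hv1b' : ∀ i, 0 ≤ v1' i ∧ v1' i ≤ n - 1 := by
    intro i; have := hyb' i; simp only [hv1']; omega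
  set cc1 : Fin (k+1) → Fin m.toNat × Fin n.toNat :=
    fun i => (⟨(u1 (i:ℕ)).toNat, by have := hu1b (i:ℕ); omega⟩,
              ⟨(v1 (i:ℕ)).toNat, by have := hv1b (i:ℕ); omega⟩) with hcc1
  set cc2 : Fin (k+1) → Fin m.toNat × Fin n.toNat :=
    fun i => (⟨(u1' (i:ℕ)).toNat, by have := hu1b' (i:ℕ); omega⟩,
              ⟨(v1' (i:ℕ)).toNat, by have := hv1b' (i:ℕ); omega⟩) with hcc2
  have hFcc1 : F cc1 = ∑ i ∈ Finset.range (k + 1), (matB p q (a : ℝ) ^ i).mulVec (d i) := by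
    rw [hF, Finset.sum_range]
    simp only
    apply Finset.sum_congr rfl
    intro i _
    simp only [hcc1, hd]
    rw [hcast _ (hu1b (i:ℕ)).1, hcast _ (hv1b (i:ℕ)).1]
  have hFcc2 : F cc2 = ∑ i ∈ Finset.range (k + 1), (matB p q (a : ℝ) ^ i).mulVec (d' i) := by
    rw [hF, Finset.sum_range]
    simp only
    apply Finset.sum_congr rfl
    intro i _
    simp only [hcc2, hd']
    rw [hcast _ (hu1b' (i:ℕ)).1, hcast _ (hv1b' (i:ℕ)).1]
  have hccne : cc1 ≠ cc2 := by
    intro h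
    have h1 := congrArg Prod.fst (congrFun h ⟨1, by omega⟩)
    simp only [hcc1, hcc2] at h1
    have h2 := congrArg Fin.val h1
    simp only at h2
    simp only [hu1, hu1', hX1] at h2
    omega
  have hFeq : F cc1 = F cc2 := by rw [hFcc1, hFcc2, hmain]
  have hlt : T.card < Fintype.card (Fin (k+1) → Fin m.toNat × Fin n.toNat) := by
    have hle : T.card ≤ Finset.univ.card := Finset.card_image_le
    rw [Finset.card_univ] at hle
    rcases lt_or_eq_of_le hle with h | h
    · exact h
    · exfalso
      have hinj : Set.InjOn F ↑(Finset.univ : Finset (Fin (k+1) → Fin m.toNat × Fin n.toNat)) := by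
        apply Finset.injOn_of_card_image_eq
        rw [← hT, h, Finset.card_univ]
      exact hccne (hinj (by simp) (by simp) hFeq)
  have hcard : Fintype.card (Fin (k+1) → Fin m.toNat × Fin n.toNat)
      = (m * n).toNat ^ (k + 1) := by
    rw [Fintype.card_fun, Fintype.card_prod, Fintype.card_fin, Fintype.card_fin, Fintype.card_fin]
    congr 1
    have hmn0 : 0 ≤ m * n := by positivity
    have h1 : ((m.toNat * n.toNat : ℕ) : ℤ) = m * n := by
      push_cast
      rw [Int.toNat_of_nonneg (by omega : (0:ℤ) ≤ m), Int.toNat_of_nonneg (by omega : (0:ℤ) ≤ n)]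
    have h2 : (((m*n).toNat : ℕ) : ℤ) = m * n := Int.toNat_of_nonneg hmn0
    exact_mod_cast h1.trans h2.symm
  rw [← hcard]
  exact hlt
end
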